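/- arXiv:1406.3130 — 7 statements merged into one kernel-verified Lean document; each statement's English description precedes it below -/
import Mathlib

section
/- Under the stated hypotheses, for every a ≥ 0 and every x ∈ ℝ, 𝒲_a(x) = W_p(x) + q ∫_a^x W_{p+q}(x − z) W_p(z) dz; in particular 𝒲_a(x) = W_p(x) whenever x ≤ a. (This is the identity (3.2) of the paper relating the two representations of 𝓦_a^{(p,q)}.) -/
open MeasureTheory Set Filter Convolution

-- global monotonicity / nonnegativity from the hypotheses
lemma aux_mono {W : ℝ → ℝ} (hneg : ∀ x, x < 0 → W x = 0) (hnn : ∀ x, 0 ≤ x → 0 ≤ W x)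
    (hm : MonotoneOn W (Set.Ici 0)) : Monotone W := by
  intro x y hxy
  rcases lt_or_ge x 0 with hx | hx
  · rcases lt_or_ge y 0 with hy | hy
    · rw [hneg x hx, hneg y hy]
    · rw [hneg x hx]; exact hnn y hy
  · exact hm hx (hx.trans hxy) hxy

lemma aux_nn {W : ℝ → ℝ} (hneg : ∀ x, x < 0 → W x = 0) (hnn : ∀ x, 0 ≤ x → 0 ≤ W x) :
    ∀ x, 0 ≤ W x := by
  intro x
  rcases lt_or_ge x 0 with hx | hx
  · rw [hneg x hx]
  · exact hnn x hx

-- measurable + bounded on uIoc ⇒ interval integrable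
lemma aux_intervalIntegrable {f : ℝ → ℝ} {a b C : ℝ} (hf : Measurable f)
    (hC : ∀ z ∈ Set.uIoc a b, ‖f z‖ ≤ C) : IntervalIntegrable f volume a b := by
  rw [intervalIntegrable_iff]
  refine Measure.integrableOn_of_bounded (M := C) ?_ hf.aestronglyMeasurable ?_
  · exact ((measure_mono Set.uIoc_subset_uIcc).trans_lt measure_Icc_lt_top).ne
  · exact (ae_restrict_iff' measurableSet_uIoc).2 (Eventually.of_forall hC)

lemma aux_cont_mul_int {h g : ℝ → ℝ} (hmeas : Measurable h)
    (hint : IntegrableOn h (Set.Icc (0:ℝ) 1)) (hg : Continuous g) :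
    IntegrableOn (fun t => g t * h t) (Set.Icc (0:ℝ) 1) := by
  obtain ⟨C, hC⟩ := isCompact_Icc.exists_bound_of_continuousOn hg.continuousOn
  refine Integrable.mono' (hint.norm.const_mul C) ?_ ?_
  · exact (hg.measurable.mul hmeas).aestronglyMeasurable
  · refine (ae_restrict_iff' measurableSet_Icc).2 (Eventually.of_forall fun t ht => ?_)
    rw [norm_mul]
    have h1 : ‖g t‖ ≤ C := hC t ht
    have h2 : (0:ℝ) ≤ ‖h t‖ := norm_nonneg _
    nlinarith [norm_nonneg (g t)]

lemma aux_moments_zero {h : ℝ → ℝ} (hmeas : Measurable h)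
    (hint : IntegrableOn h (Set.Icc (0:ℝ) 1))
    (hm : ∀ n : ℕ, ∫ t in Set.Icc (0:ℝ) 1, t ^ n * h t = 0) :
    ∀ᵐ t ∂(volume.restrict (Set.Icc (0:ℝ) 1)), h t = 0 := by
  have stepA : ∀ q : Polynomial ℝ, ∫ t in Set.Icc (0:ℝ) 1, q.eval t * h t = 0 := by
    intro q
    induction q using Polynomial.induction_on with
    | C a =>
        simp only [Polynomial.eval_C]
        rw [MeasureTheory.integral_const_mul]
        have := hm 0
        simp only [pow_zero, one_mul] at this
        rw [this, mul_zero]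
    | add p q hp hq =>
        have ip := aux_cont_mul_int hmeas hint (Polynomial.continuous p)
        have iq := aux_cont_mul_int hmeas hint (Polynomial.continuous q)
        simp only [Polynomial.eval_add, add_mul]
        rw [integral_add ip iq, hp, hq, add_zero]
    | monomial n a _ =>
        simp only [Polynomial.eval_mul, Polynomial.eval_C, Polynomial.eval_pow,
          Polynomial.eval_X, mul_assoc]
        rw [MeasureTheory.integral_const_mul, hm (n+1), mul_zero]
  have stepB : ∀ g : ℝ → ℝ, Continuous g → ∫ t in Set.Icc (0:ℝ) 1, g t * h t = 0 := by
    intro g hg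
    by_contra hne
    set I := ∫ t in Set.Icc (0:ℝ) 1, g t * h t with hI
    have hnorm : (0:ℝ) < |I| := abs_pos.2 hne
    have hintnn : (0:ℝ) ≤ ∫ t in Set.Icc (0:ℝ) 1, ‖h t‖ := integral_nonneg fun t => norm_nonneg _
    set D := 1 + ∫ t in Set.Icc (0:ℝ) 1, ‖h t‖ with hD
    have hden : (0:ℝ) < D := by rw [hD]; linarith
    set ε := |I| / (2 * D) with hε
    have hεpos : 0 < ε := by positivity
    -- get polynomial approximation
    have hmem : (ContinuousMap.restrict (Set.Icc (0:ℝ) 1) ⟨g, hg⟩ : C(Set.Icc (0:ℝ) 1, ℝ))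
        ∈ closure (polynomialFunctions (Set.Icc (0:ℝ) 1) : Set C(Set.Icc (0:ℝ) 1, ℝ)) := by
      rw [← Subalgebra.topologicalClosure_coe,
        polynomialFunctions.topologicalClosure (Set.Icc (0:ℝ) 1)]
      trivial
    rw [Metric.mem_closure_iff] at hmem
    obtain ⟨P, hPmem, hPdist⟩ := hmem ε hεpos
    rw [polynomialFunctions_coe] at hPmem
    obtain ⟨Q, hQ⟩ := hPmem
    -- pointwise bound
    have hptw : ∀ t ∈ Set.Icc (0:ℝ) 1, |g t - Q.eval t| ≤ ε := by
      intro t ht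
      have := hPdist.le
      rw [ContinuousMap.dist_le hεpos.le] at this
      have h2 := this ⟨t, ht⟩
      rw [← hQ] at h2
      simpa [Real.dist_eq] using h2
    -- conclude
    have key : |I| ≤ ε * ∫ t in Set.Icc (0:ℝ) 1, ‖h t‖ := by
      have hIeq : I = ∫ t in Set.Icc (0:ℝ) 1, (g t - Q.eval t) * h t := by
        rw [hI]
        have : ∫ t in Set.Icc (0:ℝ) 1, (g t - Q.eval t) * h t
            = (∫ t in Set.Icc (0:ℝ) 1, g t * h t) - ∫ t in Set.Icc (0:ℝ) 1, Q.eval t * h t := by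
          simp_rw [sub_mul]
          exact integral_sub (aux_cont_mul_int hmeas hint hg)
            (aux_cont_mul_int hmeas hint (Polynomial.continuous Q))
        rw [this, stepA Q, sub_zero]
      rw [hIeq]
      calc |∫ t in Set.Icc (0:ℝ) 1, (g t - Q.eval t) * h t|
          ≤ ∫ t in Set.Icc (0:ℝ) 1, ‖(g t - Q.eval t) * h t‖ := by
            rw [← Real.norm_eq_abs]
            exact norm_integral_le_integral_norm _
        _ ≤ ∫ t in Set.Icc (0:ℝ) 1, ε * ‖h t‖ := by
            refine integral_mono_of_nonneg (Eventually.of_forall fun t => norm_nonneg _)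
              (hint.norm.const_mul ε) ?_
            refine (ae_restrict_iff' measurableSet_Icc).2 (Eventually.of_forall fun t ht => ?_)
            show ‖(g t - Q.eval t) * h t‖ ≤ ε * ‖h t‖
            rw [norm_mul]
            exact mul_le_mul_of_nonneg_right (by simpa [Real.norm_eq_abs] using hptw t ht) (norm_nonneg _)
        _ = ε * ∫ t in Set.Icc (0:ℝ) 1, ‖h t‖ := MeasureTheory.integral_const_mul _ _
    have : |I| ≤ |I| / 2 := by
      calc |I| ≤ ε * ∫ t in Set.Icc (0:ℝ) 1, ‖h t‖ := key
        _ ≤ ε * D := by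
            refine mul_le_mul_of_nonneg_left ?_ hεpos.le
            rw [hD]; linarith
        _ = |I| / 2 := by rw [hε]; field_simp
    linarith
  -- Step C: use smooth test functions
  have hH : Integrable ((Set.Icc (0:ℝ) 1).indicator h) :=
    (integrable_indicator_iff measurableSet_Icc).2 hint
  have hC : (Set.Icc (0:ℝ) 1).indicator h =ᵐ[volume] 0 := by
    refine ae_eq_zero_of_integral_contDiff_smul_eq_zero hH.locallyIntegrable ?_
    intro g hg hgsupp
    have : ∫ x, g x • (Set.Icc (0:ℝ) 1).indicator h x
        = ∫ x in Set.Icc (0:ℝ) 1, g x * h x := by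
      rw [← integral_indicator measurableSet_Icc]
      congr 1
      ext x
      by_cases hx : x ∈ Set.Icc (0:ℝ) 1 <;> simp [Set.indicator_of_mem, Set.indicator_of_notMem, hx]
    rw [this]
    exact stepB g hg.continuous
  -- transfer back to the restricted measure
  have hre := ae_restrict_of_ae (μ := volume) (s := Set.Icc (0:ℝ) 1) hC
  have hmemae : ∀ᵐ t ∂(volume.restrict (Set.Icc (0:ℝ) 1)), t ∈ Set.Icc (0:ℝ) 1 :=
    ae_restrict_mem measurableSet_Icc
  filter_upwards [hre, hmemae] with t h1 h2
  rwa [Set.indicator_of_mem h2] at h1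

lemma aux_image_exp_neg : (fun x : ℝ => Real.exp (-x)) '' Set.Ioi 0 = Set.Ioo 0 1 := by
  ext t
  constructor
  · rintro ⟨x, hx, rfl⟩
    refine ⟨Real.exp_pos _, ?_⟩
    rw [← Real.exp_zero]
    exact Real.exp_lt_exp.2 (by simpa using (Set.mem_Ioi.1 hx))
  · rintro ⟨h0, h1⟩
    refine ⟨-Real.log t, ?_, by simp [Real.exp_log h0]⟩
    simpa using Real.log_neg h0 h1

lemma aux_subst_int (g : ℝ → ℝ) :
    ∫ t in Set.Ioo (0:ℝ) 1, g t = ∫ x in Set.Ioi (0:ℝ), Real.exp (-x) * g (Real.exp (-x)) := by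
  have hd : ∀ x ∈ Set.Ioi (0:ℝ), HasDerivWithinAt (fun y => Real.exp (-y))
      (-Real.exp (-x)) (Set.Ioi 0) x := by
    intro x _
    exact (((hasDerivAt_neg x).exp).hasDerivWithinAt).congr_deriv (by ring)
  have hi : Set.InjOn (fun y : ℝ => Real.exp (-y)) (Set.Ioi 0) := by
    intro a _ b _ hab
    have := Real.exp_injective hab
    linarith [neg_injective this]
  have := MeasureTheory.integral_image_eq_integral_abs_deriv_smul measurableSet_Ioi hd hi g
  rw [aux_image_exp_neg] at this
  rw [this]
  congr 1
  ext x
  rw [abs_neg, abs_of_pos (Real.exp_pos _), smul_eq_mul]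

lemma aux_subst_intble (g : ℝ → ℝ) :
    IntegrableOn g (Set.Ioo (0:ℝ) 1) ↔
      IntegrableOn (fun x => Real.exp (-x) * g (Real.exp (-x))) (Set.Ioi (0:ℝ)) := by
  have hd : ∀ x ∈ Set.Ioi (0:ℝ), HasDerivWithinAt (fun y => Real.exp (-y))
      (-Real.exp (-x)) (Set.Ioi 0) x := by
    intro x _
    exact (((hasDerivAt_neg x).exp).hasDerivWithinAt).congr_deriv (by ring)
  have hi : Set.InjOn (fun y : ℝ => Real.exp (-y)) (Set.Ioi 0) := by
    intro a _ b _ hab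
    have := Real.exp_injective hab
    linarith [neg_injective this]
  have := MeasureTheory.integrableOn_image_iff_integrableOn_abs_deriv_smul
    measurableSet_Ioi hd hi g
  rw [aux_image_exp_neg] at this
  rw [this]
  constructor <;> intro hh <;> refine hh.congr_fun (fun x _ => ?_) measurableSet_Ioi
  · dsimp only; rw [abs_neg, abs_of_pos (Real.exp_pos _), smul_eq_mul]
  · dsimp only; rw [abs_neg, abs_of_pos (Real.exp_pos _), smul_eq_mul]

lemma aux_laplace_uniq {f : ℝ → ℝ} {l₀ : ℝ} (hf : Measurable f)
    (hint : ∀ l, l₀ < l → IntegrableOn (fun x => Real.exp (-(l * x)) * f x) (Set.Ioi 0))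
    (hlap : ∀ l, l₀ < l → ∫ x in Set.Ioi (0:ℝ), Real.exp (-(l * x)) * f x = 0) :
    ∀ᵐ x ∂(volume.restrict (Set.Ioi (0:ℝ))), f x = 0 := by
  set l₁ : ℝ := max l₀ 0 + 1 with hl₁
  have hl₀l₁ : l₀ < l₁ := lt_of_le_of_lt (le_max_left _ _) (by rw [hl₁]; linarith)
  set f₀ : ℝ → ℝ := fun x => Real.exp (-(l₁ * x)) * f x with hf₀def
  have hf₀int : IntegrableOn f₀ (Set.Ioi 0) := hint l₁ hl₀l₁
  have hf₀meas : Measurable f₀ :=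
    (Real.measurable_exp.comp (measurable_id.const_mul l₁).neg).mul hf
  set h : ℝ → ℝ := fun t => f₀ (-Real.log t) / t with hhdef
  have hhmeas : Measurable h :=
    (hf₀meas.comp Real.measurable_log.neg).div measurable_id
  have hcomp : ∀ x : ℝ, Real.exp (-x) * h (Real.exp (-x)) = f₀ x := by
    intro x
    rw [hhdef]
    simp only [Real.log_exp, neg_neg]
    rw [mul_div_cancel₀ _ (Real.exp_ne_zero _)]
  -- moments of h
  have hmoment : ∀ n : ℕ, ∫ t in Set.Ioo (0:ℝ) 1, t ^ (n + 1) * h t = 0 := by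
    intro n
    rw [aux_subst_int (fun t => t ^ (n + 1) * h t)]
    have hexp : ∀ x : ℝ, Real.exp (-x) ^ (n + 1) * Real.exp (-(l₁ * x))
        = Real.exp (-((l₁ + (n : ℝ) + 1) * x)) := by
      intro x
      rw [← Real.exp_nat_mul, ← Real.exp_add]
      congr 1
      push_cast
      ring
    have hptw : (fun x => Real.exp (-x) * ((Real.exp (-x)) ^ (n + 1) * h (Real.exp (-x))))
        = fun x => Real.exp (-((l₁ + (n : ℝ) + 1) * x)) * f x := by
      funext x
      calc Real.exp (-x) * ((Real.exp (-x)) ^ (n + 1) * h (Real.exp (-x)))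
          = Real.exp (-x) ^ (n + 1) * (Real.exp (-x) * h (Real.exp (-x))) := by ring
        _ = Real.exp (-x) ^ (n + 1) * f₀ x := by rw [hcomp]
        _ = (Real.exp (-x) ^ (n + 1) * Real.exp (-(l₁ * x))) * f x := by
            rw [hf₀def]; ring
        _ = Real.exp (-((l₁ + (n : ℝ) + 1) * x)) * f x := by rw [hexp]
    rw [hptw]
    exact hlap _ (by linarith [Nat.cast_nonneg (α := ℝ) n])
  -- integrability of h on Ioo 0 1
  have hIntH : IntegrableOn h (Set.Ioo (0:ℝ) 1) := by
    rw [aux_subst_intble h]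
    have : (fun x => Real.exp (-x) * h (Real.exp (-x))) = f₀ := funext hcomp
    rw [this]
    exact hf₀int
  -- k and its moments on Icc 0 1
  set k : ℝ → ℝ := (Set.Ioo (0:ℝ) 1).indicator (fun t => t * h t) with hkdef
  have hkmeas : Measurable k := (measurable_id.mul hhmeas).indicator measurableSet_Ioo
  have hkint0 : IntegrableOn (fun t => t * h t) (Set.Ioo (0:ℝ) 1) := by
    refine Integrable.mono' hIntH.norm (measurable_id.mul hhmeas).aestronglyMeasurable ?_
    refine (ae_restrict_iff' measurableSet_Ioo).2 (Eventually.of_forall fun t ht => ?_)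
    rw [norm_mul]
    have h1 : ‖t‖ ≤ 1 := by
      rw [Real.norm_eq_abs, abs_of_pos ht.1]
      exact ht.2.le
    nlinarith [norm_nonneg (h t), norm_nonneg t]
  have hkint : IntegrableOn k (Set.Icc (0:ℝ) 1) :=
    ((integrable_indicator_iff measurableSet_Ioo).2 hkint0).integrableOn
  have hkmom : ∀ n : ℕ, ∫ t in Set.Icc (0:ℝ) 1, t ^ n * k t = 0 := by
    intro n
    have hptw : (fun t => t ^ n * k t)
        = (Set.Ioo (0:ℝ) 1).indicator (fun t => t ^ (n + 1) * h t) := by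
      funext t
      by_cases ht : t ∈ Set.Ioo (0:ℝ) 1
      · rw [hkdef]
        rw [Set.indicator_of_mem ht, Set.indicator_of_mem ht]
        ring
      · rw [hkdef, Set.indicator_of_notMem ht, Set.indicator_of_notMem ht, mul_zero]
    rw [hptw, integral_indicator measurableSet_Ioo,
      Measure.restrict_restrict measurableSet_Ioo,
      Set.inter_eq_left.2 Set.Ioo_subset_Icc_self]
    exact hmoment n
  have hkz := aux_moments_zero hkmeas hkint hkmom
  have hkz' : ∀ᵐ t ∂(volume.restrict (Set.Ioo (0:ℝ) 1)), k t = 0 :=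
    ae_restrict_of_ae_restrict_of_subset Set.Ioo_subset_Icc_self hkz
  have hhz : ∀ᵐ t ∂(volume.restrict (Set.Ioo (0:ℝ) 1)), h t = 0 := by
    filter_upwards [hkz', ae_restrict_mem measurableSet_Ioo] with t h1 h2
    rw [hkdef, Set.indicator_of_mem h2] at h1
    exact (mul_eq_zero.1 h1).resolve_left (ne_of_gt h2.1)
  -- transfer back
  have hnorm0 : ∫ t in Set.Ioo (0:ℝ) 1, ‖h t‖ = 0 := by
    rw [integral_congr_ae (g := fun _ => (0:ℝ)) (by filter_upwards [hhz] with t ht; rw [ht]; simp)]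
    simp
  have hf₀norm : ∫ x in Set.Ioi (0:ℝ), ‖f₀ x‖ = 0 := by
    rw [aux_subst_int (fun t => ‖h t‖)] at hnorm0
    have : (fun x => Real.exp (-x) * ‖h (Real.exp (-x))‖) = fun x => ‖f₀ x‖ := by
      funext x
      rw [← hcomp x, norm_mul, Real.norm_eq_abs (Real.exp (-x)),
        abs_of_pos (Real.exp_pos _)]
    rwa [this] at hnorm0
  have hf₀z : ∀ᵐ x ∂(volume.restrict (Set.Ioi (0:ℝ))), ‖f₀ x‖ = 0 := by
    have := (integral_eq_zero_iff_of_nonneg (fun x => norm_nonneg (f₀ x)) hf₀int.norm).1 hf₀norm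
    filter_upwards [this] with x hx using hx
  filter_upwards [hf₀z] with x hx
  rw [norm_eq_zero] at hx
  rw [hf₀def] at hx
  exact (mul_eq_zero.1 hx).resolve_left (Real.exp_ne_zero _)

lemma aux_ae_ne (c : ℝ) : ∀ᵐ x : ℝ, x ≠ c := by
  rw [ae_iff]
  have : {x : ℝ | ¬x ≠ c} = {c} := by ext x; simp
  rw [this]
  exact Real.volume_singleton

lemma aux_integrable_of_Ioi {g : ℝ → ℝ} (hneg : ∀ x, x < 0 → g x = 0)
    (h : IntegrableOn g (Set.Ioi 0)) : Integrable g := by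
  rw [← integrableOn_univ, ← Set.Iic_union_Ioi (a := (0:ℝ))]
  refine IntegrableOn.union ?_ h
  refine (integrable_zero _ _ _).congr ?_
  filter_upwards [ae_restrict_of_ae (aux_ae_ne 0), ae_restrict_mem measurableSet_Iic]
    with x hx hmem
  exact (hneg x (lt_of_le_of_ne hmem hx)).symm

lemma aux_integral_Ioi {g : ℝ → ℝ} (hneg : ∀ x, x < 0 → g x = 0) :
    ∫ x in Set.Ioi (0:ℝ), g x = ∫ x, g x := by
  refine setIntegral_eq_integral_of_ae_compl_eq_zero ?_
  filter_upwards [aux_ae_ne 0] with x hx hmem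
  simp only [Set.mem_Ioi, not_lt] at hmem
  exact hneg x (lt_of_le_of_ne hmem hx)

lemma aux_conv_laplace {Wp Wpq : ℝ → ℝ} {l : ℝ}
    (hWp_neg : ∀ x, x < 0 → Wp x = 0) (hWpq_neg : ∀ x, x < 0 → Wpq x = 0)
    (hWp_int : IntegrableOn (fun x => Real.exp (-(l * x)) * Wp x) (Set.Ioi 0))
    (hWpq_int : IntegrableOn (fun x => Real.exp (-(l * x)) * Wpq x) (Set.Ioi 0)) :
    IntegrableOn (fun x => Real.exp (-(l * x)) * ∫ z in (0:ℝ)..x, Wpq (x - z) * Wp z)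
      (Set.Ioi 0) ∧
    ∫ x in Set.Ioi (0:ℝ), Real.exp (-(l * x)) * ∫ z in (0:ℝ)..x, Wpq (x - z) * Wp z
      = (∫ x in Set.Ioi (0:ℝ), Real.exp (-(l * x)) * Wp x)
        * (∫ x in Set.Ioi (0:ℝ), Real.exp (-(l * x)) * Wpq x) := by
  set fp : ℝ → ℝ := fun x => Real.exp (-(l * x)) * Wp x with hfpdef
  set fpq : ℝ → ℝ := fun x => Real.exp (-(l * x)) * Wpq x with hfpqdef
  have hfpneg : ∀ x, x < 0 → fp x = 0 := fun x hx => by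
    rw [hfpdef]; simp [hWp_neg x hx]
  have hfpqneg : ∀ x, x < 0 → fpq x = 0 := fun x hx => by
    rw [hfpqdef]; simp [hWpq_neg x hx]
  have hfpI : Integrable fp := aux_integrable_of_Ioi hfpneg hWp_int
  have hfpqI : Integrable fpq := aux_integrable_of_Ioi hfpqneg hWpq_int
  set L : ℝ →L[ℝ] ℝ →L[ℝ] ℝ := ContinuousLinearMap.mul ℝ ℝ with hLdef
  set conv : ℝ → ℝ := fp ⋆[L] fpq with hconvdef
  -- pointwise identification of the convolution
  have hptw : ∀ x z : ℝ, fp z * fpq (x - z)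
      = Real.exp (-(l * x)) * (Wpq (x - z) * Wp z) := by
    intro x z
    rw [hfpdef, hfpqdef]
    calc Real.exp (-(l * z)) * Wp z * (Real.exp (-(l * (x - z))) * Wpq (x - z))
        = (Real.exp (-(l * z)) * Real.exp (-(l * (x - z)))) * (Wpq (x - z) * Wp z) := by ring
      _ = Real.exp (-(l * x)) * (Wpq (x - z) * Wp z) := by
          rw [← Real.exp_add, show -(l * z) + -(l * (x - z)) = -(l * x) by ring]
  have hconv : ∀ x : ℝ, conv x
      = Real.exp (-(l * x)) * ∫ z in (0:ℝ)..x, Wpq (x - z) * Wp z := by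
    intro x
    have hconvx : conv x = ∫ z, fp z * fpq (x - z) := by
      rw [hconvdef, convolution_def]
      simp [hLdef]
    rcases lt_or_ge x 0 with hx | hx
    · -- x < 0 : both sides vanish
      have hz : ∀ z : ℝ, fp z * fpq (x - z) = 0 := by
        intro z
        rcases lt_or_ge z 0 with hz' | hz'
        · rw [hfpneg z hz', zero_mul]
        · rw [hfpqneg (x - z) (by linarith), mul_zero]
      have h1 : conv x = 0 := by
        rw [hconvx]
        simp only [hz]
        exact integral_zero _ _
      have h2 : ∫ z in (0:ℝ)..x, Wpq (x - z) * Wp z = 0 := by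
        rw [intervalIntegral.integral_symm, intervalIntegral.integral_of_le hx.le]
        have : ∀ z ∈ Set.Ioc x 0, Wpq (x - z) * Wp z = 0 := by
          intro z hz'
          rcases lt_or_eq_of_le hz'.2 with h | h
          · rw [hWp_neg z h, mul_zero]
          · rw [h, sub_zero, hWpq_neg x hx, zero_mul]
        rw [setIntegral_congr_fun measurableSet_Ioc this]
        simp
      rw [h1, h2, mul_zero]
    · -- x ≥ 0
      have hOut : ∀ z : ℝ, z ∉ Set.Icc 0 x → fp z * fpq (x - z) = 0 := by
        intro z hz
        rcases not_and_or.1 hz with h | h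
        · rw [hfpneg z (by simpa using (lt_of_not_ge (by simpa [Set.mem_Icc] using h))), zero_mul]
        · rw [hfpqneg (x - z) (by simp at h; linarith), mul_zero]
      rw [hconvx, ← setIntegral_eq_integral_of_forall_compl_eq_zero
        (s := Set.Icc 0 x) (fun z hz => hOut z hz), integral_Icc_eq_integral_Ioc]
      rw [intervalIntegral.integral_of_le hx]
      simp_rw [hptw x]
      rw [MeasureTheory.integral_const_mul]
  have hconvneg : ∀ x, x < 0 → conv x = 0 := by
    intro x hx
    rw [hconv x]
    rw [intervalIntegral.integral_symm, intervalIntegral.integral_of_le hx.le]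
    have : ∀ z ∈ Set.Ioc x 0, Wpq (x - z) * Wp z = 0 := by
      intro z hz'
      rcases lt_or_eq_of_le hz'.2 with h | h
      · rw [hWp_neg z h, mul_zero]
      · rw [h, sub_zero, hWpq_neg x hx, zero_mul]
    rw [setIntegral_congr_fun measurableSet_Ioc this]
    simp
  have hconvI : Integrable conv := hfpI.integrable_convolution L hfpqI
  have hfuneq : conv = fun x => Real.exp (-(l * x)) * ∫ z in (0:ℝ)..x, Wpq (x - z) * Wp z :=
    funext hconv
  constructor
  · rw [← hfuneq]
    exact hconvI.integrableOn
  · rw [← hfuneq, aux_integral_Ioi hconvneg, aux_integral_Ioi hfpneg, aux_integral_Ioi hfpqneg]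
    have := integral_convolution (L := L) (μ := volume) (ν := volume) hfpI hfpqI
    rw [hconvdef, this, hLdef]
    simp

lemma aux_C_nonpos {Wp Wpq : ℝ → ℝ}
    (hWp_neg : ∀ x, x < 0 → Wp x = 0) (hWpq_neg : ∀ x, x < 0 → Wpq x = 0) :
    ∀ x : ℝ, x ≤ 0 → ∫ z in (0:ℝ)..x, Wpq (x - z) * Wp z = 0 := by
  intro x hx
  rcases lt_or_eq_of_le hx with hx' | hx'
  · rw [intervalIntegral.integral_symm, intervalIntegral.integral_of_le hx'.le]
    have : ∀ z ∈ Set.Ioc x 0, Wpq (x - z) * Wp z = 0 := by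
      intro z hz
      rcases lt_or_eq_of_le hz.2 with h | h
      · rw [hWp_neg z h, mul_zero]
      · rw [h, sub_zero, hWpq_neg x hx', zero_mul]
    rw [setIntegral_congr_fun measurableSet_Ioc this]
    simp
  · subst hx'
    simp

lemma aux_C_cont {Wp Wpq : ℝ → ℝ}
    (hWp_mono : Monotone Wp) (hWpq_mono : Monotone Wpq)
    (hWp_nn : ∀ x, 0 ≤ Wp x) (hWpq_nn : ∀ x, 0 ≤ Wpq x)
    (hWp_neg : ∀ x, x < 0 → Wp x = 0) (hWpq_neg : ∀ x, x < 0 → Wpq x = 0) :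
    Continuous (fun x => ∫ z in (0:ℝ)..x, Wpq (x - z) * Wp z) := by
  set C : ℝ → ℝ := fun x => ∫ z in (0:ℝ)..x, Wpq (x - z) * Wp z with hCdef
  have hC0 : ∀ x : ℝ, x ≤ 0 → C x = 0 := aux_C_nonpos hWp_neg hWpq_neg
  set G : ℝ → ℝ → ℝ := fun R x => ∫ z in Set.Ioc (0:ℝ) R, Wpq (x - z) * Wp z with hGdef
  have hmeas : ∀ x : ℝ, Measurable (fun z => Wpq (x - z) * Wp z) := fun x =>
    (hWpq_mono.measurable.comp (measurable_const.sub measurable_id)).mul hWp_mono.measurable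
  have hIntOn : ∀ x a b : ℝ, IntegrableOn (fun z => Wpq (x - z) * Wp z) (Set.Ioc a b) := by
    intro x a b
    refine Measure.integrableOn_of_bounded (M := Wpq (x - a) * Wp b) measure_Ioc_lt_top.ne
      (hmeas x).aestronglyMeasurable ?_
    refine (ae_restrict_iff' measurableSet_Ioc).2 (Eventually.of_forall fun z hz => ?_)
    rw [Real.norm_eq_abs, abs_of_nonneg (mul_nonneg (hWpq_nn _) (hWp_nn _))]
    exact mul_le_mul (hWpq_mono (by linarith [hz.1])) (hWp_mono hz.2) (hWp_nn z) (hWpq_nn _)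
  -- C agrees with G R on [0, R]
  have hCG : ∀ R : ℝ, ∀ x ∈ Set.Icc (0:ℝ) R, C x = G R x := by
    intro R x hx
    rw [hCdef, hGdef]
    simp only
    rw [intervalIntegral.integral_of_le hx.1,
      ← Set.Ioc_union_Ioc_eq_Ioc hx.1 hx.2,
      setIntegral_union (Set.Ioc_disjoint_Ioc_of_le le_rfl) measurableSet_Ioc (hIntOn x 0 x)
        (hIntOn x x R)]
    have : ∀ z ∈ Set.Ioc x R, Wpq (x - z) * Wp z = 0 := by
      intro z hz
      rw [hWpq_neg (x - z) (by linarith [hz.1]), zero_mul]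
    rw [setIntegral_congr_fun measurableSet_Ioc this]
    simp
  -- G R is continuous
  have hGcont : ∀ R : ℝ, Continuous (G R) := by
    intro R
    rw [continuous_iff_continuousAt]
    intro x₀
    have hD : Set.Countable {y : ℝ | ¬ContinuousAt Wpq y} := hWpq_mono.countable_not_continuousAt
    have hbad : Set.Countable ((fun y => x₀ - y) '' {y : ℝ | ¬ContinuousAt Wpq y}) :=
      hD.image _
    have hae : ∀ᵐ z ∂(volume.restrict (Set.Ioc (0:ℝ) R)), ContinuousAt Wpq (x₀ - z) := by
      refine ae_restrict_of_ae ?_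
      rw [ae_iff]
      refine measure_mono_null ?_ (hbad.measure_zero volume)
      intro z hz
      simp only [Set.mem_setOf_eq, not_not] at hz
      exact ⟨x₀ - z, hz, by ring⟩
    have key : Filter.Tendsto (fun x => G R x) (nhds x₀) (nhds (G R x₀)) := by
      rw [hGdef]
      simp only
      refine tendsto_integral_filter_of_dominated_convergence
        (bound := fun z => Wpq (x₀ + 1) * Wp R) ?_ ?_ ?_ ?_
      · exact Eventually.of_forall fun x => (hmeas x).aestronglyMeasurable
      · refine Filter.eventually_of_mem (Metric.ball_mem_nhds x₀ one_pos) fun x hx => ?_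
        refine (ae_restrict_iff' measurableSet_Ioc).2 (Eventually.of_forall fun z hz => ?_)
        rw [Real.norm_eq_abs, abs_of_nonneg (mul_nonneg (hWpq_nn _) (hWp_nn _))]
        have hxlt : x < x₀ + 1 := by
          have := Real.dist_eq x x₀ ▸ Metric.mem_ball.1 hx
          have := abs_lt.1 this
          linarith [this.1, this.2]
        exact mul_le_mul (hWpq_mono (by linarith [hz.1])) (hWp_mono hz.2) (hWp_nn z) (hWpq_nn _)
      · exact integrableOn_const measure_Ioc_lt_top.ne
      · filter_upwards [hae] with z hz
        exact (hz.tendsto.comp (tendsto_id.sub_const z)).mul_const (Wp z)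
    exact key
  -- continuity of C
  rw [continuous_iff_continuousAt]
  intro x₀
  rcases lt_trichotomy x₀ 0 with h | h | h
  · refine ContinuousAt.congr (continuousAt_const (y := (0:ℝ))) ?_
    filter_upwards [Iio_mem_nhds h] with y hy
    exact (hC0 y (le_of_lt hy)).symm
  · -- x₀ = 0
    subst h
    have h1 : ContinuousWithinAt C (Set.Iic 0) 0 := by
      refine (continuousWithinAt_const (b := (0:ℝ))).congr (fun y hy => hC0 y hy) (hC0 0 le_rfl)
    have h2 : ContinuousWithinAt C (Set.Ici 0) 0 := by
      have h3 : ContinuousWithinAt C (Set.Icc (0:ℝ) 1) 0 := by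
        refine ((hGcont 1).continuousAt.continuousWithinAt).congr
          (fun y hy => hCG 1 y hy) (hCG 1 0 (by norm_num))
      rwa [ContinuousWithinAt, nhdsWithin_Icc_eq_nhdsGE one_pos] at h3
    have := h1.union h2
    rwa [Set.Iic_union_Ici, continuousWithinAt_univ] at this
  · refine ContinuousAt.congr (hGcont (x₀ + 1)).continuousAt ?_
    filter_upwards [Ioo_mem_nhds h (lt_add_one x₀)] with y hy
    exact (hCG (x₀ + 1) y ⟨hy.1.le, hy.2.le⟩).symm

lemma aux_ae_upgrade {F : ℝ → ℝ} (hae : ∀ᵐ y ∂(volume.restrict (Set.Ioi (0:ℝ))), F y = 0)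
    {y : ℝ} (hy : 0 < y) (hcont : ContinuousAt F y) : F y = 0 := by
  by_contra hne
  have habs : 0 < |F y| := abs_pos.2 hne
  rw [Metric.continuousAt_iff] at hcont
  obtain ⟨δ, hδ, hball⟩ := hcont (|F y| / 2) (by positivity)
  set δ' := min δ y with hδ'
  have hδ'pos : 0 < δ' := lt_min hδ hy
  have hsub : Set.Ioo (y - δ') (y + δ') ⊆ {z | ¬(z ∈ Set.Ioi (0:ℝ) → F z = 0)} := by
    intro z hz
    simp only [Set.mem_setOf_eq, Classical.not_imp]
    have hδ'y : δ' ≤ y := min_le_right δ y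
    have hδ'δ : δ' ≤ δ := min_le_left δ y
    refine ⟨by simp only [Set.mem_Ioi]; nlinarith [hz.1], ?_⟩
    have hd : dist z y < δ := by
      rw [Real.dist_eq, abs_lt]
      constructor <;> nlinarith [hz.1, hz.2]
    have hb := hball hd
    intro h0
    rw [h0, Real.dist_eq, zero_sub, abs_neg] at hb
    linarith
  have hnull : volume {z : ℝ | ¬(z ∈ Set.Ioi (0:ℝ) → F z = 0)} = 0 := by
    have h1 := (ae_restrict_iff' measurableSet_Ioi).1 hae
    rw [ae_iff] at h1
    exact h1
  have hle := measure_mono_null hsub hnull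
  rw [Real.volume_Ioo] at hle
  have : (0:ℝ) < (y + δ') - (y - δ') := by linarith
  exact absurd hle (by simpa using (ENNReal.ofReal_pos.2 this).ne')

/-- Identity (3.2) of the paper: the two representations of 𝓦_a^{(p,q)},
and the fact that 𝓦_a^{(p,q)}(x) = W^{(p)}(x) for x ≤ a. -/
theorem W_script_two_representations
    (p q φ φ' : ℝ) (hp : 0 ≤ p) (hq : 0 ≤ q) (hφφ' : φ ≤ φ')
    (ψ Wp Wpq : ℝ → ℝ)
    (hψ : ∀ l, φ' < l → p + q < ψ l)
    (hWp_cont : ContinuousOn Wp (Set.Ici 0))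
    (hWp_nonneg : ∀ x, 0 ≤ x → 0 ≤ Wp x)
    (hWp_mono : MonotoneOn Wp (Set.Ici 0))
    (hWp_neg : ∀ x, x < 0 → Wp x = 0)
    (hWpq_cont : ContinuousOn Wpq (Set.Ici 0))
    (hWpq_nonneg : ∀ x, 0 ≤ x → 0 ≤ Wpq x)
    (hWpq_mono : MonotoneOn Wpq (Set.Ici 0))
    (hWpq_neg : ∀ x, x < 0 → Wpq x = 0)
    (hWp_int : ∀ l, φ' < l →
      MeasureTheory.IntegrableOn (fun x => Real.exp (-(l * x)) * Wp x) (Set.Ioi 0))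
    (hWp_lap : ∀ l, φ' < l →
      ∫ x in Set.Ioi (0:ℝ), Real.exp (-(l * x)) * Wp x = 1 / (ψ l - p))
    (hWpq_int : ∀ l, φ' < l →
      MeasureTheory.IntegrableOn (fun x => Real.exp (-(l * x)) * Wpq x) (Set.Ioi 0))
    (hWpq_lap : ∀ l, φ' < l →
      ∫ x in Set.Ioi (0:ℝ), Real.exp (-(l * x)) * Wpq x = 1 / (ψ l - (p + q))) :
    ∀ a, 0 ≤ a → ∀ x : ℝ,
      (Wpq x - q * ∫ z in (0:ℝ)..a, Wpq (x - z) * Wp z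
          = Wp x + q * ∫ z in a..x, Wpq (x - z) * Wp z) ∧
      (x ≤ a → Wpq x - q * ∫ z in (0:ℝ)..a, Wpq (x - z) * Wp z = Wp x) := by
  have hWpM : Monotone Wp := aux_mono hWp_neg hWp_nonneg hWp_mono
  have hWpqM : Monotone Wpq := aux_mono hWpq_neg hWpq_nonneg hWpq_mono
  have hWpN : ∀ x, 0 ≤ Wp x := aux_nn hWp_neg hWp_nonneg
  have hWpqN : ∀ x, 0 ≤ Wpq x := aux_nn hWpq_neg hWpq_nonneg
  set C : ℝ → ℝ := fun y => ∫ z in (0:ℝ)..y, Wpq (y - z) * Wp z with hCdef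
  have hCcont : Continuous C := aux_C_cont hWpM hWpqM hWpN hWpqN hWp_neg hWpq_neg
  set F : ℝ → ℝ := fun y => Wpq y - Wp y - q * C y with hFdef
  have hFmeas : Measurable F :=
    (hWpqM.measurable.sub hWpM.measurable).sub (hCcont.measurable.const_mul q)
  have key : ∀ l, φ' < l →
      IntegrableOn (fun y => Real.exp (-(l * y)) * F y) (Set.Ioi 0) ∧
      ∫ y in Set.Ioi (0:ℝ), Real.exp (-(l * y)) * F y = 0 := by
    intro l hl
    obtain ⟨hCint, hClap⟩ := aux_conv_laplace hWp_neg hWpq_neg (hWp_int l hl) (hWpq_int l hl)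
    have hA : 0 < ψ l - (p + q) := by linarith [hψ l hl]
    have hB : 0 < ψ l - p := by linarith [hψ l hl]
    have hsplit : (fun y => Real.exp (-(l * y)) * F y) = fun y =>
        Real.exp (-(l * y)) * Wpq y - Real.exp (-(l * y)) * Wp y
          - q * (Real.exp (-(l * y)) * C y) := by
      funext y
      rw [hFdef]
      ring
    constructor
    · rw [hsplit]
      exact ((hWpq_int l hl).sub (hWp_int l hl)).sub (hCint.const_mul q)
    · rw [hsplit]
      rw [integral_sub
          (f := fun y => Real.exp (-(l * y)) * Wpq y - Real.exp (-(l * y)) * Wp y)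
          (g := fun y => q * (Real.exp (-(l * y)) * C y))
          ((hWpq_int l hl).sub (hWp_int l hl)) (hCint.const_mul q),
        integral_sub (hWpq_int l hl) (hWp_int l hl), MeasureTheory.integral_const_mul,
        hWpq_lap l hl, hWp_lap l hl, hClap, hWp_lap l hl, hWpq_lap l hl]
      field_simp
      ring
  have hae := aux_laplace_uniq hFmeas (fun l hl => (key l hl).1) (fun l hl => (key l hl).2)
  have hFpos : ∀ y : ℝ, 0 < y → F y = 0 := by
    intro y hy
    have hcWp : ContinuousAt Wp y := hWp_cont.continuousAt (Ici_mem_nhds hy)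
    have hcWpq : ContinuousAt Wpq y := hWpq_cont.continuousAt (Ici_mem_nhds hy)
    have hcF : ContinuousAt F y :=
      (hcWpq.sub hcWp).sub (continuousAt_const.mul hCcont.continuousAt)
    exact aux_ae_upgrade hae hy hcF
  have hFall : ∀ y : ℝ, F y = 0 := by
    intro y
    rcases lt_trichotomy y 0 with h | h | h
    · rw [hFdef]
      simp only
      rw [hWp_neg y h, hWpq_neg y h, hCdef]
      simp only
      rw [aux_C_nonpos hWp_neg hWpq_neg y h.le]
      ring
    · subst h
      have hcw : ContinuousWithinAt F (Set.Ici (0:ℝ)) 0 :=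
        ((hWpq_cont 0 Set.self_mem_Ici).sub (hWp_cont 0 Set.self_mem_Ici)).sub
          (continuousWithinAt_const.mul hCcont.continuousAt.continuousWithinAt)
      have t1 : Tendsto F (nhdsWithin 0 (Set.Ioi (0:ℝ))) (nhds (F 0)) :=
        hcw.mono Set.Ioi_subset_Ici_self
      have t2 : Tendsto F (nhdsWithin 0 (Set.Ioi (0:ℝ))) (nhds 0) := by
        refine Tendsto.congr' ?_ tendsto_const_nhds
        exact eventually_nhdsWithin_of_forall fun z hz => (hFpos z hz).symm
      exact tendsto_nhds_unique t1 t2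
    · exact hFpos y h
  have hK : ∀ y : ℝ, Wpq y = Wp y + q * C y := by
    intro y
    have := hFall y
    rw [hFdef] at this
    simp only at this
    linarith
  intro a ha x
  have hii : ∀ c d : ℝ, IntervalIntegrable (fun z => Wpq (x - z) * Wp z) volume c d := by
    intro c d
    refine aux_intervalIntegrable (C := Wpq (x - c ⊓ d) * Wp (c ⊔ d))
      ((hWpqM.measurable.comp (measurable_const.sub measurable_id)).mul hWpM.measurable) ?_
    intro z hz
    have h1 : c ⊓ d < z := hz.1
    have h2 : z ≤ c ⊔ d := hz.2
    rw [Real.norm_eq_abs, abs_of_nonneg (mul_nonneg (hWpqN _) (hWpN _))]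
    exact mul_le_mul (hWpqM (by linarith)) (hWpM h2) (hWpN z) (hWpqN _)
  have hadd := intervalIntegral.integral_add_adjacent_intervals (hii 0 a) (hii a x)
  have hmain : Wpq x - q * ∫ z in (0:ℝ)..a, Wpq (x - z) * Wp z
      = Wp x + q * ∫ z in a..x, Wpq (x - z) * Wp z := by
    have h1 := hK x
    have h2 : q * C x = q * (∫ z in (0:ℝ)..a, Wpq (x - z) * Wp z)
        + q * ∫ z in a..x, Wpq (x - z) * Wp z := by
      rw [← mul_add, hadd]
    rw [h2] at h1
    linarith
  refine ⟨hmain, fun hxa => ?_⟩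
  have h0 : ∫ z in a..x, Wpq (x - z) * Wp z = 0 := by
    rw [intervalIntegral.integral_symm, intervalIntegral.integral_of_le hxa]
    have : ∀ z ∈ Set.Ioc x a, Wpq (x - z) * Wp z = 0 := by
      intro z hz
      rw [hWpq_neg (x - z) (by linarith [hz.1]), zero_mul]
    rw [setIntegral_congr_fun measurableSet_Ioc this]
    simp
  rw [hmain, h0, mul_zero, add_zero]
end

section
/- Under the stated hypotheses, for all s, u ∈ ℝ one has W_{p+q}(u) − q ∫₀^s W_{p+q}(u − z) W_p(z) dz = W_p(u) + q ∫₀^{u−s} W_p(u − z) W_{p+q}(z) dz. Equivalently, in the paper's notation, 𝓦_{x−a}^{(p,q)}(x − y) = 𝓦_{a−y}^{(p+q,−q)}(x − y) for all x, y, a ∈ ℝ; this is the symmetry relation used at the end of the proof of the main theorem. -/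
open MeasureTheory Set Polynomial intervalIntegral

lemma meas_of_mono_zero {W : ℝ → ℝ} (hmono : MonotoneOn W (Set.Ici 0))
    (hneg : ∀ x, x < 0 → W x = 0) : Measurable W := by
  have hg : Monotone (fun x => W (max x 0)) := by
    intro x y hxy
    exact hmono (le_max_right x 0) (le_max_right y 0)
      (max_le_max hxy le_rfl)
  have : W = Set.indicator (Set.Ici 0) (fun x => W (max x 0)) := by
    funext x
    by_cases hx : 0 ≤ x
    · simp [Set.indicator_of_mem (Set.mem_Ici.2 hx), max_eq_left hx]
    · rw [Set.indicator_of_notMem (by simpa using hx), hneg x (lt_of_not_ge hx)]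
  rw [this]
  exact (hg.measurable).indicator measurableSet_Ici

lemma eq_of_cont_mono_ae {f g : ℝ → ℝ} (hf : ContinuousOn f (Set.Ici 0))
    (hg : MonotoneOn g (Set.Ici 0))
    (hae : ∀ᵐ x ∂(volume.restrict (Set.Ioi (0:ℝ))), f x = g x) :
    ∀ u, 0 < u → f u = g u := by
  have hnull : volume ({x | ¬ f x = g x} ∩ Set.Ioi 0) = 0 := by
    have := hae
    rw [MeasureTheory.ae_iff, Measure.restrict_apply' measurableSet_Ioi] at this
    exact this
  have key : ∀ a b : ℝ, 0 ≤ a → a < b → ∃ v, v ∈ Set.Ioo a b ∧ f v = g v := by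
    intro a b ha hab
    by_contra h
    push_neg at h
    have hsub : Set.Ioo a b ⊆ {x | ¬ f x = g x} ∩ Set.Ioi 0 := by
      intro v hv
      exact ⟨h v hv, lt_of_le_of_lt ha hv.1⟩
    have : volume (Set.Ioo a b) = 0 := measure_mono_null hsub hnull
    rw [Real.volume_Ioo] at this
    exact absurd this (by simp [ENNReal.ofReal_eq_zero, hab, not_le])
  intro u hu
  by_contra hne
  rcases lt_or_gt_of_ne (fun h => hne h) with hlt | hgt
  · -- f u < g u : use right side
    have hcont : ContinuousAt f u :=
      (hf u (le_of_lt hu)).continuousAt (Ici_mem_nhds hu)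
    rw [Metric.continuousAt_iff] at hcont
    obtain ⟨δ, hδ, hball⟩ := hcont (g u - f u) (by linarith)
    obtain ⟨v, hv, hfv⟩ := key u (u + δ) (le_of_lt hu) (by linarith)
    have h1 : g u ≤ g v := hg (le_of_lt hu) (le_of_lt (lt_trans hu hv.1)) (le_of_lt hv.1)
    have h2 : |f v - f u| < g u - f u := by
      have := hball (show dist v u < δ by
        rw [Real.dist_eq, abs_of_pos (by linarith [hv.1])]; linarith [hv.2])
      rwa [Real.dist_eq] at this
    rw [abs_lt] at h2
    rw [hfv] at h2
    linarith
  · have hcont : ContinuousAt f u :=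
      (hf u (le_of_lt hu)).continuousAt (Ici_mem_nhds hu)
    rw [Metric.continuousAt_iff] at hcont
    obtain ⟨δ, hδ, hball⟩ := hcont (f u - g u) (by linarith)
    set a := max (u - δ) 0 with ha
    have hau : a < u := by
      rw [ha]; apply max_lt (by linarith) hu
    obtain ⟨v, hv, hfv⟩ := key a u (le_max_right _ _) hau
    have hv0 : 0 < v := lt_of_le_of_lt (le_max_right (u - δ) 0) hv.1
    have h1 : g v ≤ g u := hg (le_of_lt hv0) (le_of_lt hu) (le_of_lt hv.2)
    have h2 : |f v - f u| < f u - g u := by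
      have hd : dist v u < δ := by
        rw [Real.dist_eq, abs_of_neg (by linarith [hv.2])]
        have : u - δ ≤ a := le_max_left _ _
        linarith [hv.1]
      have := hball hd
      rwa [Real.dist_eq] at this
    rw [abs_lt] at h2
    rw [hfv] at h2
    linarith


lemma moments_zero (k : ℝ → ℝ) (hkm : Measurable k)
    (hk0 : ∀ t, t ∉ Set.Ioo (0:ℝ) 1 → k t = 0)
    (hki : Integrable k) (hmom : ∀ n : ℕ, ∫ t, t ^ n * k t = 0) :
    ∀ᵐ t, k t = 0 := by
  have hint_mul : ∀ (G : ℝ → ℝ), Measurable G → (∃ C, ∀ t ∈ Set.Icc (0:ℝ) 1, |G t| ≤ C) →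
      Integrable (fun t => G t * k t) := by
    intro G hGm ⟨C, hC⟩
    have heq : (fun t => G t * k t)
        = fun t => (Set.indicator (Set.Icc 0 1) G) t * k t := by
      funext t
      by_cases ht : t ∈ Set.Ioo (0:ℝ) 1
      · rw [Set.indicator_of_mem (Set.mem_Icc.2 ⟨le_of_lt ht.1, le_of_lt ht.2⟩)]
      · rw [hk0 t ht, mul_zero, mul_zero]
    rw [heq]
    apply Integrable.bdd_mul (c := max C 0) hki ((hGm.indicator measurableSet_Icc).aestronglyMeasurable)
    refine Filter.Eventually.of_forall fun t => ?_
    by_cases ht : t ∈ Set.Icc (0:ℝ) 1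
    · rw [Set.indicator_of_mem ht]
      exact le_max_of_le_left (hC t ht)
    · rw [Set.indicator_of_notMem ht]
      simp
  have hpoly : ∀ P : ℝ[X], ∫ t, P.eval t * k t = 0 := by
    intro P
    have : (fun t => P.eval t * k t)
        = fun t => ∑ i ∈ Finset.range (P.natDegree + 1), P.coeff i * (t ^ i * k t) := by
      funext t
      rw [Polynomial.eval_eq_sum_range, Finset.sum_mul]
      congr 1; funext i; ring
    rw [this, MeasureTheory.integral_finset_sum]
    · apply Finset.sum_eq_zero
      intro i _
      rw [MeasureTheory.integral_const_mul, hmom i, mul_zero]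
    · intro i _
      apply Integrable.const_mul
      apply hint_mul _ (measurable_id.pow_const i)
      exact ⟨1, fun t ht => by
        simp only [id_eq]; rw [abs_pow, abs_of_nonneg ht.1]; exact pow_le_one₀ ht.1 ht.2⟩
  have hcontfun : ∀ G : ℝ → ℝ, Continuous G → ∫ t, G t * k t = 0 := by
    intro G hG
    set C := ∫ t, |k t| with hCdef
    have hC0 : 0 ≤ C := integral_nonneg (fun t => abs_nonneg _)
    have hGint : Integrable (fun t => G t * k t) :=
      hint_mul G hG.measurable ⟨_, fun t ht => by
        simpa [Real.norm_eq_abs] using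
          ((ContinuousMap.mk G hG).restrict (Set.Icc 0 1)).norm_coe_le_norm ⟨t, ht⟩⟩
    have hbound : ∀ ε : ℝ, 0 < ε → |∫ t, G t * k t| ≤ ε * C := by
      intro ε hε
      obtain ⟨P, hP⟩ := exists_polynomial_near_continuousMap 0 1
        ((ContinuousMap.mk G hG).restrict (Set.Icc 0 1)) ε hε
      have hPG : ∀ t ∈ Set.Icc (0:ℝ) 1, |P.eval t - G t| ≤ ε := by
        intro t ht
        have h := (P.toContinuousMapOn (Set.Icc 0 1) -
          (ContinuousMap.mk G hG).restrict (Set.Icc 0 1)).norm_coe_le_norm ⟨t, ht⟩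
        simp only [ContinuousMap.sub_apply, Polynomial.toContinuousMapOn_apply,
          Polynomial.toContinuousMap_apply, ContinuousMap.restrict_apply,
          ContinuousMap.coe_mk, Real.norm_eq_abs] at h
        exact h.trans hP.le
      have hPint : Integrable (fun t => P.eval t * k t) :=
        hint_mul _ (P.continuous_aeval.measurable) ⟨_, fun t ht => by
          simpa [Real.norm_eq_abs] using
            (P.toContinuousMapOn (Set.Icc 0 1)).norm_coe_le_norm ⟨t, ht⟩⟩
      have h1 : (∫ t, G t * k t) = (∫ t, G t * k t) - ∫ t, P.eval t * k t := by
        rw [hpoly P, sub_zero]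
      rw [h1, ← integral_sub hGint hPint]
      calc |∫ t, G t * k t - P.eval t * k t|
          = ‖∫ t, G t * k t - P.eval t * k t‖ := (Real.norm_eq_abs _).symm
        _ ≤ ∫ t, ε * |k t| := by
            apply MeasureTheory.norm_integral_le_of_norm_le (hki.abs.const_mul ε)
            apply Filter.Eventually.of_forall
            intro t
            by_cases ht : t ∈ Set.Ioo (0:ℝ) 1
            · rw [← sub_mul, Real.norm_eq_abs, abs_mul]
              apply mul_le_mul_of_nonneg_right _ (abs_nonneg _)
              rw [abs_sub_comm]
              exact hPG t (Set.mem_Icc.2 ⟨le_of_lt ht.1, le_of_lt ht.2⟩)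
            · rw [hk0 t ht]
              simp [mul_nonneg (le_of_lt hε) (abs_nonneg (0:ℝ))]
        _ = ε * C := by rw [MeasureTheory.integral_const_mul]
    by_contra h
    have habs : 0 < |∫ t, G t * k t| := abs_pos.2 h
    rcases eq_or_lt_of_le hC0 with hC | hC
    · have := hbound 1 one_pos
      rw [← hC, mul_zero] at this
      linarith
    · have := hbound (|∫ t, G t * k t| / (2 * C)) (by positivity)
      have h2 : |∫ t, G t * k t| / (2 * C) * C = |∫ t, G t * k t| / 2 := by
        field_simp
      rw [h2] at this
      linarith
  apply ae_eq_zero_of_integral_contDiff_smul_eq_zero (hki.locallyIntegrable)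
  intro g hg _
  simpa [smul_eq_mul] using hcontfun g hg.continuous

lemma laplace_zero (h : ℝ → ℝ) (hm : Measurable h) (c : ℝ)
    (hint : ∀ l, c < l → IntegrableOn (fun x => Real.exp (-(l*x)) * h x) (Set.Ioi 0))
    (hlap : ∀ l, c < l → ∫ x in Set.Ioi (0:ℝ), Real.exp (-(l*x)) * h x = 0) :
    ∀ᵐ x ∂(volume.restrict (Set.Ioi (0:ℝ))), h x = 0 := by
  set b := max c 0 with hb
  have hb0 : 0 ≤ b := le_max_right _ _
  have hbc : c ≤ b := le_max_left _ _
  -- the substitution x ↦ exp (-x)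
  set f : ℝ → ℝ := fun x => Real.exp (-x) with hf
  have himg : f '' Set.Ioi 0 = Set.Ioo 0 1 := by
    ext t
    constructor
    · rintro ⟨x, hx, rfl⟩
      exact ⟨Real.exp_pos _, Real.exp_lt_one_iff.2 (by simpa using hx)⟩
    · rintro ⟨ht0, ht1⟩
      exact ⟨-Real.log t, by simpa using Real.log_neg ht0 ht1,
        by simp [hf, Real.exp_log ht0]⟩
  have hderiv : ∀ x ∈ Set.Ioi (0:ℝ), HasDerivWithinAt f (-Real.exp (-x)) (Set.Ioi 0) x := by
    intro x _
    have : HasDerivAt f (Real.exp (-x) * (-1)) x :=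
      (Real.hasDerivAt_exp (-x)).comp x (hasDerivAt_neg x)
    simpa [mul_comm] using this.hasDerivWithinAt
  have hinj : Set.InjOn f (Set.Ioi 0) := fun x _ y _ hxy => by
    have := Real.exp_injective hxy; linarith [neg_injective this]
  have habs : ∀ x : ℝ, |-Real.exp (-x)| = Real.exp (-x) := fun x => by
    rw [abs_neg, abs_of_pos (Real.exp_pos _)]
  -- the transformed function
  set k : ℝ → ℝ := Set.indicator (Set.Ioo 0 1) (fun t => t ^ b * h (-Real.log t)) with hk
  have hkm : Measurable k := by
    apply Measurable.indicator _ measurableSet_Ioo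
    exact ((Real.continuous_rpow_const hb0).measurable).mul
      (hm.comp Real.measurable_log.neg)
  have hk0 : ∀ t, t ∉ Set.Ioo (0:ℝ) 1 → k t = 0 := fun t ht =>
    Set.indicator_of_notMem ht _
  -- pointwise: the pulled-back integrand
  have hpull : ∀ (n : ℕ) (x : ℝ), x ∈ Set.Ioi (0:ℝ) →
      |-Real.exp (-x)| • ((f x) ^ n * ((f x) ^ b * h (-Real.log (f x))))
        = Real.exp (-((n + b + 1) * x)) * h x := by
    intro n x _
    rw [habs]
    have h1 : Real.log (f x) = -x := Real.log_exp _
    have h2 : (f x : ℝ) ^ b = Real.exp (-x * b) := by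
      rw [Real.rpow_def_of_pos (Real.exp_pos _), Real.log_exp]
    have h3 : (f x : ℝ) ^ n = Real.exp ((n : ℝ) * -x) := by
      rw [← Real.exp_nat_mul]
    rw [h1, h2, h3, smul_eq_mul, neg_neg]
    have e : Real.exp (-x) * (Real.exp ((n:ℝ) * -x) * (Real.exp (-x*b) * h x))
        = Real.exp (-x + ((n:ℝ) * -x) + -x*b) * h x := by
      rw [Real.exp_add, Real.exp_add]; ring
    rw [e]
    congr 1
    ring
  have hkint : Integrable k := by
    rw [hk, integrable_indicator_iff measurableSet_Ioo]
    have := (integrableOn_image_iff_integrableOn_abs_deriv_smul measurableSet_Ioi hderiv hinj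
      (fun t => t ^ b * h (-Real.log t)))
    rw [himg] at this
    rw [this]
    apply (hint (b+1) (by linarith)).congr_fun _ measurableSet_Ioi
    intro x hx
    have := hpull 0 x hx
    simpa using this.symm
  have hmom : ∀ n : ℕ, ∫ t, t ^ n * k t = 0 := by
    intro n
    have hl : c < (n : ℝ) + b + 1 := by
      have : (0:ℝ) ≤ n := Nat.cast_nonneg n
      linarith
    have e1 : (fun t => t ^ n * k t)
        = Set.indicator (Set.Ioo 0 1) (fun t => t ^ n * (t ^ b * h (-Real.log t))) := by
      funext t
      by_cases ht : t ∈ Set.Ioo (0:ℝ) 1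
      · rw [hk, Set.indicator_of_mem ht, Set.indicator_of_mem ht]
      · rw [hk0 t ht, Set.indicator_of_notMem ht, mul_zero]
    rw [e1, MeasureTheory.integral_indicator measurableSet_Ioo, ← himg,
      integral_image_eq_integral_abs_deriv_smul measurableSet_Ioi hderiv hinj]
    rw [setIntegral_congr_fun measurableSet_Ioi (fun x hx => hpull n x hx)]
    exact hlap _ hl
  have hk_ae := moments_zero k hkm hk0 hkint hmom
  -- transfer back
  have hzero : ∫ t in Set.Ioo (0:ℝ) 1, |k t| = 0 := by
    rw [integral_eq_zero_iff_of_nonneg]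
    · exact (ae_restrict_of_ae hk_ae).mono fun t ht => by simp [ht]
    · exact fun t => abs_nonneg _
    · exact hkint.abs.integrableOn
  have himg2 : ∫ t in Set.Ioo (0:ℝ) 1, |k t|
      = ∫ x in Set.Ioi (0:ℝ), |(-Real.exp (-x))| • |k (f x)| := by
    rw [← himg]
    exact integral_image_eq_integral_abs_deriv_smul measurableSet_Ioi hderiv hinj _
  have htrans : ∫ x in Set.Ioi (0:ℝ), Real.exp (-((b+1)*x)) * |h x| = 0 := by
    have hpt : ∀ x ∈ Set.Ioi (0:ℝ),
        Real.exp (-((b+1)*x)) * |h x| = |(-Real.exp (-x))| • |k (f x)| := by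
      intro x hx
      have hmem : f x ∈ Set.Ioo (0:ℝ) 1 := by rw [← himg]; exact ⟨x, hx, rfl⟩
      have hkfx : k (f x) = (f x) ^ b * h (-Real.log (f x)) := Set.indicator_of_mem hmem _
      have h2 : (f x : ℝ) ^ b = Real.exp (-x * b) := by
        rw [Real.rpow_def_of_pos (Real.exp_pos _), Real.log_exp]
      rw [hkfx, smul_eq_mul, habs, Real.log_exp, neg_neg, abs_mul, h2,
        abs_of_pos (Real.exp_pos _), ← mul_assoc, ← Real.exp_add]
      congr 2
      ring
    calc ∫ x in Set.Ioi (0:ℝ), Real.exp (-((b+1)*x)) * |h x|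
        = ∫ x in Set.Ioi (0:ℝ), |(-Real.exp (-x))| • |k (f x)| :=
          setIntegral_congr_fun measurableSet_Ioi hpt
      _ = ∫ t in Set.Ioo (0:ℝ) 1, |k t| := himg2.symm
      _ = 0 := hzero
  have hFnn : ∀ x : ℝ, 0 ≤ Real.exp (-((b+1)*x)) * |h x| :=
    fun x => mul_nonneg (Real.exp_pos _).le (abs_nonneg _)
  have hFint : IntegrableOn (fun x => Real.exp (-((b+1)*x)) * |h x|) (Set.Ioi 0) := by
    have h' : IntegrableOn (fun x => |Real.exp (-((b+1)*x)) * h x|) (Set.Ioi 0) :=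
      (hint (b+1) (by linarith)).abs
    apply h'.congr_fun _ measurableSet_Ioi
    intro x _
    simp [abs_mul, abs_of_pos (Real.exp_pos _)]
  have := (integral_eq_zero_iff_of_nonneg (fun x => hFnn x) hFint).1 htrans
  filter_upwards [this] with x hx
  have hexp : Real.exp (-((b+1)*x)) ≠ 0 := (Real.exp_pos _).ne'
  have : |h x| = 0 := by
    by_contra habs'
    exact habs' (abs_eq_zero.2 (by
      rcases mul_eq_zero.1 hx with h' | h'
      · exact absurd h' hexp
      · exact abs_eq_zero.1 h'))
  exact abs_eq_zero.1 this


lemma conv_intOn {V W : ℝ → ℝ} (mV : Measurable V) (mW : Measurable W)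
    (hVle : ∀ x c, x ≤ c → 0 ≤ c → V x ≤ V c) (hWle : ∀ x c, x ≤ c → 0 ≤ c → W x ≤ W c)
    (hV0 : ∀ x, 0 ≤ V x) (hW0 : ∀ x, 0 ≤ W x) (u a b : ℝ) :
    IntegrableOn (fun z => V (u - z) * W z) (Set.Ioc a b) := by
  apply Integrable.mono' (integrable_const (V (max (u - a) 0) * W (max b 0)))
  · exact ((mV.comp (measurable_const.sub measurable_id)).mul mW).aestronglyMeasurable.restrict
  · apply ae_restrict_of_forall_mem measurableSet_Ioc
    intro z hz
    rw [Real.norm_eq_abs, abs_of_nonneg (mul_nonneg (hV0 _) (hW0 _))]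
    apply mul_le_mul
    · exact hVle _ _ (le_trans (by linarith [hz.1]) (le_max_left _ _)) (le_max_right _ _)
    · exact hWle _ _ (le_trans hz.2 (le_max_left _ _)) (le_max_right _ _)
    · exact hW0 _
    · exact hV0 _

lemma conv_intInt {V W : ℝ → ℝ} (mV : Measurable V) (mW : Measurable W)
    (hVle : ∀ x c, x ≤ c → 0 ≤ c → V x ≤ V c) (hWle : ∀ x c, x ≤ c → 0 ≤ c → W x ≤ W c)
    (hV0 : ∀ x, 0 ≤ V x) (hW0 : ∀ x, 0 ≤ W x) (u a b : ℝ) :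
    IntervalIntegrable (fun z => V (u - z) * W z) volume a b := by
  rw [intervalIntegrable_iff]
  exact conv_intOn mV mW hVle hWle hV0 hW0 u (a ⊓ b) (a ⊔ b)

lemma key_conv
    (p q φ' : ℝ) (hq : 0 ≤ q)
    (ψ Wp Wpq : ℝ → ℝ)
    (hψ : ∀ l, φ' < l → p + q < ψ l)
    (hWp_cont : ContinuousOn Wp (Set.Ici 0))
    (hWp_nonneg : ∀ x, 0 ≤ x → 0 ≤ Wp x)
    (hWp_mono : MonotoneOn Wp (Set.Ici 0))
    (hWp_neg : ∀ x, x < 0 → Wp x = 0)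
    (hWpq_cont : ContinuousOn Wpq (Set.Ici 0))
    (hWpq_nonneg : ∀ x, 0 ≤ x → 0 ≤ Wpq x)
    (hWpq_mono : MonotoneOn Wpq (Set.Ici 0))
    (hWpq_neg : ∀ x, x < 0 → Wpq x = 0)
    (hWp_int : ∀ l, φ' < l →
      MeasureTheory.IntegrableOn (fun x => Real.exp (-(l * x)) * Wp x) (Set.Ioi 0))
    (hWp_lap : ∀ l, φ' < l →
      ∫ x in Set.Ioi (0:ℝ), Real.exp (-(l * x)) * Wp x = 1 / (ψ l - p))
    (hWpq_int : ∀ l, φ' < l →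
      MeasureTheory.IntegrableOn (fun x => Real.exp (-(l * x)) * Wpq x) (Set.Ioi 0))
    (hWpq_lap : ∀ l, φ' < l →
      ∫ x in Set.Ioi (0:ℝ), Real.exp (-(l * x)) * Wpq x = 1 / (ψ l - (p + q))) :
    ∀ u : ℝ, Wpq u = Wp u + q * ∫ z in (0:ℝ)..u, Wp (u - z) * Wpq z := by
  have mWp : Measurable Wp := meas_of_mono_zero hWp_mono hWp_neg
  have mWpq : Measurable Wpq := meas_of_mono_zero hWpq_mono hWpq_neg
  have hWp0 : ∀ x, 0 ≤ Wp x := fun x => by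
    rcases le_or_gt 0 x with h | h
    · exact hWp_nonneg x h
    · rw [hWp_neg x h]
  have hWpq0 : ∀ x, 0 ≤ Wpq x := fun x => by
    rcases le_or_gt 0 x with h | h
    · exact hWpq_nonneg x h
    · rw [hWpq_neg x h]
  have hWple : ∀ x c, x ≤ c → 0 ≤ c → Wp x ≤ Wp c := fun x c hxc hc => by
    rcases le_or_gt 0 x with h | h
    · exact hWp_mono h hc hxc
    · rw [hWp_neg x h]; exact hWp0 c
  have hWpqle : ∀ x c, x ≤ c → 0 ≤ c → Wpq x ≤ Wpq c := fun x c hxc hc => by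
    rcases le_or_gt 0 x with h | h
    · exact hWpq_mono h hc hxc
    · rw [hWpq_neg x h]; exact hWpq0 c
  set H : ℝ → ℝ := fun x => ∫ z in (0:ℝ)..x, Wp (x - z) * Wpq z with hHdef
  have hIoc : ∀ u a b : ℝ, IntegrableOn (fun z => Wp (u - z) * Wpq z) (Set.Ioc a b) :=
    conv_intOn mWp mWpq hWple hWpqle hWp0 hWpq0
  have hH0 : ∀ x, x ≤ 0 → H x = 0 := by
    intro x hx
    rcases eq_or_lt_of_le hx with h | h
    · show (∫ z in (0:ℝ)..x, Wp (x - z) * Wpq z) = 0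
      rw [h, intervalIntegral.integral_same]
    · have he : Set.EqOn (fun z => Wp (x - z) * Wpq z) (fun _ => (0:ℝ)) (Set.uIcc 0 x) := by
        intro z hz
        have hz0 : z ≤ 0 := by
          rcases Set.mem_uIcc.1 hz with h' | h'
          · linarith [h'.2]
          · exact h'.2
        rcases eq_or_lt_of_le hz0 with h' | h'
        · show Wp (x - z) * Wpq z = 0
          rw [h', sub_zero, hWp_neg x h, zero_mul]
        · show Wp (x - z) * Wpq z = 0
          rw [hWpq_neg z h', mul_zero]
      show (∫ z in (0:ℝ)..x, Wp (x - z) * Wpq z) = 0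
      have := intervalIntegral.integral_congr (μ := volume) he
      simpa using this
  have hHof : ∀ x, 0 ≤ x → H x = ∫ z in Set.Ioc (0:ℝ) x, Wp (x - z) * Wpq z := by
    intro x hx
    rw [hHdef]
    simp only []
    rw [intervalIntegral.integral_of_le hx]
  have hHnn : ∀ x, 0 ≤ H x := by
    intro x
    rcases le_or_gt x 0 with h | h
    · rw [hH0 x h]
    · rw [hHof x h.le]
      exact setIntegral_nonneg measurableSet_Ioc fun z _ => mul_nonneg (hWp0 _) (hWpq0 _)
  have hHmono : Monotone H := by
    intro x y hxy
    rcases le_or_gt x 0 with h | h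
    · rw [hH0 x h]; exact hHnn y
    · rw [hHof x h.le, hHof y (by linarith)]
      calc ∫ z in Set.Ioc (0:ℝ) x, Wp (x - z) * Wpq z
          ≤ ∫ z in Set.Ioc (0:ℝ) x, Wp (y - z) * Wpq z := by
            apply setIntegral_mono_on (hIoc x 0 x) (hIoc y 0 x) measurableSet_Ioc
            intro z hz
            exact mul_le_mul_of_nonneg_right
              (hWple _ _ (by linarith [hxy]) (by linarith [hz.2, hxy])) (hWpq0 _)
        _ ≤ ∫ z in Set.Ioc (0:ℝ) y, Wp (y - z) * Wpq z := by
            apply setIntegral_mono_set (hIoc y 0 y)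
            · exact ae_restrict_of_forall_mem measurableSet_Ioc
                fun z _ => mul_nonneg (hWp0 _) (hWpq0 _)
            · exact HasSubset.Subset.eventuallyLE (Set.Ioc_subset_Ioc_right hxy)
  have mH : Measurable H := hHmono.measurable
  -- Laplace transform of H
  have hHfact : ∀ l, φ' < l →
      IntegrableOn (fun x => Real.exp (-(l*x)) * H x) (Set.Ioi 0) ∧
      (∫ x in Set.Ioi (0:ℝ), Real.exp (-(l*x)) * H x)
        = (1 / (ψ l - p)) * (1 / (ψ l - (p + q))) := by
    intro l hl
    set μ0 := volume.restrict (Set.Ioi (0:ℝ)) with hμ0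
    set Gp : ℝ → ℝ := fun y => Real.exp (-(l*y)) * Wp y with hGpdef
    have hGp_zero : ∀ y : ℝ, y < 0 → Gp y = 0 := fun y hy => by
      rw [hGpdef]; simp only []; rw [hWp_neg y hy, mul_zero]
    have h0ne : ∀ᵐ (z : ℝ) ∂volume, z ≠ (0:ℝ) := by
      rw [ae_iff]
      have : {z : ℝ | ¬ z ≠ 0} = {0} := by ext; simp
      rw [this]
      exact Real.volume_singleton
    have hGpint : Integrable Gp := by
      have h1 : IntegrableOn Gp (Set.Iic 0) := by
        apply (integrable_zero ℝ ℝ (volume.restrict (Set.Iic (0:ℝ)))).congr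
        filter_upwards [ae_restrict_mem measurableSet_Iic, ae_restrict_of_ae h0ne]
          with z hz hz0
        exact (hGp_zero z (lt_of_le_of_ne hz hz0)).symm
      have h2 : IntegrableOn Gp (Set.Ioi 0) := hWp_int l hl
      have := h1.union h2
      rwa [Set.Iic_union_Ioi, integrableOn_univ] at this
    have hIic0 : ∫ y in Set.Iic (0:ℝ), Gp y = 0 := by
      rw [integral_eq_zero_iff_of_nonneg]
      · filter_upwards [ae_restrict_mem measurableSet_Iic, ae_restrict_of_ae h0ne]
          with z hz hz0
        exact hGp_zero z (lt_of_le_of_ne hz hz0)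
      · exact fun y => mul_nonneg (Real.exp_pos _).le (hWp0 _)
      · exact hGpint.integrableOn
    have hGp_tot : ∫ y, Gp y = 1 / (ψ l - p) := by
      rw [← integral_add_compl measurableSet_Ioi hGpint, Set.compl_Ioi, hIic0, add_zero]
      exact hWp_lap l hl
    have hshift : ∀ z : ℝ, 0 < z →
        ∫ x in Set.Ioi (0:ℝ), Gp (x - z) = 1 / (ψ l - p) := by
      intro z hz
      have e1 : Integrable (fun x => Gp (x - z)) := hGpint.comp_sub_right z
      have e2 : ∫ x in Set.Iic (0:ℝ), Gp (x - z) = 0 := by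
        rw [setIntegral_congr_fun measurableSet_Iic
          (g := fun _ => (0:ℝ)) (fun x hx => hGp_zero _ (by
            simp only [Set.mem_Iic] at hx; linarith))]
        simp
      have := integral_add_compl (s := Set.Ioi (0:ℝ)) measurableSet_Ioi e1
      rw [Set.compl_Ioi, e2, add_zero, integral_sub_right_eq_self (μ := volume) Gp z, hGp_tot] at this
      exact this
    -- double integral
    set f2 : ℝ × ℝ → ℝ := fun w => Real.exp (-(l * w.2)) * (Wp (w.2 - w.1) * Wpq w.1)
      with hf2def
    have mf2 : Measurable f2 := by
      apply Measurable.mul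
      · exact Real.measurable_exp.comp ((measurable_const.mul measurable_snd).neg)
      · exact (mWp.comp (measurable_snd.sub measurable_fst)).mul (mWpq.comp measurable_fst)
    have hf2nn : ∀ w, 0 ≤ f2 w := fun w =>
      mul_nonneg (Real.exp_pos _).le (mul_nonneg (hWp0 _) (hWpq0 _))
    have hexp2 : ∀ z x : ℝ, Real.exp (-(l*z)) * Real.exp (-(l*(x - z))) = Real.exp (-(l*x)) := by
      intro z x
      rw [← Real.exp_add]
      congr 1
      ring
    have hinner_eq : ∀ z : ℝ, (fun x => f2 (z, x))
        = fun x => (Real.exp (-(l*z)) * Wpq z) * Gp (x - z) := by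
      intro z
      funext x
      rw [hf2def, hGpdef]
      simp only []
      rw [← hexp2 z x]
      ring
    have hf2int : Integrable f2 (μ0.prod μ0) := by
      rw [integrable_prod_iff (mf2.aestronglyMeasurable)]
      constructor
      · filter_upwards [ae_restrict_mem measurableSet_Ioi] with z _
        rw [hinner_eq z]
        exact ((hGpint.comp_sub_right z).restrict).const_mul _
      · apply Integrable.congr (f := fun z => (Real.exp (-(l*z)) * Wpq z) * (1 / (ψ l - p)))
        · exact ((hWpq_int l hl)).mul_const _
        · filter_upwards [ae_restrict_mem measurableSet_Ioi] with z hz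
          have : (fun x => ‖f2 (z, x)‖) = fun x => (Real.exp (-(l*z)) * Wpq z) * Gp (x - z) := by
            funext x
            rw [Real.norm_eq_abs, abs_of_nonneg (hf2nn _)]
            exact congrFun (hinner_eq z) x
          rw [this, MeasureTheory.integral_const_mul, hshift z hz]
    have hHrepr : ∀ x : ℝ, 0 < x →
        ∫ z in Set.Ioi (0:ℝ), Wp (x - z) * Wpq z = H x := by
      intro x hx
      have hzero : ∫ z in Set.Ioi x, Wp (x - z) * Wpq z = 0 := by
        rw [setIntegral_congr_fun measurableSet_Ioi (g := fun _ => (0:ℝ))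
          (fun z hz => by
            show Wp (x - z) * Wpq z = 0
            rw [hWp_neg (x - z) (by simp only [Set.mem_Ioi] at hz; linarith), zero_mul])]
        simp
      rw [← Set.Ioc_union_Ioi_eq_Ioi hx.le,
        setIntegral_union (Set.Ioc_disjoint_Ioi le_rfl) measurableSet_Ioi
          (hIoc x 0 x) ?hIoiInt, hzero, add_zero, hHof x hx.le]
      case hIoiInt =>
        apply (integrable_zero ℝ ℝ (volume.restrict (Set.Ioi x))).congr
        apply ae_restrict_of_forall_mem measurableSet_Ioi
        intro z hz
        show (0:ℝ) = Wp (x - z) * Wpq z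
        rw [hWp_neg (x - z) (by simp only [Set.mem_Ioi] at hz; linarith), zero_mul]
    have hswap := integral_integral_swap
      (f := fun z x => f2 (z, x)) (μ := μ0) (ν := μ0) hf2int
    -- evaluate LHS of hswap
    have hLHS : (∫ z, ∫ x, f2 (z, x) ∂μ0 ∂μ0)
        = (1 / (ψ l - p)) * (1 / (ψ l - (p + q))) := by
      have e1 : (∫ z, ∫ x, f2 (z, x) ∂μ0 ∂μ0)
          = ∫ z, (Real.exp (-(l*z)) * Wpq z) * (1 / (ψ l - p)) ∂μ0 := by
        apply MeasureTheory.integral_congr_ae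
        filter_upwards [ae_restrict_mem measurableSet_Ioi] with z hz
        rw [hinner_eq z, MeasureTheory.integral_const_mul, hshift z hz]
      rw [e1, MeasureTheory.integral_mul_const, hWpq_lap l hl, mul_comm]
    -- evaluate RHS of hswap
    have hRHSpt : ∀ x : ℝ, x ∈ Set.Ioi (0:ℝ) →
        (∫ z, f2 (z, x) ∂μ0) = Real.exp (-(l*x)) * H x := by
      intro x hx
      rw [hf2def]
      simp only []
      rw [MeasureTheory.integral_const_mul, hHrepr x hx]
    have hRHS : (∫ x, ∫ z, f2 (z, x) ∂μ0 ∂μ0)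
        = ∫ x in Set.Ioi (0:ℝ), Real.exp (-(l*x)) * H x := by
      apply MeasureTheory.integral_congr_ae
      filter_upwards [ae_restrict_mem measurableSet_Ioi] with x hx
      exact hRHSpt x hx
    constructor
    · have := (hf2int.swap).integral_prod_left
      apply this.congr
      filter_upwards [ae_restrict_mem measurableSet_Ioi] with x hx
      exact hRHSpt x hx
    · rw [← hRHS, ← hswap, hLHS]
  -- D has vanishing Laplace transform
  set D : ℝ → ℝ := fun x => Wpq x - (Wp x + q * H x) with hDdef
  have mD : Measurable D := mWpq.sub (mWp.add (measurable_const.mul mH))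
  have heqD : ∀ l : ℝ, (fun x => Real.exp (-(l*x)) * D x)
      = fun x => Real.exp (-(l*x)) * Wpq x - (Real.exp (-(l*x)) * Wp x
          + q * (Real.exp (-(l*x)) * H x)) := by
    intro l
    funext x
    rw [hDdef]
    simp only []
    ring
  have hDint : ∀ l, φ' < l →
      IntegrableOn (fun x => Real.exp (-(l*x)) * D x) (Set.Ioi 0) := by
    intro l hl
    rw [heqD l]
    exact (hWpq_int l hl).sub ((hWp_int l hl).add (((hHfact l hl).1).const_mul q))
  have hDlap : ∀ l, φ' < l →
      ∫ x in Set.Ioi (0:ℝ), Real.exp (-(l*x)) * D x = 0 := by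
    intro l hl
    have h2 : IntegrableOn
        (fun x => Real.exp (-(l*x)) * Wp x + q * (Real.exp (-(l*x)) * H x))
        (Set.Ioi 0) := (hWp_int l hl).add (((hHfact l hl).1).const_mul q)
    have h3 : IntegrableOn (fun x => q * (Real.exp (-(l*x)) * H x)) (Set.Ioi 0) :=
      ((hHfact l hl).1).const_mul q
    rw [heqD l, integral_sub (hWpq_int l hl) h2, integral_add (hWp_int l hl) h3,
      MeasureTheory.integral_const_mul, hWpq_lap l hl, hWp_lap l hl, (hHfact l hl).2]
    have hB : p + q < ψ l := hψ l hl
    have hA : p < ψ l := by linarith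
    have hA' : ψ l - p ≠ 0 := by intro h; rw [sub_eq_zero] at h; linarith
    have hB' : ψ l - (p + q) ≠ 0 := by intro h; rw [sub_eq_zero] at h; linarith
    field_simp
    ring
  have hae := laplace_zero D mD φ' hDint hDlap
  have haefg : ∀ᵐ x ∂(volume.restrict (Set.Ioi (0:ℝ))),
      Wpq x - Wp x = q * H x := by
    filter_upwards [hae] with x hx
    rw [hDdef] at hx
    simp only [] at hx
    linarith
  have hpt : ∀ u, 0 < u → Wpq u - Wp u = q * H u := by
    apply eq_of_cont_mono_ae (hWpq_cont.sub hWp_cont) _ haefg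
    intro a _ b hb hab
    exact mul_le_mul_of_nonneg_left (hHmono hab) hq
  -- the value at 0
  have hHupper : ∀ u : ℝ, 0 ≤ u → u ≤ 1 → H u ≤ u * (Wp 1 * Wpq 1) := by
    intro u hu hu1
    rw [hHof u hu]
    calc ∫ z in Set.Ioc (0:ℝ) u, Wp (u - z) * Wpq z
        ≤ ∫ _z in Set.Ioc (0:ℝ) u, Wp 1 * Wpq 1 := by
          apply setIntegral_mono_on (hIoc u 0 u)
            (integrableOn_const measure_Ioc_lt_top.ne enorm_ne_top) measurableSet_Ioc
          intro z hz
          exact mul_le_mul (hWple _ 1 (by linarith [hz.1]) one_pos.le)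
            (hWpqle _ 1 (le_trans hz.2 hu1) one_pos.le) (hWpq0 _) (hWp0 1)
      _ = u * (Wp 1 * Wpq 1) := by
          rw [setIntegral_const, Real.volume_real_Ioc_of_le hu, smul_eq_mul, sub_zero]
  have h0 : Wpq 0 - Wp 0 = 0 := by
    have hCont : ContinuousWithinAt (fun x => Wpq x - Wp x) (Set.Ici 0) 0 :=
      (hWpq_cont.sub hWp_cont) 0 Set.self_mem_Ici
    have hseq : Filter.Tendsto (fun n : ℕ => (1:ℝ)/(n+1)) Filter.atTop (nhds 0) :=
      tendsto_one_div_add_atTop_nhds_zero_nat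
    have hpos : ∀ n : ℕ, (0:ℝ) < 1/(n+1) := fun n => by positivity
    have hle1 : ∀ n : ℕ, (1:ℝ)/(n+1) ≤ 1 := fun n => by
      rw [div_le_one (by positivity)]
      linarith [Nat.cast_nonneg (α := ℝ) n]
    have hwithin : Filter.Tendsto (fun n : ℕ => (1:ℝ)/(n+1)) Filter.atTop
        (nhdsWithin 0 (Set.Ici 0)) :=
      tendsto_nhdsWithin_iff.2 ⟨hseq, Filter.Eventually.of_forall fun n => (hpos n).le⟩
    have htend : Filter.Tendsto (fun n : ℕ => Wpq (1/(n+1)) - Wp (1/(n+1)))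
        Filter.atTop (nhds (Wpq 0 - Wp 0)) := hCont.tendsto.comp hwithin
    have heqseq : (fun n : ℕ => Wpq (1/(n+1)) - Wp (1/(n+1)))
        = fun n : ℕ => q * H (1/(n+1)) := funext fun n => hpt _ (hpos n)
    rw [heqseq] at htend
    have hsq : Filter.Tendsto (fun n : ℕ => q * H (1/(n+1))) Filter.atTop (nhds 0) := by
      apply squeeze_zero (fun n => mul_nonneg hq (hHnn _))
        (g := fun n : ℕ => (q * (Wp 1 * Wpq 1)) * (1/(n+1)))
      · intro n
        have := hHupper (1/(n+1)) (hpos n).le (hle1 n)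
        calc q * H (1/(n+1)) ≤ q * ((1/(n+1)) * (Wp 1 * Wpq 1)) :=
              mul_le_mul_of_nonneg_left this hq
          _ = (q * (Wp 1 * Wpq 1)) * (1/(n+1)) := by ring
      · have := hseq.const_mul (q * (Wp 1 * Wpq 1))
        rwa [mul_zero] at this
    exact tendsto_nhds_unique htend hsq
  -- conclusion
  intro u
  show Wpq u = Wp u + q * H u
  rcases lt_trichotomy u 0 with hu | hu | hu
  · rw [hH0 u hu.le, hWpq_neg u hu, hWp_neg u hu]
    ring
  · rw [hu, hH0 0 le_rfl]
    have := h0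
    linarith
  · have := hpt u hu
    linarith

/-- The symmetry relation 𝓦_{x−a}^{(p,q)}(x−y) = 𝓦_{a−y}^{(p+q,−q)}(x−y)
used at the end of the proof of the main theorem: with u = x−y, s = x−a. -/
theorem W_script_symmetry
    (p q φ φ' : ℝ) (hp : 0 ≤ p) (hq : 0 ≤ q) (hφφ' : φ ≤ φ')
    (ψ Wp Wpq : ℝ → ℝ)
    (hψ : ∀ l, φ' < l → p + q < ψ l)
    (hWp_cont : ContinuousOn Wp (Set.Ici 0))
    (hWp_nonneg : ∀ x, 0 ≤ x → 0 ≤ Wp x)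
    (hWp_mono : MonotoneOn Wp (Set.Ici 0))
    (hWp_neg : ∀ x, x < 0 → Wp x = 0)
    (hWpq_cont : ContinuousOn Wpq (Set.Ici 0))
    (hWpq_nonneg : ∀ x, 0 ≤ x → 0 ≤ Wpq x)
    (hWpq_mono : MonotoneOn Wpq (Set.Ici 0))
    (hWpq_neg : ∀ x, x < 0 → Wpq x = 0)
    (hWp_int : ∀ l, φ' < l →
      MeasureTheory.IntegrableOn (fun x => Real.exp (-(l * x)) * Wp x) (Set.Ioi 0))
    (hWp_lap : ∀ l, φ' < l →
      ∫ x in Set.Ioi (0:ℝ), Real.exp (-(l * x)) * Wp x = 1 / (ψ l - p))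
    (hWpq_int : ∀ l, φ' < l →
      MeasureTheory.IntegrableOn (fun x => Real.exp (-(l * x)) * Wpq x) (Set.Ioi 0))
    (hWpq_lap : ∀ l, φ' < l →
      ∫ x in Set.Ioi (0:ℝ), Real.exp (-(l * x)) * Wpq x = 1 / (ψ l - (p + q))) :
    ∀ s u : ℝ,
      Wpq u - q * ∫ z in (0:ℝ)..s, Wpq (u - z) * Wp z
        = Wp u + q * ∫ z in (0:ℝ)..(u - s), Wp (u - z) * Wpq z := by
  have key := key_conv p q φ' hq ψ Wp Wpq hψ hWp_cont hWp_nonneg hWp_mono hWp_neg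
    hWpq_cont hWpq_nonneg hWpq_mono hWpq_neg hWp_int hWp_lap hWpq_int hWpq_lap
  have mWp : Measurable Wp := meas_of_mono_zero hWp_mono hWp_neg
  have mWpq : Measurable Wpq := meas_of_mono_zero hWpq_mono hWpq_neg
  have hWp0 : ∀ x, 0 ≤ Wp x := fun x => by
    rcases le_or_gt 0 x with h | h
    · exact hWp_nonneg x h
    · rw [hWp_neg x h]
  have hWpq0 : ∀ x, 0 ≤ Wpq x := fun x => by
    rcases le_or_gt 0 x with h | h
    · exact hWpq_nonneg x h
    · rw [hWpq_neg x h]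
  have hWple : ∀ x c, x ≤ c → 0 ≤ c → Wp x ≤ Wp c := fun x c hxc hc => by
    rcases le_or_gt 0 x with h | h
    · exact hWp_mono h hc hxc
    · rw [hWp_neg x h]; exact hWp0 c
  have hWpqle : ∀ x c, x ≤ c → 0 ≤ c → Wpq x ≤ Wpq c := fun x c hxc hc => by
    rcases le_or_gt 0 x with h | h
    · exact hWpq_mono h hc hxc
    · rw [hWpq_neg x h]; exact hWpq0 c
  intro s u
  set F : ℝ → ℝ := fun z => Wp (u - z) * Wpq z with hFdef
  have hFint : ∀ a b : ℝ, IntervalIntegrable F volume a b :=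
    conv_intInt mWp mWpq hWple hWpqle hWp0 hWpq0 u
  have hsplit : (∫ z in (0:ℝ)..(u-s), F z) + ∫ z in (u-s)..u, F z
      = ∫ z in (0:ℝ)..u, F z :=
    intervalIntegral.integral_add_adjacent_intervals (hFint 0 (u-s)) (hFint (u-s) u)
  have hsub : (∫ z in (0:ℝ)..s, Wpq (u - z) * Wp z) = ∫ z in (u-s)..u, F z := by
    have hcomp := intervalIntegral.integral_comp_sub_left (a := 0) (b := s) F u
    have he : (fun z => Wpq (u - z) * Wp z) = fun z => F (u - z) := by
      funext z
      show Wpq (u - z) * Wp z = Wp (u - (u - z)) * Wpq (u - z)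
      rw [sub_sub_cancel]
      ring
    rw [he, hcomp, sub_zero]
  rw [key u, hsub, ← hsplit]
  ring
end

section
/- Under the stated hypotheses, for every λ > φ′ the integral ∫₀^∞ e^{−λx} H(x) dx converges and equals (1/(λ − φ)) · (1 + q/(ψ(λ) − (p + q))). (This is the explicit Laplace transform (3.5) of the function 𝓗^{(p,q)} of the paper.) -/
open MeasureTheory Set Filter Real

/-- Equation (3.5) of the paper: the Laplace transform of 𝓗^{(p,q)} on [0,∞) is
`(λ − Φ(p))⁻¹ (1 + q/(ψ(λ) − (p+q)))` for λ > Φ(p+q). -/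
theorem H_laplace_transform
    (p q φ φ' : ℝ) (hp : 0 ≤ p) (hq : 0 ≤ q) (hφφ' : φ ≤ φ')
    (ψ Wp Wpq : ℝ → ℝ)
    (hψ : ∀ l, φ' < l → p + q < ψ l)
    (hWp_cont : ContinuousOn Wp (Set.Ici 0))
    (hWp_nonneg : ∀ x, 0 ≤ x → 0 ≤ Wp x)
    (hWp_mono : MonotoneOn Wp (Set.Ici 0))
    (hWp_neg : ∀ x, x < 0 → Wp x = 0)
    (hWpq_cont : ContinuousOn Wpq (Set.Ici 0))
    (hWpq_nonneg : ∀ x, 0 ≤ x → 0 ≤ Wpq x)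
    (hWpq_mono : MonotoneOn Wpq (Set.Ici 0))
    (hWpq_neg : ∀ x, x < 0 → Wpq x = 0)
    (hWp_int : ∀ l, φ' < l →
      MeasureTheory.IntegrableOn (fun x => Real.exp (-(l * x)) * Wp x) (Set.Ioi 0))
    (hWp_lap : ∀ l, φ' < l →
      ∫ x in Set.Ioi (0:ℝ), Real.exp (-(l * x)) * Wp x = 1 / (ψ l - p))
    (hWpq_int : ∀ l, φ' < l →
      MeasureTheory.IntegrableOn (fun x => Real.exp (-(l * x)) * Wpq x) (Set.Ioi 0))
    (hWpq_lap : ∀ l, φ' < l →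
      ∫ x in Set.Ioi (0:ℝ), Real.exp (-(l * x)) * Wpq x = 1 / (ψ l - (p + q)))
    (H : ℝ → ℝ)
    (hH : ∀ x : ℝ, H x
      = Real.exp (φ * x) * (1 + q * ∫ z in (0:ℝ)..x, Real.exp (-(φ * z)) * Wpq z)) :
    ∀ l, φ' < l →
      MeasureTheory.IntegrableOn (fun x => Real.exp (-(l * x)) * H x) (Set.Ioi 0) ∧
      ∫ x in Set.Ioi (0:ℝ), Real.exp (-(l * x)) * H x
        = (1 / (l - φ)) * (1 + q / (ψ l - (p + q))) := by
  intro l hl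
  have hlφ : φ < l := lt_of_le_of_lt hφφ' hl
  set c : ℝ := l - φ with hc
  have hc0 : 0 < c := sub_pos.mpr hlφ
  set l' : ℝ := (φ' + l) / 2 with hl'
  have hl'1 : φ' < l' := by rw [hl']; linarith
  have hl'2 : l' < l := by rw [hl']; linarith
  have hφl' : φ < l' := lt_of_le_of_lt hφφ' hl'1
  set g : ℝ → ℝ := fun z => Real.exp (-(φ * z)) * Wpq z with hg
  have hg_cont : ContinuousOn g (Set.Ici 0) :=
    ((Real.continuous_exp.comp (continuous_const.mul continuous_id).neg).continuousOn).mul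
      hWpq_cont
  have hg_nonneg : ∀ z ∈ Set.Ici (0:ℝ), 0 ≤ g z := fun z hz =>
    mul_nonneg (Real.exp_pos _).le (hWpq_nonneg z hz)
  set F : ℝ → ℝ := fun x => ∫ z in (0:ℝ)..x, g z with hF
  have hF0 : F 0 = 0 := intervalIntegral.integral_same
  have hg_ii : ∀ x : ℝ, 0 ≤ x → IntervalIntegrable g volume 0 x := by
    intro x hx
    apply ContinuousOn.intervalIntegrable
    rw [Set.uIcc_of_le hx]
    exact hg_cont.mono (Set.Icc_subset_Ici_self)
  have hFnonneg : ∀ x, 0 ≤ x → 0 ≤ F x := by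
    intro x hx
    apply intervalIntegral.integral_nonneg hx
    intro z hz
    exact hg_nonneg z hz.1
  -- continuity of F on Ici 0
  have hF_cont : ContinuousOn F (Set.Ici 0) := by
    intro x hx
    have hx0 : (0:ℝ) ≤ x := hx
    have hxx : (0:ℝ) ≤ x + 1 := by linarith
    have huicc : Set.uIcc (0:ℝ) (x + 1) = Set.Icc 0 (x + 1) := Set.uIcc_of_le hxx
    have hint : MeasureTheory.IntegrableOn g (Set.uIcc (0:ℝ) (x + 1)) := by
      rw [huicc]
      exact (hg_cont.mono Set.Icc_subset_Ici_self).integrableOn_compact isCompact_Icc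
    have h1 := intervalIntegral.continuousOn_primitive_interval hint
    have hmem : Set.uIcc (0:ℝ) (x + 1) ∈ nhdsWithin x (Set.Ici 0) := by
      rw [huicc]
      refine Filter.mem_of_superset
        (Filter.inter_mem self_mem_nhdsWithin
          (mem_nhdsWithin_of_mem_nhds (Iio_mem_nhds (show x < x + 1 by linarith)))) ?_
      rintro y ⟨hy1, hy2⟩
      exact ⟨hy1, le_of_lt hy2⟩
    exact (h1.continuousWithinAt
      (by rw [huicc]; exact ⟨hx0, by linarith⟩)).mono_of_mem_nhdsWithin hmem
  -- constant C bounding the l'-Laplace transform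
  set C : ℝ := ∫ z in Set.Ioi (0:ℝ), Real.exp (-(l' * z)) * Wpq z with hC
  have hC0 : 0 ≤ C := by
    apply MeasureTheory.setIntegral_nonneg measurableSet_Ioi
    intro z hz
    exact mul_nonneg (Real.exp_pos _).le (hWpq_nonneg z (le_of_lt hz))
  -- bound on F
  have hFbound : ∀ x, 0 ≤ x → F x ≤ Real.exp ((l' - φ) * x) * C := by
    intro x hx
    have hii2 : IntervalIntegrable (fun z => Real.exp ((l' - φ) * x) *
        (Real.exp (-(l' * z)) * Wpq z)) volume 0 x := by
      apply ContinuousOn.intervalIntegrable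
      rw [Set.uIcc_of_le hx]
      exact (continuousOn_const.mul
        (((Real.continuous_exp.comp (continuous_const.mul continuous_id).neg).continuousOn).mul
          (hWpq_cont.mono Set.Icc_subset_Ici_self)))
    have step1 : F x ≤ ∫ z in (0:ℝ)..x,
        Real.exp ((l' - φ) * x) * (Real.exp (-(l' * z)) * Wpq z) := by
      apply intervalIntegral.integral_mono_on hx (hg_ii x hx) hii2
      intro z hz
      have : g z = Real.exp ((l' - φ) * z) * (Real.exp (-(l' * z)) * Wpq z) := by
        rw [hg, ← mul_assoc, ← Real.exp_add]; ring_nf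
      rw [this]
      apply mul_le_mul_of_nonneg_right
      · exact Real.exp_le_exp.mpr (mul_le_mul_of_nonneg_left hz.2 (by linarith))
      · exact mul_nonneg (Real.exp_pos _).le (hWpq_nonneg z hz.1)
    have step2 : ∫ z in (0:ℝ)..x,
        Real.exp ((l' - φ) * x) * (Real.exp (-(l' * z)) * Wpq z)
        = Real.exp ((l' - φ) * x) * ∫ z in (0:ℝ)..x, Real.exp (-(l' * z)) * Wpq z :=
      intervalIntegral.integral_const_mul _ _
    have step3 : ∫ z in (0:ℝ)..x, Real.exp (-(l' * z)) * Wpq z ≤ C := by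
      rw [intervalIntegral.integral_of_le hx]
      apply MeasureTheory.setIntegral_mono_set (hWpq_int l' hl'1)
      · filter_upwards [MeasureTheory.ae_restrict_mem measurableSet_Ioi] with z hz
        exact mul_nonneg (Real.exp_pos _).le (hWpq_nonneg z (le_of_lt hz))
      · exact HasSubset.Subset.eventuallyLE Set.Ioc_subset_Ioi_self
    calc F x ≤ _ := step1
      _ = _ := step2
      _ ≤ Real.exp ((l' - φ) * x) * C :=
        mul_le_mul_of_nonneg_left step3 (Real.exp_pos _).le
  -- the integrand
  set v : ℝ → ℝ := fun x => Real.exp (-(l * x)) * H x with hv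
  have hv_eq : ∀ x, v x = Real.exp (-(c * x)) * (1 + q * F x) := by
    intro x
    simp only [hv]
    rw [hH x, ← mul_assoc, ← Real.exp_add]
    congr 2
    rw [hc]; ring
  -- bound function
  set b : ℝ → ℝ := fun x => Real.exp (-(c * x)) + q * C * Real.exp (-((l - l') * x)) with hb
  have hb_int : MeasureTheory.IntegrableOn b (Set.Ioi 0) := by
    have h1 : MeasureTheory.IntegrableOn (fun x : ℝ => Real.exp (-c * x)) (Set.Ioi 0) :=
      exp_neg_integrableOn_Ioi 0 hc0
    have h2 : MeasureTheory.IntegrableOn (fun x : ℝ => Real.exp (-(l - l') * x)) (Set.Ioi 0) :=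
      exp_neg_integrableOn_Ioi 0 (by linarith : (0:ℝ) < l - l')
    have h3 := h1.add (h2.const_mul (q * C))
    refine h3.congr (Filter.Eventually.of_forall fun x => ?_)
    simp only [hb, Pi.add_apply, neg_mul]
  have hv_le_b : ∀ x, 0 ≤ x → ‖v x‖ ≤ b x := by
    intro x hx
    simp only [hb]
    have h1 : 0 ≤ v x := by
      rw [hv_eq]
      exact mul_nonneg (Real.exp_pos _).le
        (by nlinarith [hFnonneg x hx])
    rw [Real.norm_eq_abs, abs_of_nonneg h1, hv_eq]
    have h2 : Real.exp (-(c * x)) * (1 + q * F x)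
        = Real.exp (-(c * x)) + Real.exp (-(c * x)) * (q * F x) := by ring
    rw [h2]
    have h3 : Real.exp (-(c * x)) * (q * F x) ≤ q * C * Real.exp (-((l - l') * x)) := by
      have h4 : q * F x ≤ q * (Real.exp ((l' - φ) * x) * C) :=
        mul_le_mul_of_nonneg_left (hFbound x hx) hq
      have h5 : Real.exp (-(c * x)) * (q * (Real.exp ((l' - φ) * x) * C))
          = q * C * Real.exp (-((l - l') * x)) := by
        rw [show Real.exp (-((l - l') * x)) = Real.exp (-(c * x)) * Real.exp ((l' - φ) * x) by
          rw [← Real.exp_add]; congr 1; rw [hc]; ring]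
        ring
      calc Real.exp (-(c * x)) * (q * F x)
          ≤ Real.exp (-(c * x)) * (q * (Real.exp ((l' - φ) * x) * C)) :=
            mul_le_mul_of_nonneg_left h4 (Real.exp_pos _).le
        _ = _ := h5
    linarith
  have hv_cont : ContinuousOn v (Set.Ici 0) := by
    have : ContinuousOn (fun x => Real.exp (-(c * x)) * (1 + q * F x)) (Set.Ici 0) :=
      ((Real.continuous_exp.comp (continuous_const.mul continuous_id).neg).continuousOn).mul
        (continuousOn_const.add (continuousOn_const.mul hF_cont))
    exact this.congr (fun x _ => hv_eq x)
  have hv_int : MeasureTheory.IntegrableOn v (Set.Ioi 0) := by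
    apply MeasureTheory.Integrable.mono' hb_int
    · exact (hv_cont.mono (Set.Ioi_subset_Ici le_rfl)).aestronglyMeasurable measurableSet_Ioi
    · filter_upwards [MeasureTheory.ae_restrict_mem measurableSet_Ioi] with x hx
      exact hv_le_b x (le_of_lt hx)
  refine ⟨hv_int, ?_⟩
  -- the antiderivative
  set u : ℝ → ℝ := fun x => -(Real.exp (-(c * x)) * (1 + q * F x)) / c with hu
  set w : ℝ → ℝ := fun x => Real.exp (-(l * x)) * Wpq x with hw
  have hw_int : MeasureTheory.IntegrableOn w (Set.Ioi 0) := hWpq_int l hl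
  have hderiv : ∀ x ∈ Set.Ioi (0:ℝ), HasDerivAt u (v x - (q / c) * w x) x := by
    intro x hx
    have hx0 : (0:ℝ) < x := hx
    have hE : HasDerivAt (fun y => Real.exp (-(c * y))) (Real.exp (-(c * x)) * (-c)) x := by
      have h := (((hasDerivAt_id x).const_mul c).neg).exp
      simpa using h
    have hgx : ContinuousAt g x :=
      (hg_cont x (le_of_lt hx0)).continuousAt (Ici_mem_nhds hx0)
    have hFd : HasDerivAt F (g x) x := by
      apply intervalIntegral.integral_hasDerivAt_right (hg_ii x hx0.le)
      · exact ((hg_cont.mono (Set.Ioi_subset_Ici le_rfl)).stronglyMeasurableAtFilter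
          isOpen_Ioi x hx)
      · exact hgx
    have hA : HasDerivAt (fun y => 1 + q * F y) (q * g x) x :=
      (hFd.const_mul q).const_add 1
    have := ((hE.mul hA).neg).div_const c
    refine this.congr_deriv ?_
    symm
    have hel : Real.exp (-(l * x)) = Real.exp (-(c * x)) * Real.exp (-(φ * x)) := by
      rw [← Real.exp_add]; congr 1; rw [hc]; ring
    rw [hv_eq]
    simp only [hw, hg]
    rw [hel]
    field_simp
    ring
  have hu_cont0 : ContinuousWithinAt u (Set.Ici 0) 0 := by
    have h1 : ContinuousWithinAt (fun x => Real.exp (-(c * x)) * (1 + q * F x))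
        (Set.Ici 0) 0 :=
      (((Real.continuous_exp.comp
        (continuous_const.mul continuous_id).neg).continuousOn).mul
        (continuousOn_const.add (continuousOn_const.mul hF_cont))).continuousWithinAt Set.self_mem_Ici
    simpa only [hu, Pi.neg_apply] using (h1.neg.div_const c)
  have hu_tendsto : Tendsto u atTop (nhds 0) := by
    apply squeeze_zero_norm' (a := fun x => b x / c)
    · filter_upwards [eventually_ge_atTop (0:ℝ)] with x hx
      rw [hu]
      have h1 : 0 ≤ Real.exp (-(c * x)) * (1 + q * F x) :=
        mul_nonneg (Real.exp_pos _).le (by nlinarith [hFnonneg x hx])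
      rw [norm_div, norm_neg, Real.norm_eq_abs, Real.norm_eq_abs, abs_of_nonneg h1,
        abs_of_pos hc0]
      gcongr
      have := hv_le_b x hx
      rw [Real.norm_eq_abs, hv_eq, abs_of_nonneg h1] at this
      exact this
    · have h1 : Tendsto (fun x : ℝ => Real.exp (-(c * x))) atTop (nhds 0) :=
        Real.tendsto_exp_neg_atTop_nhds_zero.comp
          (Filter.Tendsto.const_mul_atTop hc0 tendsto_id)
      have h2 : Tendsto (fun x : ℝ => Real.exp (-((l - l') * x))) atTop (nhds 0) :=
        Real.tendsto_exp_neg_atTop_nhds_zero.comp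
          (Filter.Tendsto.const_mul_atTop (by linarith : (0:ℝ) < l - l') tendsto_id)
      have h3 : Tendsto b atTop (nhds ((0 + q * C * 0) / c * c)) := by
        have := (h1.add (h2.const_mul (q * C)))
        simpa [hb] using this
      simpa using h3.div_const c
  -- integrability of the derivative
  have hu'_int : MeasureTheory.IntegrableOn (fun x => v x - (q / c) * w x) (Set.Ioi 0) :=
    hv_int.sub (hw_int.const_mul _)
  have key : ∫ x in Set.Ioi (0:ℝ), (v x - (q / c) * w x) = 0 - u 0 :=
    MeasureTheory.integral_Ioi_of_hasDerivAt_of_tendsto hu_cont0 hderiv hu'_int hu_tendsto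
  have hu0 : u 0 = -(1 / c) := by
    rw [hu]
    simp only [mul_zero, neg_zero, Real.exp_zero, hF0, mul_zero, add_zero, mul_one]
    ring
  have hsplit : ∫ x in Set.Ioi (0:ℝ), (v x - (q / c) * w x)
      = (∫ x in Set.Ioi (0:ℝ), v x) - (q / c) * ∫ x in Set.Ioi (0:ℝ), w x := by
    rw [MeasureTheory.integral_sub hv_int (hw_int.const_mul _),
      MeasureTheory.integral_const_mul]
  have hwval : ∫ x in Set.Ioi (0:ℝ), w x = 1 / (ψ l - (p + q)) := hWpq_lap l hl
  have hvval : ∫ x in Set.Ioi (0:ℝ), v x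
      = 1 / c + (q / c) * (1 / (ψ l - (p + q))) := by
    rw [hsplit, hwval, hu0] at key
    linarith
  have hψ0 : ψ l - (p + q) ≠ 0 := ne_of_gt (sub_pos.mpr (hψ l hl))
  rw [hvval]
  field_simp
end

section
/- Under the stated hypotheses, for every λ > φ′ the integral ∫₀^∞ e^{−λx} ( ∫₀^x W_p(x − y) H(y) dy ) dx converges and equals (1/(λ − φ)) · (1/(ψ(λ) − (p + q))). (This is the Laplace transform of the convolution x ↦ ∫₀^x W^{(p)}(x−y) 𝓗^{(p,q)}(y) dy computed at the beginning of Appendix A of the paper.) -/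
open MeasureTheory Set

set_option maxHeartbeats 1000000 in
/-- The Laplace transform of the convolution x ↦ ∫₀ˣ W^{(p)}(x−y) 𝓗^{(p,q)}(y) dy,
computed at the beginning of Appendix A of the paper. -/
theorem convolution_laplace_transform
    (p q φ φ' : ℝ) (hp : 0 ≤ p) (hq : 0 ≤ q) (hφφ' : φ ≤ φ')
    (ψ Wp Wpq : ℝ → ℝ)
    (hψ : ∀ l, φ' < l → p + q < ψ l)
    (hWp_cont : ContinuousOn Wp (Set.Ici 0))
    (hWp_nonneg : ∀ x, 0 ≤ x → 0 ≤ Wp x)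
    (hWp_mono : MonotoneOn Wp (Set.Ici 0))
    (hWp_neg : ∀ x, x < 0 → Wp x = 0)
    (hWpq_cont : ContinuousOn Wpq (Set.Ici 0))
    (hWpq_nonneg : ∀ x, 0 ≤ x → 0 ≤ Wpq x)
    (hWpq_mono : MonotoneOn Wpq (Set.Ici 0))
    (hWpq_neg : ∀ x, x < 0 → Wpq x = 0)
    (hWp_int : ∀ l, φ' < l →
      MeasureTheory.IntegrableOn (fun x => Real.exp (-(l * x)) * Wp x) (Set.Ioi 0))
    (hWp_lap : ∀ l, φ' < l →
      ∫ x in Set.Ioi (0:ℝ), Real.exp (-(l * x)) * Wp x = 1 / (ψ l - p))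
    (hWpq_int : ∀ l, φ' < l →
      MeasureTheory.IntegrableOn (fun x => Real.exp (-(l * x)) * Wpq x) (Set.Ioi 0))
    (hWpq_lap : ∀ l, φ' < l →
      ∫ x in Set.Ioi (0:ℝ), Real.exp (-(l * x)) * Wpq x = 1 / (ψ l - (p + q)))
    (H : ℝ → ℝ)
    (hH : ∀ x : ℝ, H x
      = Real.exp (φ * x) * (1 + q * ∫ z in (0:ℝ)..x, Real.exp (-(φ * z)) * Wpq z)) :
    ∀ l, φ' < l →
      MeasureTheory.IntegrableOn
        (fun x => Real.exp (-(l * x)) * ∫ y in (0:ℝ)..x, Wp (x - y) * H y) (Set.Ioi 0) ∧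
      ∫ x in Set.Ioi (0:ℝ), Real.exp (-(l * x)) * ∫ y in (0:ℝ)..x, Wp (x - y) * H y
        = (1 / (l - φ)) * (1 / (ψ l - (p + q))) := by
  intro l hl
  have hlφ : φ < l := lt_of_le_of_lt hφφ' hl
  have ha : (0:ℝ) < l - φ := sub_pos.mpr hlφ
  have hψpq : (0:ℝ) < ψ l - (p + q) := sub_pos.mpr (hψ l hl)
  have hψp : (0:ℝ) < ψ l - p := by have := hψ l hl; linarith
  -- the decaying exponential
  have hexp_int : IntegrableOn (fun t : ℝ => Real.exp (-((l - φ) * t))) (Ioi 0) := by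
    simpa only [← neg_mul] using exp_neg_integrableOn_Ioi 0 ha
  have hexp_val : ∫ t in Ioi (0:ℝ), Real.exp (-((l - φ) * t)) = 1 / (l - φ) := by
    have := integral_comp_mul_left_Ioi (fun y => Real.exp (-y)) 0 ha
    simp only [mul_zero, integral_exp_neg_Ioi, neg_zero, Real.exp_zero, smul_eq_mul,
      mul_one] at this
    rw [this]; simp [one_div]
  -- inner convolution (for the Laplace transform of H)
  have hconv1_int :
      Integrable (posConvolution (fun z => Real.exp (-(l * z)) * Wpq z)
        (fun t => Real.exp (-((l - φ) * t))) (ContinuousLinearMap.mul ℝ ℝ)) :=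
    integrable_posConvolution (hWpq_int l hl) hexp_int _
  have hconv1_val :
      ∫ x in Ioi (0:ℝ), ∫ t in (0:ℝ)..x,
          (Real.exp (-(l * t)) * Wpq t) * Real.exp (-((l - φ) * (x - t)))
        = (1 / (ψ l - (p + q))) * (1 / (l - φ)) := by
    have h := integral_posConvolution (hWpq_int l hl) hexp_int (ContinuousLinearMap.mul ℝ ℝ)
    simp only [ContinuousLinearMap.mul_apply'] at h
    rw [h, hWpq_lap l hl, hexp_val]
  have key1 : ∀ y : ℝ,
      (∫ t in (0:ℝ)..y, (Real.exp (-(l * t)) * Wpq t) * Real.exp (-((l - φ) * (y - t))))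
        = Real.exp (-((l - φ) * y)) * ∫ z in (0:ℝ)..y, Real.exp (-(φ * z)) * Wpq z := by
    intro y
    rw [← intervalIntegral.integral_const_mul]
    apply intervalIntegral.integral_congr
    intro z _
    have e : Real.exp (-(l * z)) * Real.exp (-((l - φ) * (y - z)))
        = Real.exp (-((l - φ) * y)) * Real.exp (-(φ * z)) := by
      rw [← Real.exp_add, ← Real.exp_add]; ring_nf
    simp only
    linear_combination Wpq z * e
  -- B is the second piece of the Laplace-transform integrand of H
  have hB_int : IntegrableOn (fun y =>
      Real.exp (-((l - φ) * y)) * ∫ z in (0:ℝ)..y, Real.exp (-(φ * z)) * Wpq z) (Ioi 0) := by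
    refine (hconv1_int.integrableOn (s := Ioi 0)).congr_fun ?_ measurableSet_Ioi
    intro y hy
    rw [posConvolution, indicator_of_mem hy]
    simpa using key1 y
  have hB_val : ∫ y in Ioi (0:ℝ),
      Real.exp (-((l - φ) * y)) * ∫ z in (0:ℝ)..y, Real.exp (-(φ * z)) * Wpq z
        = (1 / (ψ l - (p + q))) * (1 / (l - φ)) := by
    rw [← hconv1_val]
    exact setIntegral_congr_fun measurableSet_Ioi fun y _ => (key1 y).symm
  -- the Laplace-transform integrand of H
  have hHeq : (fun y => Real.exp (-(l * y)) * H y)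
      = fun y => Real.exp (-((l - φ) * y))
          + q * (Real.exp (-((l - φ) * y)) * ∫ z in (0:ℝ)..y, Real.exp (-(φ * z)) * Wpq z) := by
    funext y
    rw [hH y]
    have e : Real.exp (-(l * y)) * Real.exp (φ * y) = Real.exp (-((l - φ) * y)) := by
      rw [← Real.exp_add]; ring_nf
    linear_combination (1 + q * ∫ z in (0:ℝ)..y, Real.exp (-(φ * z)) * Wpq z) * e
  have hG_int : IntegrableOn (fun y => Real.exp (-(l * y)) * H y) (Ioi 0) := by
    rw [hHeq]
    exact hexp_int.add (hB_int.const_mul q)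
  have hG_val : ∫ y in Ioi (0:ℝ), Real.exp (-(l * y)) * H y
      = 1 / (l - φ) + q * ((1 / (ψ l - (p + q))) * (1 / (l - φ))) := by
    rw [hHeq, integral_add hexp_int (hB_int.const_mul q), hexp_val,
      integral_const_mul, hB_val]
  -- the main convolution
  have hconv2_int :
      Integrable (posConvolution (fun y => Real.exp (-(l * y)) * H y)
        (fun x => Real.exp (-(l * x)) * Wp x) (ContinuousLinearMap.mul ℝ ℝ)) :=
    integrable_posConvolution hG_int (hWp_int l hl) _
  have key2 : ∀ x : ℝ,
      (∫ y in (0:ℝ)..x, (Real.exp (-(l * y)) * H y) * (Real.exp (-(l * (x - y))) * Wp (x - y)))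
        = Real.exp (-(l * x)) * ∫ y in (0:ℝ)..x, Wp (x - y) * H y := by
    intro x
    rw [← intervalIntegral.integral_const_mul]
    apply intervalIntegral.integral_congr
    intro y _
    have e : Real.exp (-(l * y)) * Real.exp (-(l * (x - y))) = Real.exp (-(l * x)) := by
      rw [← Real.exp_add]; ring_nf
    simp only
    linear_combination (H y * Wp (x - y)) * e
  constructor
  · refine (hconv2_int.integrableOn (s := Ioi 0)).congr_fun ?_ measurableSet_Ioi
    intro x hx
    rw [posConvolution, indicator_of_mem hx]
    simpa using key2 x
  · have hval := integral_posConvolution hG_int (hWp_int l hl) (ContinuousLinearMap.mul ℝ ℝ)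
    simp only [ContinuousLinearMap.mul_apply'] at hval
    rw [hG_val, hWp_lap l hl] at hval
    have hL : ∫ x in Ioi (0:ℝ), Real.exp (-(l * x)) * ∫ y in (0:ℝ)..x, Wp (x - y) * H y
        = ∫ x in Ioi (0:ℝ), ∫ y in (0:ℝ)..x,
            (Real.exp (-(l * y)) * H y) * (Real.exp (-(l * (x - y))) * Wp (x - y)) :=
      setIntegral_congr_fun measurableSet_Ioi fun x _ => (key2 x).symm
    rw [hL, hval]
    have h1 : l - φ ≠ 0 := ne_of_gt ha
    have h2 : ψ l - p ≠ 0 := ne_of_gt hψp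
    have h3 : ψ l - (p + q) ≠ 0 := ne_of_gt hψpq
    field_simp
    ring
end

section
/- Under the stated hypotheses, for every x ∈ ℝ one has ∫₀^x W_p(x − z) H(z) dz = ∫₀^x e^{φ(x − z)} W_{p+q}(z) dz. (This is the convolution identity established at the beginning of Appendix A of the paper.) -/
open MeasureTheory Set Real Filter intervalIntegral Polynomial
open scoped Topology

namespace ConvIdentAux

lemma exp_integrableOn (a : ℝ) {b : ℝ} (hb : 0 < b) :
    IntegrableOn (fun x : ℝ => Real.exp (-(b * x))) (Ioi a) := by
  simpa [neg_mul] using exp_neg_integrableOn_Ioi a hb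

lemma exp_integral {b : ℝ} (hb : 0 < b) :
    ∫ x in Ioi (0:ℝ), Real.exp (-(b * x)) = 1 / b := by
  have h := integral_comp_mul_left_Ioi (fun x => Real.exp (-x)) 0 hb
  simp only [mul_zero, integral_exp_neg_Ioi_zero, smul_eq_mul, mul_one] at h
  simpa [one_div] using h

lemma W_le {W : ℝ → ℝ} (h0 : ∀ x, x < 0 → W x = 0) (hnn : ∀ x, 0 ≤ x → 0 ≤ W x)
    (hm : MonotoneOn W (Ici 0)) {z x : ℝ} (hzx : z ≤ x) (hx : 0 ≤ x) : W z ≤ W x := by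
  rcases lt_or_ge z 0 with h | h
  · rw [h0 z h]; exact hnn x hx
  · exact hm h hx hzx

lemma W_meas {W : ℝ → ℝ} (hc : ContinuousOn W (Ici 0)) (h0 : ∀ x, x < 0 → W x = 0) :
    AEStronglyMeasurable W (volume : Measure ℝ) := by
  have hW : W = Set.indicator (Ici 0) W := by
    funext x
    by_cases hx : x ∈ Ici (0:ℝ)
    · simp [Set.indicator_of_mem hx]
    · rw [Set.indicator_of_notMem hx, h0 x (by simpa using hx)]
  rw [hW]
  exact (aestronglyMeasurable_indicator_iff measurableSet_Ici).mpr
    (hc.aestronglyMeasurable measurableSet_Ici)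

lemma intervalIntegrable_of_bdd {f : ℝ → ℝ} (hm : AEStronglyMeasurable f volume) {M a b : ℝ}
    (hM : ∀ z, z ∈ Set.uIcc a b → |f z| ≤ M) : IntervalIntegrable f volume a b := by
  rw [intervalIntegrable_iff]
  have hfin : (volume : Measure ℝ) (Set.uIoc a b) ≠ ⊤ := by
    exact (measure_Ioc_lt_top (a := min a b) (b := max a b)).ne
  refine Measure.integrableOn_of_bounded (M := M) hfin hm ?_
  filter_upwards [ae_restrict_mem measurableSet_uIoc] with z hz
  exact hM z (Set.Ioc_subset_Icc_self hz)

lemma W_growth {W : ℝ → ℝ} (h0 : ∀ x, x < 0 → W x = 0) (hnn : ∀ x, 0 ≤ x → 0 ≤ W x)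
    (hm : MonotoneOn W (Ici 0)) {m : ℝ}
    (hint : IntegrableOn (fun x => Real.exp (-(m * x)) * W x) (Ioi 0)) :
    ∃ C : ℝ, 0 ≤ C ∧ ∀ x, 0 ≤ x → W x ≤ C * Real.exp (m * x) := by
  set I := ∫ x in Ioi (0:ℝ), Real.exp (-(m * x)) * W x with hI
  have hInn : 0 ≤ I := setIntegral_nonneg measurableSet_Ioi
    (fun t ht => mul_nonneg (Real.exp_pos _).le (hnn t (le_of_lt ht)))
  refine ⟨Real.exp |m| * I, mul_nonneg (Real.exp_pos _).le hInn, fun x hx => ?_⟩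
  have hsub : Ioc x (x + 1) ⊆ Ioi 0 := fun t ht => lt_of_le_of_lt hx ht.1
  have hint' : IntegrableOn (fun t => Real.exp (-(m * t)) * W t) (Ioc x (x + 1)) :=
    hint.mono_set hsub
  have h1 : (Real.exp (-(m * x)) * Real.exp (-|m|) * W x) * (volume (Ioc x (x + 1))).toReal
      ≤ ∫ t in Ioc x (x + 1), Real.exp (-(m * t)) * W t := by
    refine setIntegral_ge_of_const_le_real measurableSet_Ioc measure_Ioc_lt_top.ne
      (fun t ht => ?_) hint'
    have hWt : W x ≤ W t := hm hx (le_trans hx ht.1.le) ht.1.le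
    have hexp : Real.exp (-(m * x)) * Real.exp (-|m|) ≤ Real.exp (-(m * t)) := by
      rw [← Real.exp_add]
      apply Real.exp_le_exp.mpr
      have h2 : m * (t - x) ≤ |m| := by
        calc m * (t - x) ≤ |m * (t - x)| := le_abs_self _
          _ = |m| * |t - x| := abs_mul _ _
          _ ≤ |m| * 1 := by
              apply mul_le_mul_of_nonneg_left _ (abs_nonneg m)
              rw [abs_of_nonneg (by linarith [ht.1] : (0:ℝ) ≤ t - x)]
              linarith [ht.2]
          _ = |m| := mul_one _
      linarith
    exact mul_le_mul hexp hWt (hnn x hx) (Real.exp_pos _).le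
  have h2 : ∫ t in Ioc x (x + 1), Real.exp (-(m * t)) * W t ≤ I := by
    refine setIntegral_mono_set hint ?_ (HasSubset.Subset.eventuallyLE hsub)
    filter_upwards [ae_restrict_mem measurableSet_Ioi] with t ht
    exact mul_nonneg (Real.exp_pos _).le (hnn t (le_of_lt ht))
  have hvol : ((volume : Measure ℝ) (Ioc x (x + 1))).toReal = 1 := by
    rw [Real.volume_Ioc]
    norm_num
  rw [hvol, mul_one] at h1
  have h3 : Real.exp (-(m * x)) * Real.exp (-|m|) * W x ≤ I := le_trans h1 h2
  have ha : (0:ℝ) < Real.exp (-(m * x)) * Real.exp (-|m|) :=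
    mul_pos (Real.exp_pos _) (Real.exp_pos _)
  rw [mul_comm (Real.exp (-(m * x))) _, mul_assoc] at h3
  have h4 : W x * Real.exp (-(m * x)) ≤ Real.exp |m| * I := by
    have := mul_le_mul_of_nonneg_left h3 (Real.exp_pos |m|).le
    rw [← mul_assoc, ← Real.exp_add, add_neg_cancel, Real.exp_zero, one_mul] at this
    linarith [this, mul_comm (Real.exp (-(m * x))) (W x)]
  calc W x = (W x * Real.exp (-(m * x))) * Real.exp (m * x) := by
        rw [mul_assoc, ← Real.exp_add, neg_add_cancel, Real.exp_zero, mul_one]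
    _ ≤ (Real.exp |m| * I) * Real.exp (m * x) :=
        mul_le_mul_of_nonneg_right h4 (Real.exp_pos _).le

lemma conv_lap {u v : ℝ → ℝ} {l : ℝ}
    (hu : IntegrableOn (fun t => Real.exp (-(l * t)) * u t) (Ioi 0))
    (hv : IntegrableOn (fun t => Real.exp (-(l * t)) * v t) (Ioi 0)) :
    IntegrableOn (fun x => Real.exp (-(l * x)) * ∫ t in (0:ℝ)..x, u t * v (x - t)) (Ioi 0) ∧
      ∫ x in Ioi (0:ℝ), Real.exp (-(l * x)) * ∫ t in (0:ℝ)..x, u t * v (x - t)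
        = (∫ t in Ioi (0:ℝ), Real.exp (-(l * t)) * u t) *
          (∫ t in Ioi (0:ℝ), Real.exp (-(l * t)) * v t) := by
  set f := fun t => Real.exp (-(l * t)) * u t with hf
  set g := fun t => Real.exp (-(l * t)) * v t with hg
  have key : ∀ x : ℝ, (∫ t in (0:ℝ)..x, (ContinuousLinearMap.mul ℝ ℝ) (f t) (g (x - t)))
      = Real.exp (-(l * x)) * ∫ t in (0:ℝ)..x, u t * v (x - t) := by
    intro x
    rw [← intervalIntegral.integral_const_mul]
    apply intervalIntegral.integral_congr
    intro t _
    simp only [ContinuousLinearMap.mul_apply', hf, hg]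
    have h2 : Real.exp (-(l * t)) * Real.exp (-(l * (x - t))) = Real.exp (-(l * x)) := by
      rw [← Real.exp_add]; congr 1; ring
    linear_combination (u t * v (x - t)) * h2
  have heq : (fun x => Real.exp (-(l * x)) * ∫ t in (0:ℝ)..x, u t * v (x - t))
      = fun x => ∫ t in (0:ℝ)..x, (ContinuousLinearMap.mul ℝ ℝ) (f t) (g (x - t)) :=
    funext fun x => (key x).symm
  constructor
  · have hi := integrable_posConvolution hu hv (ContinuousLinearMap.mul ℝ ℝ)
    rw [posConvolution] at hi
    rw [heq]
    exact (integrable_indicator_iff measurableSet_Ioi).mp hi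
  · calc ∫ x in Ioi (0:ℝ), Real.exp (-(l * x)) * ∫ t in (0:ℝ)..x, u t * v (x - t)
        = ∫ x in Ioi (0:ℝ), ∫ t in (0:ℝ)..x, (ContinuousLinearMap.mul ℝ ℝ) (f t) (g (x - t)) := by
          rw [heq]
      _ = (ContinuousLinearMap.mul ℝ ℝ) (∫ x in Ioi (0:ℝ), f x) (∫ x in Ioi (0:ℝ), g x) :=
          integral_posConvolution hu hv (ContinuousLinearMap.mul ℝ ℝ)
      _ = _ := by simp [ContinuousLinearMap.mul_apply']

lemma poly_approx {g : ℝ → ℝ} (hg : ContinuousOn g (Set.Icc (0:ℝ) 1)) {ε : ℝ} (hε : 0 < ε) :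
    ∃ P : Polynomial ℝ, ∀ t ∈ Set.Icc (0:ℝ) 1, |g t - P.eval t| ≤ ε := by
  let G : C(Set.Icc (0:ℝ) 1, ℝ) := ⟨fun t => g t, continuousOn_iff_continuous_restrict.mp hg⟩
  obtain ⟨P, hP⟩ := exists_polynomial_near_continuousMap 0 1 G ε hε
  refine ⟨P, fun t ht => ?_⟩
  have := (P.toContinuousMapOn (Set.Icc (0:ℝ) 1) - G).norm_coe_le_norm ⟨t, ht⟩
  simp only [ContinuousMap.sub_apply, Polynomial.toContinuousMapOn_apply,
    Polynomial.toContinuousMap_apply, ContinuousMap.coe_mk, G] at this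
  rw [abs_sub_comm]
  calc |P.eval t - g t| ≤ ‖P.toContinuousMapOn (Set.Icc (0:ℝ) 1) - G‖ := by
        exact this
    _ ≤ ε := hP.le

lemma laplace_uniq {f : ℝ → ℝ} {A : ℝ}
    (hc : ContinuousOn f (Ici 0))
    (hlap : ∀ l, A < l → ∫ x in Ioi (0:ℝ), Real.exp (-(l * x)) * f x = 0)
    (hdecay : ∀ l, A < l → Tendsto (fun x => Real.exp (-(l * x)) * f x) atTop (𝓝 0)) :
    ∀ x, 0 ≤ x → f x = 0 := by
  set c := max A 0 + 1 with hcdef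
  have hcA : A < c := by have := le_max_left A 0; simp only [hcdef]; linarith
  have hc0 : 0 < c := by have := le_max_right A 0; simp only [hcdef]; linarith
  set h : ℝ → ℝ :=
    fun t => if 0 < t then Real.exp (-(c * (-Real.log t))) * f (-Real.log t) else 0 with hhdef
  have hmap : MapsTo (fun s : ℝ => -Real.log s) (Icc 0 1) (Ici 0) := by
    intro s hs
    simp only [mem_Ici]
    have := Real.log_nonpos hs.1 hs.2
    linarith
  -- continuity of h on [0,1]
  have hcont : ContinuousOn h (Icc 0 1) := by
    intro t ht
    rcases eq_or_lt_of_le ht.1 with h0 | h0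
    · -- t = 0
      have h0' : t = 0 := h0.symm
      subst h0'
      have hval : h 0 = 0 := by simp [hhdef]
      unfold ContinuousWithinAt
      rw [hval]
      have hsub : Icc (0:ℝ) 1 ⊆ Ioc 0 1 ∪ {0} := by
        intro s hs
        rcases eq_or_lt_of_le hs.1 with h1 | h1
        · exact Or.inr (by simp [h1.symm])
        · exact Or.inl ⟨h1, hs.2⟩
      have hkey : Tendsto h (𝓝[Ioc (0:ℝ) 1] 0) (𝓝 0) := by
        have hlog : Tendsto (fun s : ℝ => -Real.log s) (𝓝[Ioc (0:ℝ) 1] 0) atTop := by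
          have h1 : Tendsto Real.log (𝓝[Ioc (0:ℝ) 1] 0) atBot :=
            Real.tendsto_log_nhdsGT_zero.mono_left
              (nhdsWithin_mono 0 (fun s hs => hs.1))
          exact tendsto_neg_atBot_atTop.comp h1
        have h2 := (hdecay c hcA).comp hlog
        apply h2.congr'
        filter_upwards [self_mem_nhdsWithin] with s hs
        simp only [Function.comp_apply, hhdef, if_pos hs.1]
      have hpure : Tendsto h (𝓝[{(0:ℝ)}] 0) (𝓝 0) := by
        rw [nhdsWithin_singleton]
        simpa [hval] using tendsto_pure_nhds h 0
      have := hkey.sup hpure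
      rw [← nhdsWithin_union] at this
      exact this.mono_left (nhdsWithin_mono 0 hsub)
    · -- 0 < t
      have hg : ContinuousWithinAt (fun s : ℝ => -Real.log s) (Icc 0 1) t :=
        ((Real.continuousAt_log h0.ne').neg).continuousWithinAt
      have hf' : ContinuousWithinAt (fun s : ℝ => f (-Real.log s)) (Icc 0 1) t :=
        ContinuousWithinAt.comp (hc _ (hmap ht)) hg hmap
      have hexp : ContinuousWithinAt (fun s : ℝ => Real.exp (-(c * (-Real.log s))))
          (Icc 0 1) t :=
        Real.continuous_exp.continuousAt.comp_continuousWithinAt ((hg.const_smul c).neg)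
      have h1 := hexp.mul hf'
      apply h1.congr_of_eventuallyEq
      · filter_upwards [mem_nhdsWithin_of_mem_nhds (Ioi_mem_nhds h0)] with s hs
        simp only [hhdef, if_pos (mem_Ioi.mp hs), Pi.mul_apply]
      · simp only [hhdef, if_pos h0, Pi.mul_apply]
  -- moments vanish
  have hmom : ∀ n : ℕ, ∫ t in Ioo (0:ℝ) 1, t ^ n * h t = 0 := by
    intro n
    have hl : A < c + 1 + (n : ℝ) := by
      have : (0:ℝ) ≤ n := Nat.cast_nonneg n
      linarith
    have himg : (fun t : ℝ => -Real.log t) '' Ioo 0 1 = Ioi 0 := by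
      ext y
      constructor
      · rintro ⟨t, ht, rfl⟩
        exact neg_pos.mpr (Real.log_neg ht.1 ht.2)
      · intro hy
        refine ⟨Real.exp (-y), ⟨Real.exp_pos _, Real.exp_lt_one_iff.mpr (by linarith [mem_Ioi.mp hy])⟩, ?_⟩
        simp [Real.log_exp]
    have hderiv : ∀ t ∈ Ioo (0:ℝ) 1,
        HasDerivWithinAt (fun s : ℝ => -Real.log s) (-t⁻¹) (Ioo 0 1) t :=
      fun t ht => ((Real.hasDerivAt_log ht.1.ne').neg).hasDerivWithinAt
    have hinj : InjOn (fun s : ℝ => -Real.log s) (Ioo 0 1) := by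
      intro a ha b hb hab
      have h1 : Real.log a = Real.log b := by
        have := neg_inj.mp hab
        exact this
      exact Real.log_injOn_pos (mem_Ioi.mpr ha.1) (mem_Ioi.mpr hb.1) h1
    have hcov := integral_image_eq_integral_abs_deriv_smul measurableSet_Ioo hderiv hinj
      (fun x => Real.exp (-((c + 1 + (n:ℝ)) * x)) * f x)
    rw [himg, hlap _ hl] at hcov
    refine Eq.trans (setIntegral_congr_fun measurableSet_Ioo (fun t ht => ?_)) hcov.symm
    have ht0 : (0:ℝ) < t := ht.1
    have h1 : Real.exp (-((c + 1 + (n:ℝ)) * (-Real.log t)))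
        = Real.exp (-(c * (-Real.log t))) * t * t ^ n := by
      rw [show -((c + 1 + (n:ℝ)) * (-Real.log t))
          = (-(c * (-Real.log t)) + Real.log t) + (n:ℝ) * Real.log t by ring,
        Real.exp_add, Real.exp_add, Real.exp_nat_mul, Real.exp_log ht0]
    simp only [smul_eq_mul, abs_neg, abs_inv, abs_of_pos ht0, h1, hhdef, if_pos ht0]
    field_simp
  -- polynomial moments vanish
  have hint_h : IntegrableOn h (Ioo 0 1) :=
    (hcont.integrableOn_Icc).mono_set Ioo_subset_Icc_self
  have hpoly : ∀ P : Polynomial ℝ, ∫ t in Ioo (0:ℝ) 1, h t * P.eval t = 0 := by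
    intro P
    have heq : ∀ t : ℝ, h t * P.eval t
        = ∑ i ∈ Finset.range (P.natDegree + 1), P.coeff i * (t ^ i * h t) := by
      intro t
      rw [Polynomial.eval_eq_sum_range, Finset.mul_sum]
      exact Finset.sum_congr rfl fun i _ => by ring
    have hintterm : ∀ i : ℕ, IntegrableOn (fun t => t ^ i * h t) (Ioo 0 1) := fun i =>
      (((continuous_pow i).continuousOn).mul hcont).integrableOn_Icc.mono_set Ioo_subset_Icc_self
    calc ∫ t in Ioo (0:ℝ) 1, h t * P.eval t
        = ∫ t in Ioo (0:ℝ) 1, ∑ i ∈ Finset.range (P.natDegree + 1),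
            P.coeff i * (t ^ i * h t) :=
          setIntegral_congr_fun measurableSet_Ioo (fun t _ => heq t)
      _ = ∑ i ∈ Finset.range (P.natDegree + 1),
            ∫ t in Ioo (0:ℝ) 1, P.coeff i * (t ^ i * h t) :=
          integral_finset_sum _ (fun i _ => ((hintterm i).const_mul (P.coeff i)))
      _ = 0 := by
          refine Finset.sum_eq_zero fun i _ => ?_
          rw [MeasureTheory.integral_const_mul, hmom i, mul_zero]
  -- the square integral vanishes
  have habs_nn : 0 ≤ ∫ t in Ioo (0:ℝ) 1, |h t| :=
    setIntegral_nonneg measurableSet_Ioo (fun t _ => abs_nonneg _)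
  set M := (∫ t in Ioo (0:ℝ) 1, |h t|) + 1 with hMdef
  have hM : 0 < M := by simp only [hMdef]; linarith
  have habs_int : IntegrableOn (fun t => |h t|) (Ioo 0 1) := hint_h.abs
  have hsq_int : IntegrableOn (fun t => h t * h t) (Ioo 0 1) :=
    (hcont.mul hcont).integrableOn_Icc.mono_set Ioo_subset_Icc_self
  have hsq_le : ∀ ε : ℝ, 0 < ε → ∫ t in Ioo (0:ℝ) 1, h t * h t ≤ ε * M := by
    intro ε hε
    obtain ⟨P, hP⟩ := poly_approx hcont hε
    have hP_int : IntegrableOn (fun t => h t * P.eval t) (Ioo 0 1) :=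
      (hcont.mul (P.continuous_aeval.continuousOn)).integrableOn_Icc.mono_set Ioo_subset_Icc_self
    have key : ∫ t in Ioo (0:ℝ) 1, h t * h t
        = ∫ t in Ioo (0:ℝ) 1, h t * (h t - P.eval t) := by
      rw [show (fun t => h t * (h t - P.eval t))
          = fun t => h t * h t - h t * P.eval t from funext fun t => by ring]
      rw [integral_sub hsq_int hP_int, hpoly P, sub_zero]
    have habsP_int : IntegrableOn (fun t => |h t| * |h t - P.eval t|) (Ioo 0 1) :=
      (hcont.abs.mul ((hcont.sub (P.continuous_aeval.continuousOn)).abs)).integrableOn_Icc.mono_set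
        Ioo_subset_Icc_self
    calc ∫ t in Ioo (0:ℝ) 1, h t * h t
        = ∫ t in Ioo (0:ℝ) 1, h t * (h t - P.eval t) := key
      _ ≤ ∫ t in Ioo (0:ℝ) 1, |h t| * |h t - P.eval t| := by
          refine setIntegral_mono_on
            ((hcont.mul (hcont.sub P.continuous_aeval.continuousOn)).integrableOn_Icc.mono_set
              Ioo_subset_Icc_self)
            habsP_int measurableSet_Ioo (fun t _ => ?_)
          calc h t * (h t - P.eval t) ≤ |h t * (h t - P.eval t)| := le_abs_self _
            _ = |h t| * |h t - P.eval t| := abs_mul _ _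
      _ ≤ ∫ t in Ioo (0:ℝ) 1, |h t| * ε := by
          refine setIntegral_mono_on habsP_int (habs_int.mul_const ε) measurableSet_Ioo
            (fun t ht => ?_)
          exact mul_le_mul_of_nonneg_left (hP t (Ioo_subset_Icc_self ht)) (abs_nonneg _)
      _ = (∫ t in Ioo (0:ℝ) 1, |h t|) * ε := by rw [MeasureTheory.integral_mul_const]
      _ ≤ ε * M := by
          rw [mul_comm]
          refine mul_le_mul_of_nonneg_left ?_ hε.le
          simp only [hMdef]; linarith
  have hsq0 : ∫ t in Ioo (0:ℝ) 1, h t * h t = 0 := by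
    have hnn : 0 ≤ ∫ t in Ioo (0:ℝ) 1, h t * h t :=
      setIntegral_nonneg measurableSet_Ioo fun t _ => mul_self_nonneg _
    by_contra hne
    have hpos : 0 < ∫ t in Ioo (0:ℝ) 1, h t * h t := lt_of_le_of_ne hnn (Ne.symm hne)
    have hle := hsq_le ((∫ t in Ioo (0:ℝ) 1, h t * h t) / (2 * M)) (by positivity)
    have heqM : ((∫ t in Ioo (0:ℝ) 1, h t * h t) / (2 * M)) * M
        = (∫ t in Ioo (0:ℝ) 1, h t * h t) / 2 := by
      field_simp
    rw [heqM] at hle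
    linarith
  -- h vanishes on [0,1]
  have hzero : ∀ t ∈ Icc (0:ℝ) 1, h t = 0 := by
    by_contra hcon
    push_neg at hcon
    obtain ⟨t₀, ht₀, hne⟩ := hcon
    set c0 := |h t₀| / 2 with hc0def
    have hc0 : 0 < c0 := by
      simp only [hc0def]
      have := abs_pos.mpr hne
      linarith
    obtain ⟨δ, hδ, hball⟩ := Metric.continuousWithinAt_iff.mp (hcont t₀ ht₀) c0 hc0
    set d := min (δ / 2) 1 with hddef
    have hd0 : 0 < d := by simp only [hddef]; positivity
    have hd1 : d ≤ 1 := min_le_right _ _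
    have hdδ : d < δ := lt_of_le_of_lt (min_le_left _ _) (by linarith)
    set a := max 0 (t₀ - d) with hadef
    set b := min 1 (t₀ + d) with hbdef
    have hab : a + d ≤ b := by
      rcases le_or_gt (t₀ + d) 1 with h1 | h1
      · have hb : b = t₀ + d := min_eq_right h1
        have ha : a ≤ t₀ := max_le (ht₀.1) (by linarith)
        simp only [hb]; linarith
      · have hb : b = 1 := min_eq_left h1.le
        have ha : a ≤ 1 - d := max_le (by linarith) (by linarith [ht₀.2])
        simp only [hb]; linarith
    have hsub2 : Ioo a b ⊆ Ioo 0 1 := fun x hx =>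
      ⟨lt_of_le_of_lt (le_max_left 0 (t₀ - d)) hx.1,
       lt_of_lt_of_le hx.2 (min_le_left 1 (t₀ + d))⟩
    have hlow : ∀ x ∈ Ioo a b, c0 * c0 ≤ h x * h x := by
      intro x hx
      have hx1 : x ∈ Icc (0:ℝ) 1 := Ioo_subset_Icc_self (hsub2 hx)
      have hxd : dist x t₀ < δ := by
        rw [Real.dist_eq, abs_lt]
        constructor
        · have := hx.1
          have ha2 : t₀ - d ≤ a := le_max_right 0 (t₀ - d)
          linarith
        · have := hx.2
          have hb2 : b ≤ t₀ + d := min_le_right 1 (t₀ + d)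
          linarith
      have hdist := hball hx1 hxd
      rw [Real.dist_eq] at hdist
      have habs : c0 ≤ |h x| := by
        have h1 : |h t₀| ≤ |h x| + |h x - h t₀| := by
          calc |h t₀| = |h x - (h x - h t₀)| := by ring_nf
            _ ≤ |h x| + |h x - h t₀| := abs_sub _ _
        simp only [hc0def]
        linarith
      calc c0 * c0 ≤ |h x| * |h x| := mul_le_mul habs habs hc0.le (abs_nonneg _)
        _ = h x * h x := abs_mul_abs_self _
    have hlow_int : IntegrableOn (fun x => h x * h x) (Ioo a b) := hsq_int.mono_set hsub2
    have h1 : c0 * c0 * ((volume : Measure ℝ) (Ioo a b)).toReal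
        ≤ ∫ x in Ioo a b, h x * h x :=
      setIntegral_ge_of_const_le_real measurableSet_Ioo measure_Ioo_lt_top.ne hlow hlow_int
    have h2 : ∫ x in Ioo a b, h x * h x ≤ ∫ x in Ioo (0:ℝ) 1, h x * h x := by
      refine setIntegral_mono_set hsq_int ?_ (HasSubset.Subset.eventuallyLE hsub2)
      filter_upwards with x using mul_self_nonneg _
    have hvol : ((volume : Measure ℝ) (Ioo a b)).toReal = b - a := by
      rw [Real.volume_Ioo, ENNReal.toReal_ofReal (by linarith)]
    rw [hvol] at h1
    nlinarith [hsq0, mul_pos hc0 hc0]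
  -- conclude
  intro x hx
  have hmem : Real.exp (-x) ∈ Icc (0:ℝ) 1 := by
    constructor
    · exact (Real.exp_pos _).le
    · rw [show (1:ℝ) = Real.exp 0 from (Real.exp_zero).symm]
      exact Real.exp_le_exp.mpr (by linarith)
  have hz := hzero _ hmem
  simp only [hhdef, if_pos (Real.exp_pos (-x)), Real.log_exp, neg_neg] at hz
  rcases mul_eq_zero.mp hz with h1 | h1
  · exact absurd h1 (Real.exp_pos _).ne'
  · exact h1

end ConvIdentAux
open ConvIdentAux in
/-- The convolution identity from the beginning of Appendix A of the paper:
∫₀ˣ W^{(p)}(x−z) 𝓗^{(p,q)}(z) dz = ∫₀ˣ e^{Φ(p)(x−z)} W^{(p+q)}(z) dz. -/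
theorem convolution_identity
    (p q φ φ' : ℝ) (hp : 0 ≤ p) (hq : 0 ≤ q) (hφφ' : φ ≤ φ')
    (ψ Wp Wpq : ℝ → ℝ)
    (hψ : ∀ l, φ' < l → p + q < ψ l)
    (hWp_cont : ContinuousOn Wp (Set.Ici 0))
    (hWp_nonneg : ∀ x, 0 ≤ x → 0 ≤ Wp x)
    (hWp_mono : MonotoneOn Wp (Set.Ici 0))
    (hWp_neg : ∀ x, x < 0 → Wp x = 0)
    (hWpq_cont : ContinuousOn Wpq (Set.Ici 0))
    (hWpq_nonneg : ∀ x, 0 ≤ x → 0 ≤ Wpq x)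
    (hWpq_mono : MonotoneOn Wpq (Set.Ici 0))
    (hWpq_neg : ∀ x, x < 0 → Wpq x = 0)
    (hWp_int : ∀ l, φ' < l →
      MeasureTheory.IntegrableOn (fun x => Real.exp (-(l * x)) * Wp x) (Set.Ioi 0))
    (hWp_lap : ∀ l, φ' < l →
      ∫ x in Set.Ioi (0:ℝ), Real.exp (-(l * x)) * Wp x = 1 / (ψ l - p))
    (hWpq_int : ∀ l, φ' < l →
      MeasureTheory.IntegrableOn (fun x => Real.exp (-(l * x)) * Wpq x) (Set.Ioi 0))
    (hWpq_lap : ∀ l, φ' < l →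
      ∫ x in Set.Ioi (0:ℝ), Real.exp (-(l * x)) * Wpq x = 1 / (ψ l - (p + q)))
    (H : ℝ → ℝ)
    (hH : ∀ x : ℝ, H x
      = Real.exp (φ * x) * (1 + q * ∫ z in (0:ℝ)..x, Real.exp (-(φ * z)) * Wpq z)) :
    ∀ x : ℝ, ∫ z in (0:ℝ)..x, Wp (x - z) * H z
      = ∫ z in (0:ℝ)..x, Real.exp (φ * (x - z)) * Wpq z := by
  have hWp_meas : AEStronglyMeasurable Wp volume := W_meas hWp_cont hWp_neg
  have hWpq_meas : AEStronglyMeasurable Wpq volume := W_meas hWpq_cont hWpq_neg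
  have hWp_nn : ∀ y : ℝ, 0 ≤ Wp y := fun y => by
    rcases lt_or_ge y 0 with h | h
    · rw [hWp_neg y h]
    · exact hWp_nonneg y h
  have hWpq_nn : ∀ y : ℝ, 0 ≤ Wpq y := fun y => by
    rcases lt_or_ge y 0 with h | h
    · rw [hWpq_neg y h]
    · exact hWpq_nonneg y h
  set G : ℝ → ℝ := fun y => ∫ u in (0:ℝ)..y, Wpq u * Real.exp (φ * (y - u)) with hGdef
  set C : ℝ → ℝ := fun y => ∫ z in (0:ℝ)..y, H z * Wp (y - z) with hCdef
  -- main identity on the nonnegative axis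
  have main : ∀ y : ℝ, 0 ≤ y → C y - G y = 0 := by
    set m : ℝ := max (φ' + 1) 0 with hmdef
    have hm0 : 0 ≤ m := le_max_right _ _
    have hmφ' : φ' < m := lt_of_lt_of_le (by linarith) (le_max_left _ _)
    obtain ⟨Cp, hCp0, hCp⟩ := W_growth hWp_neg hWp_nonneg hWp_mono (hWp_int m hmφ')
    obtain ⟨Cq, hCq0, hCq⟩ := W_growth hWpq_neg hWpq_nonneg hWpq_mono (hWpq_int m hmφ')
    -- alternate form of G
    have hGz : ∀ y : ℝ, G y
        = Real.exp (φ * y) * ∫ u in (0:ℝ)..y, Real.exp (-(φ * u)) * Wpq u := by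
      intro y
      rw [← intervalIntegral.integral_const_mul]
      apply intervalIntegral.integral_congr
      intro u _
      have he : Real.exp (φ * y) * Real.exp (-(φ * u)) = Real.exp (φ * (y - u)) := by
        rw [← Real.exp_add]; congr 1; ring
      simp only
      linear_combination Wpq u * he.symm
    have hHG : ∀ z : ℝ, H z = Real.exp (φ * z) + q * G z := by
      intro z; rw [hH z, hGz z]; ring
    -- continuity of G, H
    have hexpφ : Continuous fun y : ℝ => Real.exp (φ * y) :=
      Real.continuous_exp.comp (continuous_const.mul continuous_id)
    have hWpq_ii : ∀ a b : ℝ,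
        IntervalIntegrable (fun u => Real.exp (-(φ * u)) * Wpq u) volume a b := by
      intro a b
      have hmeas : AEStronglyMeasurable (fun u => Real.exp (-(φ * u)) * Wpq u) volume :=
        ((Real.continuous_exp.comp (continuous_const.mul continuous_id).neg).aestronglyMeasurable).mul
          hWpq_meas
      apply intervalIntegrable_of_bdd hmeas
        (M := Real.exp (|φ| * (|a| + |b|)) * Wpq (|a| + |b|))
      intro z hz
      have hz1 : |z| ≤ |a| + |b| := by
        rw [abs_le]
        rcases Set.mem_uIcc.mp hz with ⟨h1, h2⟩ | ⟨h1, h2⟩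
        · constructor
          · have := neg_abs_le a; have := abs_nonneg b; linarith
          · have := le_abs_self b; have := abs_nonneg a; linarith
        · constructor
          · have := neg_abs_le b; have := abs_nonneg a; linarith
          · have := le_abs_self a; have := abs_nonneg b; linarith
      rw [abs_mul]
      have hab0 : (0:ℝ) ≤ |a| + |b| := by positivity
      apply mul_le_mul
      · rw [Real.abs_exp]
        apply Real.exp_le_exp.mpr
        calc -(φ * z) ≤ |φ * z| := neg_le_abs _
          _ = |φ| * |z| := abs_mul _ _
          _ ≤ |φ| * (|a| + |b|) := mul_le_mul_of_nonneg_left hz1 (abs_nonneg φ)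
      · rw [abs_of_nonneg (hWpq_nn z)]
        exact W_le hWpq_neg hWpq_nonneg hWpq_mono (by linarith [le_abs_self z]) hab0
      · exact abs_nonneg _
      · exact (Real.exp_pos _).le
    have hGcont : Continuous G := by
      rw [show G = fun y => Real.exp (φ * y) * ∫ u in (0:ℝ)..y, Real.exp (-(φ * u)) * Wpq u
        from funext hGz]
      exact hexpφ.mul (intervalIntegral.continuous_primitive hWpq_ii 0)
    have hHcont : Continuous H := by
      rw [show H = fun z => Real.exp (φ * z) + q * G z from funext hHG]
      exact hexpφ.add (continuous_const.mul hGcont)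
    have hWp_ca : ∀ y : ℝ, y ≠ 0 → ContinuousAt Wp y := by
      intro y hy
      rcases lt_or_gt_of_ne hy with h | h
      · exact Filter.EventuallyEq.continuousAt
          (eventually_of_mem (Iio_mem_nhds h) (fun z hz => hWp_neg z hz))
      · exact hWp_cont.continuousAt (Ici_mem_nhds h)
    -- continuity of C on [0,∞)
    have hCcont : ContinuousOn C (Ici 0) := by
      intro x₀ hx₀
      have hx₀0 : (0:ℝ) ≤ x₀ := hx₀
      set M : ℝ := x₀ + 1 with hMdef
      have hM0 : (0:ℝ) ≤ M := by simp only [hMdef]; linarith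
      obtain ⟨B, hB⟩ := (isCompact_Icc (a := (0:ℝ)) (b := M)).exists_bound_of_continuousOn
        hHcont.continuousOn
      have hB0 : 0 ≤ B := le_trans (norm_nonneg _) (hB 0 ⟨le_refl 0, hM0⟩)
      have hmeasz : ∀ y : ℝ, AEStronglyMeasurable (fun z => H z * Wp (y - z)) volume := by
        intro y
        have hmp : MeasurePreserving (fun t : ℝ => y - t) volume volume := by
          have h := (measurePreserving_add_left (volume : Measure ℝ) y).comp
            (Measure.measurePreserving_neg (volume : Measure ℝ))
          simpa [Function.comp_def, sub_eq_add_neg] using h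
        exact hHcont.aestronglyMeasurable.mul
          (hWp_meas.comp_quasiMeasurePreserving hmp.quasiMeasurePreserving)
      have hii : ∀ y a b : ℝ, y ∈ Icc (0:ℝ) M → a ∈ Icc (0:ℝ) M → b ∈ Icc (0:ℝ) M →
          IntervalIntegrable (fun z => H z * Wp (y - z)) volume a b := by
        intro y a b hy ha hb
        apply intervalIntegrable_of_bdd (hmeasz y) (M := B * Wp M)
        intro z hz
        have hz' : z ∈ Icc (0:ℝ) M := by
          have hsub : Set.uIcc a b ⊆ Set.uIcc (0:ℝ) M :=
            Set.uIcc_subset_uIcc (by rwa [Set.uIcc_of_le hM0]) (by rwa [Set.uIcc_of_le hM0])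
          have := hsub hz
          rwa [Set.uIcc_of_le hM0] at this
        rw [abs_mul, abs_of_nonneg (hWp_nn _)]
        exact mul_le_mul (by simpa [Real.norm_eq_abs] using hB z hz')
          (W_le hWp_neg hWp_nonneg hWp_mono (by linarith [hz'.1, hy.2]) hM0)
          (hWp_nn _) hB0
      have key : ContinuousWithinAt (fun y => ∫ z in (0:ℝ)..M, H z * Wp (y - z)) (Ici 0) x₀ := by
        apply intervalIntegral.continuousWithinAt_of_dominated_interval
          (bound := fun _ => B * Wp M)
        · filter_upwards with y using (hmeasz y).restrict
        · have hev : ∀ᶠ y in 𝓝[Ici 0] x₀, y ∈ Iio M :=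
            mem_nhdsWithin_of_mem_nhds (Iio_mem_nhds (by simp only [hMdef]; linarith))
          filter_upwards [hev] with y hy
          filter_upwards with z
          intro hzI
          have hz' : z ∈ Icc (0:ℝ) M := by
            rw [Set.uIoc_of_le hM0] at hzI
            exact Ioc_subset_Icc_self hzI
          rw [Real.norm_eq_abs, abs_mul, abs_of_nonneg (hWp_nn _)]
          exact mul_le_mul (by simpa [Real.norm_eq_abs] using hB z hz')
            (W_le hWp_neg hWp_nonneg hWp_mono
              (by linarith [hz'.1, mem_Iio.mp hy]) hM0)
            (hWp_nn _) hB0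
        · exact intervalIntegrable_const
        · have hae : ∀ᵐ z : ℝ, z ≠ x₀ := by
            rw [ae_iff]
            have hset : {z : ℝ | ¬ z ≠ x₀} = {x₀} := by ext z; simp
            rw [hset]
            exact measure_singleton x₀
          filter_upwards [hae] with z hz _
          have hne : x₀ - z ≠ 0 := sub_ne_zero.mpr (Ne.symm hz)
          have hinner : ContinuousAt (fun x : ℝ => x - z) x₀ :=
            (continuous_sub_right z).continuousAt
          have houter : ContinuousAt (Wp ∘ fun x : ℝ => x - z) x₀ :=
            ContinuousAt.comp (f := fun x : ℝ => x - z) (hWp_ca _ hne) hinner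
          exact (continuousAt_const.mul houter).continuousWithinAt
      have heqC : ∀ y, y ∈ Icc (0:ℝ) M → C y = ∫ z in (0:ℝ)..M, H z * Wp (y - z) := by
        intro y hy
        have h1 : IntervalIntegrable (fun z => H z * Wp (y - z)) volume 0 y :=
          hii y 0 y hy ⟨le_refl 0, hM0⟩ hy
        have h2 : IntervalIntegrable (fun z => H z * Wp (y - z)) volume y M :=
          hii y y M hy hy ⟨hM0, le_refl M⟩
        have hadd := intervalIntegral.integral_add_adjacent_intervals h1 h2
        have hzero : ∫ z in y..M, H z * Wp (y - z) = 0 := by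
          rw [intervalIntegral.integral_of_le hy.2, MeasureTheory.integral_Ioc_eq_integral_Ioo]
          rw [setIntegral_congr_fun measurableSet_Ioo (g := fun _ => (0:ℝ))
            (fun z hz => by rw [hWp_neg (y - z) (by linarith [hz.1]), mul_zero])]
          simp
        simp only [hCdef]
        linarith [hadd, hzero]
      refine key.congr_of_eventuallyEq ?_ ?_
      · filter_upwards [self_mem_nhdsWithin,
          mem_nhdsWithin_of_mem_nhds (Iio_mem_nhds (show x₀ < M by simp only [hMdef]; linarith))]
          with y hy1 hy2
        exact heqC y ⟨hy1, (mem_Iio.mp hy2).le⟩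
      · exact heqC x₀ ⟨hx₀0, by simp only [hMdef]; linarith⟩
    -- growth bounds
    have hGb : ∀ y : ℝ, 0 ≤ y → |G y| ≤ Cq * Real.exp ((m + |φ|) * y) * y := by
      intro y hy
      have hb := intervalIntegral.norm_integral_le_of_norm_le_const
        (C := Cq * Real.exp ((m + |φ|) * y))
        (f := fun u => Wpq u * Real.exp (φ * (y - u))) (a := 0) (b := y) ?_
      · rw [Real.norm_eq_abs, sub_zero, abs_of_nonneg hy] at hb
        exact hb
      · intro u hu
        rw [Set.uIoc_of_le hy] at hu
        rw [Real.norm_eq_abs, abs_mul, abs_of_nonneg (hWpq_nn u), Real.abs_exp]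
        have h1 : Wpq u ≤ Cq * Real.exp (m * y) :=
          le_trans (W_le hWpq_neg hWpq_nonneg hWpq_mono hu.2 hy) (hCq y hy)
        have h2 : Real.exp (φ * (y - u)) ≤ Real.exp (|φ| * y) := by
          apply Real.exp_le_exp.mpr
          calc φ * (y - u) ≤ |φ * (y - u)| := le_abs_self _
            _ = |φ| * |y - u| := abs_mul _ _
            _ ≤ |φ| * y := by
                apply mul_le_mul_of_nonneg_left _ (abs_nonneg φ)
                rw [abs_of_nonneg (by linarith [hu.2] : (0:ℝ) ≤ y - u)]
                linarith [hu.1]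
        calc Wpq u * Real.exp (φ * (y - u))
            ≤ (Cq * Real.exp (m * y)) * Real.exp (|φ| * y) :=
              mul_le_mul h1 h2 (Real.exp_pos _).le (by positivity)
          _ = Cq * Real.exp ((m + |φ|) * y) := by
              rw [mul_assoc, ← Real.exp_add]
              congr 2
              ring
    set R : ℝ := 2 * m + |φ| + 2 with hRdef
    set K : ℝ := Cq + (1 + q * Cq) * Cp with hKdef
    have hK0 : 0 ≤ K := by
      have : 0 ≤ (1 + q * Cq) * Cp := mul_nonneg (by positivity) hCp0
      simp only [hKdef]; linarith
    have hDb : ∀ y : ℝ, 0 ≤ y → |C y - G y| ≤ K * Real.exp (R * y) := by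
      intro y hy
      have hyexp : y ≤ Real.exp y := by
        have := Real.add_one_le_exp y
        linarith
      have hG2 : |G y| ≤ Cq * Real.exp ((m + |φ| + 1) * y) := by
        calc |G y| ≤ Cq * Real.exp ((m + |φ|) * y) * y := hGb y hy
          _ ≤ Cq * Real.exp ((m + |φ|) * y) * Real.exp y := by
              apply mul_le_mul_of_nonneg_left hyexp (by positivity)
          _ = Cq * Real.exp ((m + |φ| + 1) * y) := by
              rw [mul_assoc, ← Real.exp_add]
              congr 2
              ring
      have hCb : |C y| ≤ ((1 + q * Cq) * Real.exp ((m + |φ| + 1) * y)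
          * (Cp * Real.exp (m * y))) * y := by
        have hb := intervalIntegral.norm_integral_le_of_norm_le_const
          (C := (1 + q * Cq) * Real.exp ((m + |φ| + 1) * y) * (Cp * Real.exp (m * y)))
          (f := fun z => H z * Wp (y - z)) (a := 0) (b := y) ?_
        · rw [Real.norm_eq_abs, sub_zero, abs_of_nonneg hy] at hb
          exact hb
        · intro z hz
          rw [Set.uIoc_of_le hy] at hz
          have hz0 : (0:ℝ) ≤ z := hz.1.le
          rw [Real.norm_eq_abs, abs_mul, abs_of_nonneg (hWp_nn _)]
          have hH1 : |H z| ≤ (1 + q * Cq) * Real.exp ((m + |φ| + 1) * y) := by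
            rw [hHG z]
            have ha : Real.exp (φ * z) ≤ Real.exp ((m + |φ| + 1) * y) := by
              apply Real.exp_le_exp.mpr
              have h1 : φ * z ≤ |φ| * z := mul_le_mul_of_nonneg_right (le_abs_self φ) hz0
              have h2 : |φ| * z ≤ |φ| * y := mul_le_mul_of_nonneg_left hz.2 (abs_nonneg φ)
              nlinarith [abs_nonneg φ, hm0, hy, hz.2]
            have hb2 : |G z| ≤ Cq * Real.exp ((m + |φ| + 1) * y) := by
              have hz1 : z ≤ Real.exp z := by
                have := Real.add_one_le_exp z; linarith
              calc |G z| ≤ Cq * Real.exp ((m + |φ|) * z) * z := hGb z hz0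
                _ ≤ Cq * Real.exp ((m + |φ|) * z) * Real.exp z := by
                    apply mul_le_mul_of_nonneg_left hz1 (by positivity)
                _ = Cq * Real.exp ((m + |φ| + 1) * z) := by
                    rw [mul_assoc, ← Real.exp_add]; congr 2; ring
                _ ≤ Cq * Real.exp ((m + |φ| + 1) * y) := by
                    apply mul_le_mul_of_nonneg_left _ hCq0
                    apply Real.exp_le_exp.mpr
                    apply mul_le_mul_of_nonneg_left hz.2 (by positivity)
            calc |Real.exp (φ * z) + q * G z| ≤ Real.exp (φ * z) + q * |G z| := by
                  have habs := abs_add_le (Real.exp (φ * z)) (q * G z)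
                  rw [abs_of_nonneg (Real.exp_pos _).le, abs_mul, abs_of_nonneg hq] at habs
                  exact habs
              _ ≤ Real.exp ((m + |φ| + 1) * y) + q * (Cq * Real.exp ((m + |φ| + 1) * y)) := by
                  have := mul_le_mul_of_nonneg_left hb2 hq
                  linarith
              _ = (1 + q * Cq) * Real.exp ((m + |φ| + 1) * y) := by ring
          have hW1 : Wp (y - z) ≤ Cp * Real.exp (m * y) :=
            le_trans (W_le hWp_neg hWp_nonneg hWp_mono (by linarith [hz.1]) hy) (hCp y hy)
          exact mul_le_mul hH1 hW1 (hWp_nn _) (by positivity)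
      have hC2 : |C y| ≤ (1 + q * Cq) * Cp * Real.exp (R * y) := by
        calc |C y| ≤ ((1 + q * Cq) * Real.exp ((m + |φ| + 1) * y) * (Cp * Real.exp (m * y))) * y :=
              hCb
          _ ≤ ((1 + q * Cq) * Real.exp ((m + |φ| + 1) * y) * (Cp * Real.exp (m * y)))
              * Real.exp y := by
              apply mul_le_mul_of_nonneg_left hyexp (by positivity)
          _ = (1 + q * Cq) * Cp * Real.exp (R * y) := by
              simp only [hRdef]
              rw [show (1 + q * Cq) * Real.exp ((m + |φ| + 1) * y) * (Cp * Real.exp (m * y))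
                  * Real.exp y
                = (1 + q * Cq) * Cp
                  * (Real.exp ((m + |φ| + 1) * y) * Real.exp (m * y) * Real.exp y) by ring]
              rw [← Real.exp_add, ← Real.exp_add]
              congr 2
              ring
      have hG3 : |G y| ≤ Cq * Real.exp (R * y) := by
        calc |G y| ≤ Cq * Real.exp ((m + |φ| + 1) * y) := hG2
          _ ≤ Cq * Real.exp (R * y) := by
              apply mul_le_mul_of_nonneg_left _ hCq0
              apply Real.exp_le_exp.mpr
              have : m + |φ| + 1 ≤ R := by simp only [hRdef]; linarith [hm0]
              exact mul_le_mul_of_nonneg_right this hy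
      calc |C y - G y| ≤ |C y| + |G y| := abs_sub _ _
        _ ≤ (1 + q * Cq) * Cp * Real.exp (R * y) + Cq * Real.exp (R * y) :=
            add_le_add hC2 hG3
        _ = K * Real.exp (R * y) := by simp only [hKdef]; ring
    -- apply Laplace uniqueness
    set A : ℝ := max φ' R with hAdef
    apply laplace_uniq (f := fun y => C y - G y) (A := A)
    · exact hCcont.sub hGcont.continuousOn
    · -- vanishing Laplace transforms
      intro l hl
      have hlφ' : φ' < l := lt_of_le_of_lt (le_max_left _ _) hl
      have hlφ : φ < l := lt_of_le_of_lt hφφ' hlφ'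
      have hE_eq : (fun t : ℝ => Real.exp (-(l * t)) * Real.exp (φ * t))
          = fun t => Real.exp (-((l - φ) * t)) :=
        funext fun t => by rw [← Real.exp_add]; congr 1; ring
      have hE_int : IntegrableOn (fun t : ℝ => Real.exp (-(l * t)) * Real.exp (φ * t)) (Ioi 0) := by
        rw [hE_eq]; exact exp_integrableOn 0 (by linarith)
      have hE_lap : ∫ t in Ioi (0:ℝ), Real.exp (-(l * t)) * Real.exp (φ * t) = 1 / (l - φ) := by
        rw [hE_eq]; exact exp_integral (by linarith)
      obtain ⟨hG_int, hG_lap⟩ := conv_lap (u := Wpq) (v := fun t => Real.exp (φ * t))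
        (hWpq_int l hlφ') hE_int
      have hG_int' : IntegrableOn (fun y => Real.exp (-(l * y)) * G y) (Ioi 0) := hG_int
      have hG_lap' : ∫ y in Ioi (0:ℝ), Real.exp (-(l * y)) * G y
          = (1 / (ψ l - (p + q))) * (1 / (l - φ)) := by
        have h := hG_lap
        rw [hWpq_lap l hlφ', hE_lap] at h
        exact h
      have hH_eq : (fun y : ℝ => Real.exp (-(l * y)) * H y)
          = fun y : ℝ => Real.exp (-(l * y)) * Real.exp (φ * y)
            + q * (Real.exp (-(l * y)) * G y) :=
        funext fun y => by rw [hHG y]; ring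
      have hH_int : IntegrableOn (fun y : ℝ => Real.exp (-(l * y)) * H y) (Ioi 0) := by
        rw [hH_eq]; exact hE_int.add (hG_int'.const_mul q)
      have hH_lap : ∫ y in Ioi (0:ℝ), Real.exp (-(l * y)) * H y
          = 1 / (l - φ) + q * ((1 / (ψ l - (p + q))) * (1 / (l - φ))) := by
        rw [hH_eq, integral_add hE_int (hG_int'.const_mul q),
          MeasureTheory.integral_const_mul q, hE_lap, hG_lap']
      obtain ⟨hC_int, hC_lap⟩ := conv_lap (u := H) (v := Wp) hH_int (hWp_int l hlφ')
      have hC_int' : IntegrableOn (fun y => Real.exp (-(l * y)) * C y) (Ioi 0) := hC_int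
      have hC_lap' : ∫ y in Ioi (0:ℝ), Real.exp (-(l * y)) * C y
          = (1 / (l - φ) + q * ((1 / (ψ l - (p + q))) * (1 / (l - φ)))) * (1 / (ψ l - p)) := by
        have h := hC_lap
        rw [hH_lap, hWp_lap l hlφ'] at h
        exact h
      show ∫ y in Ioi (0:ℝ), Real.exp (-(l * y)) * (C y - G y) = 0
      have hsub_eq : (fun y : ℝ => Real.exp (-(l * y)) * (C y - G y))
          = fun y => Real.exp (-(l * y)) * C y - Real.exp (-(l * y)) * G y :=
        funext fun y => by ring
      rw [hsub_eq, integral_sub hC_int' hG_int', hC_lap', hG_lap']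
      have h2 : 0 < ψ l - (p + q) := by linarith [hψ l hlφ']
      have h1 : 0 < ψ l - p := by linarith
      have h3 : 0 < l - φ := by linarith
      field_simp
      ring
    · -- decay
      intro l hl
      have hlR : R < l := lt_of_le_of_lt (le_max_right _ _) hl
      show Tendsto (fun y => Real.exp (-(l * y)) * (C y - G y)) atTop (𝓝 0)
      apply squeeze_zero_norm' (a := fun y => K * Real.exp ((R - l) * y))
      · filter_upwards [eventually_ge_atTop (0:ℝ)] with y hy
        rw [Real.norm_eq_abs, abs_mul, Real.abs_exp]
        calc Real.exp (-(l * y)) * |C y - G y|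
            ≤ Real.exp (-(l * y)) * (K * Real.exp (R * y)) :=
              mul_le_mul_of_nonneg_left (hDb y hy) (Real.exp_pos _).le
          _ = K * Real.exp ((R - l) * y) := by
              rw [show Real.exp (-(l * y)) * (K * Real.exp (R * y))
                = K * (Real.exp (-(l * y)) * Real.exp (R * y)) by ring, ← Real.exp_add]
              congr 2
              ring
      · have hlim : Tendsto (fun y : ℝ => Real.exp ((R - l) * y)) atTop (𝓝 0) :=
          Real.tendsto_exp_atBot.comp
            (tendsto_id.const_mul_atTop_of_neg (by linarith) |>.mono_left le_rfl)
        have := hlim.const_mul K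
        simpa using this
  -- conclusion
  intro x
  have e1 : ∫ z in (0:ℝ)..x, Wp (x - z) * H z = C x :=
    intervalIntegral.integral_congr (fun z _ => mul_comm (Wp (x - z)) (H z))
  have e2 : ∫ z in (0:ℝ)..x, Real.exp (φ * (x - z)) * Wpq z = G x :=
    intervalIntegral.integral_congr (fun z _ => mul_comm (Real.exp (φ * (x - z))) (Wpq z))
  rw [e1, e2]
  rcases le_or_gt 0 x with hx | hx
  · linarith [main x hx]
  · -- both sides vanish for x < 0
    have h1 : C x = 0 := by
      simp only [hCdef]
      rw [show (∫ z in (0:ℝ)..x, H z * Wp (x - z))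
          = -∫ z in x..(0:ℝ), H z * Wp (x - z) from intervalIntegral.integral_symm x 0]
      rw [intervalIntegral.integral_of_le hx.le, MeasureTheory.integral_Ioc_eq_integral_Ioo]
      rw [setIntegral_congr_fun measurableSet_Ioo (g := fun _ => (0:ℝ))
        (fun z hz => by rw [hWp_neg (x - z) (by linarith [hz.1]), mul_zero])]
      simp
    have h2 : G x = 0 := by
      simp only [hGdef]
      rw [show (∫ u in (0:ℝ)..x, Wpq u * Real.exp (φ * (x - u)))
          = -∫ u in x..(0:ℝ), Wpq u * Real.exp (φ * (x - u)) from intervalIntegral.integral_symm x 0]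
      rw [intervalIntegral.integral_of_le hx.le, MeasureTheory.integral_Ioc_eq_integral_Ioo]
      rw [setIntegral_congr_fun measurableSet_Ioo (g := fun _ => (0:ℝ))
        (fun u hu => by rw [hWpq_neg u hu.2, zero_mul])]
      simp
    rw [h1, h2]
end

section
/- For every q > 0, the set {λ ∈ ℝ ∖ {−α₁, …, −αₙ} : ψ(λ) = q} has exactly n + 2 elements θ₁ > θ₂ > ⋯ > θ_{n+2}; every such θᵢ is a simple zero of ψ − q (i.e. ψ′(θᵢ) ≠ 0); and the roots interlace the poles of ψ as θ_{n+2} < −αₙ < θ_{n+1} < −α_{n−1} < θₙ < ⋯ < −α₁ < θ₂ < 0 < θ₁. -/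
open Filter Set Polynomial Topology

private lemma aux_tendsto_inv_zero_atBot : Tendsto (fun x : ℝ => x⁻¹) (𝓝[<] (0:ℝ)) atBot := by
  have h1 : Tendsto (fun x : ℝ => -x) (𝓝[<] (0:ℝ)) (𝓝[>] (0:ℝ)) := by
    apply tendsto_nhdsWithin_of_tendsto_nhds_of_eventually_within
    · simpa using (continuous_neg.tendsto (0:ℝ)).mono_left nhdsWithin_le_nhds
    · filter_upwards [self_mem_nhdsWithin] with x hx
      simp only [Set.mem_Iio] at hx
      simpa using hx
  have h2 : Tendsto (fun x : ℝ => (-x)⁻¹) (𝓝[<] (0:ℝ)) atTop := tendsto_inv_nhdsGT_zero.comp h1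
  have h3 : Tendsto (fun x : ℝ => -(-x)⁻¹) (𝓝[<] (0:ℝ)) atBot := tendsto_neg_atTop_atBot.comp h2
  refine h3.congr fun x => ?_
  rw [inv_neg, neg_neg]

private lemma aux_poly_eq_C_mul_prod {m : ℕ} {P : Polynomial ℝ}
    (hdeg : P.natDegree = m) (hlead : P.coeff m ≠ 0)
    (θ : Fin m → ℝ) (hinj : Function.Injective θ)
    (hroots : ∀ i, P.eval (θ i) = 0) :
    P = Polynomial.C (P.coeff m) * ∏ i, (Polynomial.X - Polynomial.C (θ i)) := by
  classical
  set R : Polynomial ℝ := Polynomial.C (P.coeff m) * ∏ i, (Polynomial.X - Polynomial.C (θ i))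
    with hR
  have hprodmonic : (∏ i : Fin m, (Polynomial.X - Polynomial.C (θ i))).Monic :=
    monic_prod_of_monic _ _ fun i _ => monic_X_sub_C (θ i)
  have hproddeg : (∏ i : Fin m, (X - C (θ i))).natDegree = m := by
    rw [Polynomial.natDegree_prod _ _ fun i _ => X_sub_C_ne_zero (θ i)]
    simp
  have hRdeg : R.natDegree = m := by rw [hR, natDegree_C_mul hlead, hproddeg]
  have hRcoeff : R.coeff m = P.coeff m := by
    have h : R.leadingCoeff = P.coeff m := by
      rw [hR, leadingCoeff_mul, leadingCoeff_C, hprodmonic.leadingCoeff, mul_one]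
    rwa [Polynomial.leadingCoeff, hRdeg] at h
  by_contra hne
  have hD : P - R ≠ 0 := sub_ne_zero.mpr hne
  have hDdeg : (P - R).natDegree < m := by
    have hle : (P - R).natDegree ≤ m := by
      refine (natDegree_sub_le _ _).trans ?_
      rw [hdeg, hRdeg]; simp
    rcases lt_or_eq_of_le hle with h | h
    · exact h
    · exfalso
      apply hD
      have hlc : (P - R).leadingCoeff = 0 := by
        rw [Polynomial.leadingCoeff, h, Polynomial.coeff_sub, hRcoeff, sub_self]
      exact leadingCoeff_eq_zero.mp hlc
  have hRroots : ∀ i, R.eval (θ i) = 0 := by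
    intro i
    rw [hR]
    simp only [eval_mul, eval_C, eval_prod, eval_sub, eval_X]
    rw [Finset.prod_eq_zero (Finset.mem_univ i) (by ring)]
    ring
  have hsub : (Finset.univ.image θ) ⊆ (P - R).roots.toFinset := by
    intro x hx
    simp only [Finset.mem_image] at hx
    obtain ⟨i, _, rfl⟩ := hx
    simp only [Multiset.mem_toFinset, Polynomial.mem_roots hD, Polynomial.IsRoot]
    rw [Polynomial.eval_sub, hroots i, hRroots i, sub_self]
  have hcard : m ≤ (P - R).roots.toFinset.card := by
    calc m = (Finset.univ.image θ).card := by
            rw [Finset.card_image_of_injective _ hinj, Finset.card_univ, Fintype.card_fin]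
      _ ≤ _ := Finset.card_le_card hsub
  have hfin : (P - R).roots.toFinset.card ≤ (P - R).natDegree :=
    (Multiset.toFinset_card_le _).trans (Polynomial.card_roots' _)
  omega

set_option maxHeartbeats 1000000 in
/-- For the hyper-exponential jump-diffusion with σ > 0, for every q > 0 the equation
ψ(λ) = q has exactly n+2 solutions θ₁ > ⋯ > θ_{n+2} (away from the poles −αᵢ), all
simple zeros of ψ − q, interlacing the poles:
θ_{n+2} < −αₙ < θ_{n+1} < −α_{n−1} < ⋯ < −α₁ < θ₂ < 0 < θ₁. -/
theorem hyperexp_roots_sigma_pos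
    (n : ℕ) (hn : 1 ≤ n)
    (α w : Fin n → ℝ)
    (hα_pos : ∀ i, 0 < α i) (hα_mono : StrictMono α)
    (hw_pos : ∀ i, 0 < w i) (hw_sum : ∑ i, w i = 1)
    (η : ℝ) (hη : 0 < η) (c σ : ℝ) (hσ : 0 < σ)
    (ψ : ℝ → ℝ)
    (hψ : ∀ l : ℝ, ψ l
      = c * l + σ ^ 2 / 2 * l ^ 2 + η * ((∑ i, w i * α i / (l + α i)) - 1)) :
    ∀ q : ℝ, 0 < q → ∃ θ : Fin (n + 2) → ℝ,
      StrictAnti θ ∧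
      {l : ℝ | (∀ j, l ≠ -α j) ∧ ψ l = q} = Set.range θ ∧
      (∀ i, deriv ψ (θ i) ≠ 0) ∧
      0 < θ 0 ∧ θ 1 < 0 ∧
      (∀ i : Fin n, θ i.succ.succ < -α i ∧ -α i < θ i.succ.castSucc) := by
  classical
  intro q hq
  have hσ2 : (0:ℝ) < σ ^ 2 / 2 := by positivity
  have hαinj : Function.Injective α := hα_mono.injective
  set i0 : Fin n := ⟨0, by omega⟩ with hi0
  set iN : Fin n := ⟨n - 1, by omega⟩ with hiN
  have hα0_le : ∀ j : Fin n, α i0 ≤ α j := fun j =>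
    hα_mono.monotone (by rw [Fin.le_def]; exact Nat.zero_le _)
  have hαN_ge : ∀ j : Fin n, α j ≤ α iN := fun j =>
    hα_mono.monotone (by rw [Fin.le_def]; have := j.isLt; simp only [hiN]; omega)
  have hψfun : ψ = fun l => c * l + σ ^ 2 / 2 * l ^ 2
      + η * ((∑ i, w i * α i / (l + α i)) - 1) := funext hψ
  -- differentiability away from the poles
  have hdiff : ∀ l : ℝ, (∀ j, l + α j ≠ 0) → DifferentiableAt ℝ ψ l := by
    intro l hl
    rw [hψfun]
    apply DifferentiableAt.add
    apply DifferentiableAt.add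
    · exact differentiableAt_id.const_mul c
    · exact (differentiableAt_pow 2).const_mul _
    · apply DifferentiableAt.const_mul
      apply DifferentiableAt.sub_const
      apply DifferentiableAt.fun_sum
      intro i _
      exact (differentiableAt_const _).div (differentiableAt_id.add_const _) (hl i)
  -- value at 0
  have hψ0 : ψ 0 = 0 := by
    rw [hψ 0]
    have h : ∀ i : Fin n, w i * α i / ((0:ℝ) + α i) = w i := by
      intro i
      rw [zero_add, mul_div_assoc, div_self (ne_of_gt (hα_pos i)), mul_one]
    rw [Finset.sum_congr rfl fun i _ => h i, hw_sum]
    ring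
  -- quadratic lower bound
  set K : ℝ := ∑ i, w i * α i with hK
  have hK0 : 0 ≤ K := Finset.sum_nonneg fun i _ => le_of_lt (mul_pos (hw_pos i) (hα_pos i))
  set g : ℝ → ℝ := fun l => l * (c + σ ^ 2 / 2 * l) - η * (K + 1) with hg
  have hgψ_pos : ∀ l : ℝ, 0 ≤ l → g l ≤ ψ l := by
    intro l hl
    rw [hψ l]
    have hsum : 0 ≤ ∑ i, w i * α i / (l + α i) :=
      Finset.sum_nonneg fun i _ => div_nonneg (le_of_lt (mul_pos (hw_pos i) (hα_pos i))) (by linarith [hα_pos i])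
    have h2 : -(η * (K + 1)) ≤ η * ((∑ i, w i * α i / (l + α i)) - 1) := by nlinarith
    have h3 : l * (c + σ ^ 2 / 2 * l) = c * l + σ ^ 2 / 2 * l ^ 2 := by ring
    simp only [hg]
    linarith
  have hgψ_neg : ∀ l : ℝ, l ≤ -(α iN + 1) → g l ≤ ψ l := by
    intro l hl
    rw [hψ l]
    have hsum : -K ≤ ∑ i, w i * α i / (l + α i) := by
      have hterm : ∀ i : Fin n, -(w i * α i) ≤ w i * α i / (l + α i) := by
        intro i
        have hd : l + α i ≤ -1 := by linarith [hαN_ge i]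
        have ha : 0 < w i * α i := mul_pos (hw_pos i) (hα_pos i)
        rw [le_div_iff_of_neg (by linarith : l + α i < 0)]
        nlinarith
      have := Finset.sum_le_sum fun i (_ : i ∈ Finset.univ) => hterm i
      simpa [hK] using this
    have h2 : η * (-K - 1) ≤ η * ((∑ i, w i * α i / (l + α i)) - 1) :=
      mul_le_mul_of_nonneg_left (by linarith) hη.le
    have h3 : l * (c + σ ^ 2 / 2 * l) = c * l + σ ^ 2 / 2 * l ^ 2 := by ring
    simp only [hg]
    nlinarith
  have hquad_top : Tendsto (fun l : ℝ => l * (c + σ ^ 2 / 2 * l)) atTop atTop :=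
    tendsto_id.atTop_mul_atTop₀
      (tendsto_atTop_add_const_left _ c ((tendsto_id).const_mul_atTop hσ2))
  have hquad_bot : Tendsto (fun l : ℝ => l * (c + σ ^ 2 / 2 * l)) atBot atTop :=
    tendsto_id.atBot_mul_atBot₀
      (tendsto_atBot_add_const_left _ c ((tendsto_id).const_mul_atBot hσ2))
  have hgtop : Tendsto g atTop atTop := by
    simpa only [hg, sub_eq_add_neg] using
      tendsto_atTop_add_const_right _ (-(η * (K + 1))) hquad_top
  have hgbot : Tendsto g atBot atTop := by
    simpa only [hg, sub_eq_add_neg] using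
      tendsto_atTop_add_const_right _ (-(η * (K + 1))) hquad_bot
  have htop : Tendsto ψ atTop atTop :=
    tendsto_atTop_mono' atTop
      (by filter_upwards [eventually_ge_atTop (0:ℝ)] with l hl using hgψ_pos l hl) hgtop
  have hbot : Tendsto ψ atBot atTop :=
    tendsto_atTop_mono' atBot
      (by filter_upwards [eventually_le_atBot (-(α iN + 1))] with l hl using hgψ_neg l hl) hgbot
  -- behaviour at the poles
  have hshiftR : ∀ x : ℝ, Tendsto (fun l : ℝ => l + x) (𝓝[>] (-x)) (𝓝[>] (0:ℝ)) := by
    intro x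
    apply tendsto_nhdsWithin_of_tendsto_nhds_of_eventually_within
    · have h : Tendsto (fun l : ℝ => l + x) (𝓝 (-x)) (𝓝 (-x + x)) :=
        (continuous_add_right x).tendsto (-x)
      rw [neg_add_cancel] at h
      exact h.mono_left nhdsWithin_le_nhds
    · filter_upwards [self_mem_nhdsWithin] with l hl
      simp only [Set.mem_Ioi] at hl ⊢
      linarith
  have hshiftL : ∀ x : ℝ, Tendsto (fun l : ℝ => l + x) (𝓝[<] (-x)) (𝓝[<] (0:ℝ)) := by
    intro x
    apply tendsto_nhdsWithin_of_tendsto_nhds_of_eventually_within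
    · have h : Tendsto (fun l : ℝ => l + x) (𝓝 (-x)) (𝓝 (-x + x)) :=
        (continuous_add_right x).tendsto (-x)
      rw [neg_add_cancel] at h
      exact h.mono_left nhdsWithin_le_nhds
    · filter_upwards [self_mem_nhdsWithin] with l hl
      simp only [Set.mem_Iio] at hl ⊢
      linarith
  have hdecomp : ∀ i : Fin n, ∃ G : ℝ → ℝ, ContinuousAt G (-α i) ∧
      ∀ l, ψ l = G l + (η * (w i * α i)) * (l + α i)⁻¹ := by
    intro i
    refine ⟨fun l => c * l + σ ^ 2 / 2 * l ^ 2
      + η * ((∑ j ∈ Finset.univ.erase i, w j * α j / (l + α j)) - 1), ?_, ?_⟩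
    · have hdG : DifferentiableAt ℝ (fun l => c * l + σ ^ 2 / 2 * l ^ 2
          + η * ((∑ j ∈ Finset.univ.erase i, w j * α j / (l + α j)) - 1)) (-α i) := by
        apply DifferentiableAt.add
        apply DifferentiableAt.add
        · exact differentiableAt_id.const_mul c
        · exact (differentiableAt_pow 2).const_mul _
        · apply DifferentiableAt.const_mul
          apply DifferentiableAt.sub_const
          apply DifferentiableAt.fun_sum
          intro j hj
          refine (differentiableAt_const _).div (differentiableAt_id.add_const _) ?_
          intro hzero
          exact (Finset.mem_erase.mp hj).1 (hαinj (by linarith))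
      exact hdG.continuousAt
    · intro l
      rw [hψ l, ← Finset.add_sum_erase _ _ (Finset.mem_univ i), div_eq_mul_inv]
      ring
  have hpole_top : ∀ i : Fin n, Tendsto ψ (𝓝[>] (-α i)) atTop := by
    intro i
    obtain ⟨G, hGc, hGeq⟩ := hdecomp i
    have h1 : Tendsto (fun l : ℝ => (η * (w i * α i)) * (l + α i)⁻¹) (𝓝[>] (-α i)) atTop :=
      (tendsto_inv_nhdsGT_zero.comp (hshiftR (α i))).const_mul_atTop
        (mul_pos hη (mul_pos (hw_pos i) (hα_pos i)))
    have h2 : Tendsto G (𝓝[>] (-α i)) (𝓝 (G (-α i))) :=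
      (hGc.continuousWithinAt).tendsto
    exact (h2.add_atTop h1).congr fun l => (hGeq l).symm
  have hpole_bot : ∀ i : Fin n, Tendsto ψ (𝓝[<] (-α i)) atBot := by
    intro i
    obtain ⟨G, hGc, hGeq⟩ := hdecomp i
    have h1 : Tendsto (fun l : ℝ => (η * (w i * α i)) * (l + α i)⁻¹) (𝓝[<] (-α i)) atBot :=
      (aux_tendsto_inv_zero_atBot.comp (hshiftL (α i))).const_mul_atBot
        (mul_pos hη (mul_pos (hw_pos i) (hα_pos i)))
    have h2 : Tendsto G (𝓝[<] (-α i)) (𝓝 (G (-α i))) :=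
      (hGc.continuousWithinAt).tendsto
    exact (h2.add_atBot h1).congr fun l => (hGeq l).symm
  -- IVT helpers
  have hroot_dec : ∀ u v : ℝ, u ≤ v → (∀ l ∈ Icc u v, ∀ j, l + α j ≠ 0) →
      ψ v < q → q < ψ u → ∃ x ∈ Icc u v, ψ x = q := by
    intro u v huv hU hv hu
    have hcontI : ContinuousOn ψ (Icc u v) := fun l hl =>
      ((hdiff l (hU l hl)).continuousAt).continuousWithinAt
    obtain ⟨x, hx, hxq⟩ := intermediate_value_Icc' huv hcontI ⟨hv.le, hu.le⟩
    exact ⟨x, hx, hxq⟩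
  have hroot_inc : ∀ u v : ℝ, u ≤ v → (∀ l ∈ Icc u v, ∀ j, l + α j ≠ 0) →
      ψ u < q → q < ψ v → ∃ x ∈ Icc u v, ψ x = q := by
    intro u v huv hU hu hv
    have hcontI : ContinuousOn ψ (Icc u v) := fun l hl =>
      ((hdiff l (hU l hl)).continuousAt).continuousWithinAt
    obtain ⟨x, hx, hxq⟩ := intermediate_value_Icc huv hcontI ⟨hu.le, hv.le⟩
    exact ⟨x, hx, hxq⟩
  -- the positive root
  have hx0 : ∃ x, 0 < x ∧ ψ x = q := by
    obtain ⟨v, hv1, hv2⟩ := ((htop.eventually (eventually_gt_atTop q)).and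
      (eventually_gt_atTop (0:ℝ))).exists
    obtain ⟨x, hx, hxq⟩ := hroot_inc 0 v hv2.le
      (fun l hl j => ne_of_gt (by have := hα_pos j; have := hl.1; linarith))
      (by rw [hψ0]; exact hq) hv1
    refine ⟨x, lt_of_le_of_ne hx.1 ?_, hxq⟩
    intro h
    rw [← h, hψ0] at hxq
    exact absurd hxq.symm (ne_of_gt hq)
  -- the root in (-α 0, 0)
  have hx1 : ∃ x, -α i0 < x ∧ x < 0 ∧ ψ x = q := by
    obtain ⟨u, hu1, hu2⟩ := (((hpole_top i0).eventually (eventually_gt_atTop q)).and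
      (Ioo_mem_nhdsGT_of_mem (show -α i0 ∈ Ico (-α i0) 0 from ⟨le_refl _, by linarith [hα_pos i0]⟩))).exists
    obtain ⟨x, hx, hxq⟩ := hroot_dec u 0 hu2.2.le
      (fun l hl j => ne_of_gt (by have h1 := hα0_le j; have h2 := hu2.1; have := hl.1; linarith))
      (by rw [hψ0]; exact hq) hu1
    refine ⟨x, by have := hx.1; have := hu2.1; linarith, lt_of_le_of_ne hx.2 ?_, hxq⟩
    intro h
    rw [h, hψ0] at hxq
    exact absurd hxq.symm (ne_of_gt hq)
  -- the roots to the left of each pole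
  have hxmid : ∀ i : Fin n, ∃ x, x < -α i ∧ ψ x = q ∧ (∀ j, x + α j ≠ 0) ∧
      ∀ h : (i:ℕ) + 1 < n, -α ⟨(i:ℕ) + 1, h⟩ < x := by
    intro i
    by_cases hcase : (i:ℕ) + 1 < n
    · set i' : Fin n := ⟨(i:ℕ) + 1, hcase⟩ with hi'
      have hαlt : α i < α i' := hα_mono (by rw [Fin.lt_def]; simp [hi'])
      obtain ⟨u, hu1, hu2⟩ := (((hpole_top i').eventually (eventually_gt_atTop q)).and
        (Ioo_mem_nhdsGT_of_mem (show -α i' ∈ Ico (-α i') (-α i) from ⟨le_refl _, by linarith⟩))).exists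
      obtain ⟨v, hv1, hv2⟩ := (((hpole_bot i).eventually (eventually_lt_atBot q)).and
        (Ioo_mem_nhdsLT_of_mem (show -α i ∈ Ioc u (-α i) from ⟨hu2.2, le_refl _⟩))).exists
      have hIccU : ∀ l ∈ Icc u v, ∀ j, l + α j ≠ 0 := by
        intro l hl j
        rcases le_or_gt (j:ℕ) (i:ℕ) with h | h
        · have hji : α j ≤ α i := hα_mono.monotone (by rw [Fin.le_def]; exact h)
          exact ne_of_lt (by have := hl.2; have := hv2.2; linarith)
        · have hji : α i' ≤ α j := hα_mono.monotone (by rw [Fin.le_def]; simp [hi']; omega)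
          exact ne_of_gt (by have := hl.1; have := hu2.1; linarith)
      obtain ⟨x, hx, hxq⟩ := hroot_dec u v (by have := hv2.1; have := hu2.1; linarith)
        hIccU hv1 hu1
      refine ⟨x, by have := hx.2; have := hv2.2; linarith, hxq,
        fun j => hIccU x hx j, fun h => ?_⟩
      have : (⟨(i:ℕ) + 1, h⟩ : Fin n) = i' := rfl
      rw [this]
      have := hx.1; have := hu2.1; linarith
    · obtain ⟨u, hu1, hu2⟩ := ((hbot.eventually (eventually_gt_atTop q)).and
        (eventually_lt_atBot (-α i))).exists
      obtain ⟨v, hv1, hv2⟩ := (((hpole_bot i).eventually (eventually_lt_atBot q)).and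
        (Ioo_mem_nhdsLT_of_mem (show -α i ∈ Ioc u (-α i) from ⟨hu2, le_refl _⟩))).exists
      have hIccU : ∀ l ∈ Icc u v, ∀ j, l + α j ≠ 0 := by
        intro l hl j
        have hji : α j ≤ α i := hα_mono.monotone
          (by rw [Fin.le_def]; have := j.isLt; omega)
        exact ne_of_lt (by have := hl.2; have := hv2.2; linarith)
      obtain ⟨x, hx, hxq⟩ := hroot_dec u v (by have := hv2.1; linarith) hIccU hv1 hu1
      exact ⟨x, by have := hx.2; have := hv2.2; linarith, hxq,
        fun j => hIccU x hx j, fun h => absurd h hcase⟩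
  obtain ⟨x0, hx0pos, hx0q⟩ := hx0
  obtain ⟨x1, hx1l, hx1r, hx1q⟩ := hx1
  choose r hr1 hr2 hr3 hr4 using hxmid
  -- the function θ
  set θ : Fin (n + 2) → ℝ := fun j =>
    if j.val = 0 then x0 else if j.val = 1 then x1
    else r ⟨j.val - 2, by have := j.isLt; omega⟩ with hθdef
  have hθ0 : θ 0 = x0 := by simp [hθdef]
  have hθ1 : θ 1 = x1 := by simp [hθdef]
  have hθr : ∀ (j : Fin (n + 2)) (k : ℕ) (hk : k < n), j.val = k + 2 → θ j = r ⟨k, hk⟩ := by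
    intro j k hk h
    simp only [hθdef]
    rw [if_neg (by omega), if_neg (by omega)]
    congr 1
    exact Fin.ext (by simp [h])
  -- membership facts for θ
  have hx0ne : ∀ k : Fin n, x0 + α k ≠ 0 := fun k => ne_of_gt (by linarith [hα_pos k])
  have hx1ne : ∀ k : Fin n, x1 + α k ≠ 0 := fun k => ne_of_gt (by linarith [hα0_le k, hx1l])
  have hmem : ∀ j : Fin (n + 2), (∀ k : Fin n, θ j + α k ≠ 0) ∧ ψ (θ j) = q := by
    intro j
    rcases hjv : j.val with _ | m
    · have hj : θ j = x0 := by simp only [hθdef]; rw [if_pos hjv]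
      rw [hj]; exact ⟨hx0ne, hx0q⟩
    · rcases m with _ | k
      · have hj : θ j = x1 := by
          simp only [hθdef]; rw [if_neg (by omega), if_pos (by omega)]
        rw [hj]; exact ⟨hx1ne, hx1q⟩
      · have hk : k < n := by have := j.isLt; omega
        have hj : θ j = r ⟨k, hk⟩ := hθr j k hk (by omega)
        rw [hj]; exact ⟨hr3 ⟨k, hk⟩, hr2 ⟨k, hk⟩⟩
  -- θ is strictly antitone
  have hanti : StrictAnti θ := by
    rw [Fin.strictAnti_iff_succ_lt]
    intro i
    rcases hiv : i.val with _ | m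
    · have h1 : θ i.succ = x1 := by
        simp only [hθdef]
        rw [if_neg (by simp only [Fin.val_succ]; omega), if_pos (by simp only [Fin.val_succ]; omega)]
      have h0 : θ i.castSucc = x0 := by
        simp only [hθdef]
        rw [if_pos (by simp only [Fin.coe_castSucc]; omega)]
      rw [h1, h0]; linarith
    · rcases m with _ | k
      · have h1 : θ i.succ = r ⟨0, by omega⟩ :=
          hθr _ 0 (by omega) (by simp only [Fin.val_succ]; omega)
        have h0 : θ i.castSucc = x1 := by
          simp only [hθdef]
          rw [if_neg (by simp only [Fin.coe_castSucc]; omega),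
            if_pos (by simp only [Fin.coe_castSucc]; omega)]
        rw [h1, h0]
        have ha : r (⟨0, by omega⟩ : Fin n) < -α i0 := hr1 ⟨0, by omega⟩
        linarith
      · have hk2 : k + 2 < n + 1 := by rw [← hiv]; exact i.isLt
        have h1 : θ i.succ = r ⟨k + 1, by omega⟩ :=
          hθr _ (k + 1) (by omega) (by simp only [Fin.val_succ]; omega)
        have h0 : θ i.castSucc = r ⟨k, by omega⟩ :=
          hθr _ k (by omega) (by simp only [Fin.coe_castSucc]; omega)
        rw [h1, h0]
        have ha : r (⟨k + 1, by omega⟩ : Fin n) < -α (⟨k + 1, by omega⟩ : Fin n) :=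
          hr1 ⟨k + 1, by omega⟩
        have hb : -α (⟨k + 1, by omega⟩ : Fin n) < r (⟨k, by omega⟩ : Fin n) :=
          hr4 ⟨k, by omega⟩ (by show k + 1 < n; omega)
        linarith
  -- the polynomial
  set Q : Polynomial ℝ := ∏ i, (X + C (α i)) with hQdef
  set A : Polynomial ℝ := C (σ ^ 2 / 2) * X ^ 2 + C c * X + C (-(η + q)) with hAdef
  set B : Polynomial ℝ := C η * ∑ i, C (w i * α i) * ∏ j ∈ Finset.univ.erase i, (X + C (α j))
    with hBdef
  set P : Polynomial ℝ := A * Q + B with hPdef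
  have heval : ∀ l : ℝ, (∀ j, l + α j ≠ 0) → P.eval l = (ψ l - q) * Q.eval l := by
    intro l hl
    have hS : (∑ i, w i * α i / (l + α i)) * ∏ j, (l + α j)
        = ∑ i, w i * α i * ∏ j ∈ Finset.univ.erase i, (l + α j) := by
      rw [Finset.sum_mul]
      refine Finset.sum_congr rfl fun i _ => ?_
      rw [← Finset.mul_prod_erase _ _ (Finset.mem_univ i), div_mul_eq_mul_div,
        mul_comm (l + α i) _, ← mul_assoc, mul_div_assoc, div_self (hl i), mul_one]
    rw [hψ l]
    simp only [hPdef, hAdef, hBdef, hQdef, eval_add, eval_mul, eval_C, eval_X, eval_pow,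
      eval_finset_sum, eval_prod]
    linear_combination (-η) * hS
  have hQmonic : Q.Monic := monic_prod_of_monic _ _ fun i _ => monic_X_add_C (α i)
  have hQdeg : Q.natDegree = n := by
    rw [hQdef, Polynomial.natDegree_prod _ _ fun i _ => (monic_X_add_C (α i)).ne_zero]
    simp [natDegree_X_add_C]
  have hAdeg : A.natDegree = 2 := by rw [hAdef]; exact natDegree_quadratic (ne_of_gt hσ2)
  have hA0 : A ≠ 0 := fun h => by rw [h] at hAdeg; simp at hAdeg
  have hAQdeg : (A * Q).natDegree = n + 2 := by
    rw [natDegree_mul hA0 hQmonic.ne_zero, hAdeg, hQdeg]; omega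
  have hBdeg : B.natDegree ≤ n + 1 := by
    rw [hBdef]
    refine (natDegree_C_mul_le _ _).trans ?_
    refine Polynomial.natDegree_sum_le_of_forall_le _ _ fun i _ => ?_
    refine natDegree_mul_le.trans ?_
    have h1 : (∏ j ∈ Finset.univ.erase i, (X + C (α j))).natDegree ≤ n + 1 := by
      refine (Polynomial.natDegree_prod_le _ _).trans ?_
      have h2 : ∑ j ∈ Finset.univ.erase i, (X + C (α j)).natDegree
          = ∑ j ∈ Finset.univ.erase i, 1 := by
        exact Finset.sum_congr rfl fun j _ => natDegree_X_add_C (α j)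
      rw [h2, Finset.sum_const, smul_eq_mul, mul_one]
      have := Finset.card_erase_of_mem (Finset.mem_univ i)
      simp only [Finset.card_univ, Fintype.card_fin] at this
      omega
    rw [natDegree_C]
    omega
  have hBlt : B.natDegree < (A * Q).natDegree := by rw [hAQdeg]; omega
  have hPdeg : P.natDegree = n + 2 := by
    rw [hPdef, natDegree_add_eq_left_of_natDegree_lt hBlt, hAQdeg]
  have hPcoeff : P.coeff (n + 2) = σ ^ 2 / 2 := by
    rw [hPdef, Polynomial.coeff_add,
      Polynomial.coeff_eq_zero_of_natDegree_lt (lt_of_le_of_lt hBdeg (by omega)), add_zero]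
    have h1 : (A * Q).coeff (n + 2) = (A * Q).leadingCoeff := by
      rw [Polynomial.leadingCoeff, hAQdeg]
    rw [h1, leadingCoeff_mul, hQmonic.leadingCoeff, mul_one, hAdef]
    exact leadingCoeff_quadratic (ne_of_gt hσ2)
  have hPlead : P.coeff (n + 2) ≠ 0 := by rw [hPcoeff]; exact ne_of_gt hσ2
  have hProots : ∀ j : Fin (n + 2), P.eval (θ j) = 0 := by
    intro j
    obtain ⟨hne, hval⟩ := hmem j
    rw [heval _ hne, hval, sub_self, zero_mul]
  have hfac := aux_poly_eq_C_mul_prod hPdeg hPlead θ hanti.injective hProots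
  -- the set of solutions is exactly the range of θ
  have hset : {l : ℝ | (∀ j, l ≠ -α j) ∧ ψ l = q} = Set.range θ := by
    apply Set.Subset.antisymm
    · intro l hl
      obtain ⟨hl1, hl2⟩ := hl
      have hl1' : ∀ j, l + α j ≠ 0 := fun j h => hl1 j (by linarith)
      have h0 : P.eval l = 0 := by rw [heval l hl1', hl2, sub_self, zero_mul]
      rw [hfac] at h0
      simp only [eval_mul, eval_C, eval_prod, eval_sub, eval_X] at h0
      rcases mul_eq_zero.mp h0 with h | h
      · rw [hPcoeff] at h; exact absurd h (ne_of_gt hσ2)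
      · obtain ⟨i, _, hi⟩ := Finset.prod_eq_zero_iff.mp h
        exact ⟨i, (sub_eq_zero.mp hi).symm⟩
    · rintro l ⟨j, rfl⟩
      obtain ⟨hne, hval⟩ := hmem j
      exact ⟨fun k h => hne k (by rw [h]; ring), hval⟩
  -- the derivative of P is nonzero at each θ i
  have hPderiv : ∀ i : Fin (n + 2), (Polynomial.derivative P).eval (θ i) ≠ 0 := by
    intro i
    have hP2 : Polynomial.derivative P =
        Polynomial.derivative ((X - C (θ i)) *
          (C (P.coeff (n + 2)) * ∏ j ∈ Finset.univ.erase i, (X - C (θ j)))) := by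
      congr 1
      conv_lhs => rw [hfac]
      rw [← Finset.mul_prod_erase _ _ (Finset.mem_univ i)]
      ring
    rw [hP2, Polynomial.derivative_mul, Polynomial.derivative_X_sub_C]
    simp only [one_mul, eval_add, eval_mul, eval_sub, eval_X, eval_C, sub_self, zero_mul,
      add_zero, eval_prod]
    refine mul_ne_zero hPlead (Finset.prod_ne_zero_iff.mpr fun j hj => ?_)
    exact sub_ne_zero.mpr fun h => (Finset.mem_erase.mp hj).1 (hanti.injective h.symm)
  -- the poles form a closed set, its complement is open
  have hUopen : IsOpen {l : ℝ | ∀ j, l + α j ≠ 0} := by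
    have hU : {l : ℝ | ∀ j, l + α j ≠ 0} = ⋂ j, (fun l : ℝ => l + α j) ⁻¹' {(0:ℝ)}ᶜ := by
      ext l
      simp only [Set.mem_setOf_eq, Set.mem_iInter, Set.mem_preimage, Set.mem_compl_iff,
        Set.mem_singleton_iff]
    rw [hU]
    exact isOpen_iInter_of_finite fun j =>
      isOpen_compl_singleton.preimage (continuous_add_right (α j))
  -- deriv ψ is nonzero at each θ i
  have hderiv : ∀ i : Fin (n + 2), deriv ψ (θ i) ≠ 0 := by
    intro i
    obtain ⟨hne, hval⟩ := hmem i
    have hdψ : DifferentiableAt ℝ ψ (θ i) := hdiff _ hne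
    have hFeq : (fun l => (ψ l - q) * Q.eval l) =ᶠ[𝓝 (θ i)] fun l => P.eval l := by
      filter_upwards [hUopen.mem_nhds hne] with l hl
      exact (heval l hl).symm
    have hF : HasDerivAt (fun l => (ψ l - q) * Q.eval l)
        (deriv ψ (θ i) * Q.eval (θ i)
          + (ψ (θ i) - q) * (Polynomial.derivative Q).eval (θ i)) (θ i) :=
      ((hdψ.hasDerivAt).sub_const q).mul (Q.hasDerivAt (θ i))
    have hP : HasDerivAt (fun l => P.eval l) ((Polynomial.derivative P).eval (θ i)) (θ i) :=
      P.hasDerivAt (θ i)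
    have heq : deriv ψ (θ i) * Q.eval (θ i)
        + (ψ (θ i) - q) * (Polynomial.derivative Q).eval (θ i)
        = (Polynomial.derivative P).eval (θ i) := by
      rw [← hF.deriv, ← hP.deriv]
      exact hFeq.deriv_eq
    rw [hval, sub_self, zero_mul, add_zero] at heq
    intro h
    rw [h, zero_mul] at heq
    exact hPderiv i heq.symm
  -- assemble
  refine ⟨θ, hanti, hset, hderiv, ?_, ?_, ?_⟩
  · rw [hθ0]; exact hx0pos
  · rw [hθ1]; exact hx1r
  · intro i
    constructor
    · have h1 : θ i.succ.succ = r ⟨i.val, i.isLt⟩ := hθr _ i.val i.isLt rfl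
      rw [h1]
      exact hr1 ⟨i.val, i.isLt⟩
    · by_cases h0 : (i : ℕ) = 0
      · have h1 : θ i.succ.castSucc = x1 := by
          simp only [hθdef]
          rw [if_neg (by simp only [Fin.coe_castSucc, Fin.val_succ]; omega),
            if_pos (by simp only [Fin.coe_castSucc, Fin.val_succ]; omega)]
        rw [h1]
        have hi : i = i0 := Fin.ext (by simp [hi0, h0])
        rw [hi]
        exact hx1l
      · have hlt : (i : ℕ) - 1 < n := by have := i.isLt; omega
        have h1 : θ i.succ.castSucc = r ⟨(i : ℕ) - 1, hlt⟩ :=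
          hθr _ ((i : ℕ) - 1) hlt (by simp only [Fin.coe_castSucc, Fin.val_succ]; omega)
        rw [h1]
        have h2 : -α ⟨(i : ℕ) - 1 + 1, by omega⟩ < r ⟨(i : ℕ) - 1, hlt⟩ :=
          hr4 ⟨(i : ℕ) - 1, hlt⟩ (by show (i : ℕ) - 1 + 1 < n; omega)
        have h3 : α (⟨(i : ℕ) - 1 + 1, by omega⟩ : Fin n) = α i :=
          congrArg α (Fin.ext (by simp; omega))
        rw [← h3]
        exact h2
end

section
/- For every q > 0, the set {λ ∈ ℝ ∖ {−α₁, …, −αₙ} : ψ(λ) = q} has exactly n + 1 elements θ₁ > θ₂ > ⋯ > θ_{n+1}; every such θᵢ is a simple zero of ψ − q (i.e. ψ′(θᵢ) ≠ 0); and the roots interlace the poles of ψ as −αₙ < θ_{n+1} < −α_{n−1} < θₙ < ⋯ < −α₁ < θ₂ < 0 < θ₁. -/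
open Finset Polynomial

lemma aux_ivt (f : ℝ → ℝ) (hf : Continuous f) {a b : ℝ} (hab : a < b)
    (h : f a * f b < 0) : ∃ x ∈ Set.Ioo a b, f x = 0 := by
  rcases mul_neg_iff.mp h with ⟨ha, hb⟩ | ⟨ha, hb⟩
  · obtain ⟨x, hx, hfx⟩ := intermediate_value_Ioo' hab.le hf.continuousOn
      (show (0:ℝ) ∈ Set.Ioo (f b) (f a) from ⟨hb, ha⟩)
    exact ⟨x, hx, hfx⟩
  · obtain ⟨x, hx, hfx⟩ := intermediate_value_Ioo hab.le hf.continuousOn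
      (show (0:ℝ) ∈ Set.Ioo (f a) (f b) from ⟨ha, hb⟩)
    exact ⟨x, hx, hfx⟩

lemma aux_prod_sign {n : ℕ} (α : Fin n → ℝ) (hmono : StrictMono α) (k : Fin n) :
    0 < (-1 : ℝ) ^ (k : ℕ) * ∏ j ∈ Finset.univ.erase k, (α j - α k) := by
  classical
  have hsplit : Finset.univ.erase k = Finset.Iio k ∪ Finset.Ioi k := by
    ext j
    simp only [mem_erase, mem_univ, and_true, mem_union, mem_Iio, mem_Ioi]
    constructor
    · intro hj; exact lt_or_gt_of_ne hj
    · rintro (h | h)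
      · exact ne_of_lt h
      · exact ne_of_gt h
  have hdisj : Disjoint (Finset.Iio k) (Finset.Ioi k) := by
    simp [Finset.disjoint_left]
    intro j hj; exact le_of_lt hj
  rw [hsplit, Finset.prod_union hdisj]
  have h1 : ∏ j ∈ Finset.Iio k, (α j - α k)
      = (-1 : ℝ) ^ (k : ℕ) * ∏ j ∈ Finset.Iio k, (α k - α j) := by
    rw [← Fin.card_Iio k, ← Finset.prod_const, ← Finset.prod_mul_distrib]
    exact Finset.prod_congr rfl fun j hj => by ring
  have hA : 0 < ∏ j ∈ Finset.Iio k, (α k - α j) :=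
    Finset.prod_pos fun j hj => sub_pos.mpr (hmono (Finset.mem_Iio.mp hj))
  have hB : 0 < ∏ j ∈ Finset.Ioi k, (α j - α k) :=
    Finset.prod_pos fun j hj => sub_pos.mpr (hmono (Finset.mem_Ioi.mp hj))
  rw [h1, ← mul_assoc, ← mul_assoc, ← pow_add]
  have : (-1 : ℝ) ^ ((k:ℕ) + (k:ℕ)) = 1 := Even.neg_one_pow ⟨(k:ℕ), rfl⟩
  rw [this, one_mul]
  exact mul_pos hA hB

/-- For the bounded-variation hyper-exponential compound Poisson process with drift
(σ = 0, c > 0), for every q > 0 the equation ψ(λ) = q has exactly n+1 solutions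
θ₁ > ⋯ > θ_{n+1} (away from the poles −αᵢ), all simple zeros of ψ − q, interlacing
the poles: −αₙ < θ_{n+1} < −α_{n−1} < θₙ < ⋯ < −α₁ < θ₂ < 0 < θ₁. -/
theorem hyperexp_roots_sigma_zero
    (n : ℕ) (hn : 1 ≤ n)
    (α w : Fin n → ℝ)
    (hα_pos : ∀ i, 0 < α i) (hα_mono : StrictMono α)
    (hw_pos : ∀ i, 0 < w i) (hw_sum : ∑ i, w i = 1)
    (η : ℝ) (hη : 0 < η) (c : ℝ) (hc : 0 < c)
    (ψ : ℝ → ℝ)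
    (hψ : ∀ l : ℝ, ψ l = c * l + η * ((∑ i, w i * α i / (l + α i)) - 1)) :
    ∀ q : ℝ, 0 < q → ∃ θ : Fin (n + 1) → ℝ,
      StrictAnti θ ∧
      {l : ℝ | (∀ j, l ≠ -α j) ∧ ψ l = q} = Set.range θ ∧
      (∀ i, deriv ψ (θ i) ≠ 0) ∧
      0 < θ 0 ∧ θ 1 < 0 ∧
      (∀ i : Fin n, -α i < θ i.succ) ∧
      (∀ i : Fin n, ∀ h : i.val + 1 < n, θ ⟨i.val + 2, by omega⟩ < -α i) := by
  classical
  intro q hq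
  set D : Polynomial ℝ := ∏ j, (X + C (α j)) with hD_def
  set P : Polynomial ℝ := (C c * X - C (q + η)) * D
      + C η * ∑ i, C (w i * α i) * ∏ j ∈ Finset.univ.erase i, (X + C (α j)) with hP_def
  have hDeval : ∀ l : ℝ, D.eval l = ∏ j, (l + α j) := by
    intro l; simp [hD_def, eval_prod]
  have hPeval : ∀ l : ℝ, P.eval l = (c * l - (q + η)) * (∏ j, (l + α j))
      + η * ∑ i, (w i * α i) * ∏ j ∈ Finset.univ.erase i, (l + α j) := by
    intro l
    simp [hP_def, hD_def, eval_prod, eval_finset_sum]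
  -- key identity off the poles
  have hkey : ∀ l : ℝ, (∀ j, l + α j ≠ 0) → P.eval l = (ψ l - q) * D.eval l := by
    intro l hl
    have hterm : ∀ i : Fin n, w i * α i / (l + α i) * ∏ j, (l + α j)
        = (w i * α i) * ∏ j ∈ Finset.univ.erase i, (l + α j) := by
      intro i
      rw [← Finset.mul_prod_erase Finset.univ _ (Finset.mem_univ i)]
      calc w i * α i / (l + α i) * ((l + α i) * ∏ x ∈ Finset.univ.erase i, (l + α x))
          = w i * α i * (∏ x ∈ Finset.univ.erase i, (l + α x)) * ((l + α i) / (l + α i)) := by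
            ring
        _ = w i * α i * ∏ x ∈ Finset.univ.erase i, (l + α x) := by
            rw [div_self (hl i), mul_one]
    have hsum : (∑ i, w i * α i / (l + α i)) * ∏ j, (l + α j)
        = ∑ i, (w i * α i) * ∏ j ∈ Finset.univ.erase i, (l + α j) := by
      rw [Finset.sum_mul]; exact Finset.sum_congr rfl fun i _ => hterm i
    rw [hPeval, hDeval, hψ, ← hsum]; ring
  -- degree of P
  have hD_ne : (D : Polynomial ℝ) ≠ 0 := by
    rw [hD_def]
    exact Finset.prod_ne_zero_iff.mpr fun j _ => Polynomial.X_add_C_ne_zero (α j)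
  have hD_deg : D.natDegree = n := by
    rw [hD_def, Polynomial.natDegree_prod _ _ fun j _ => Polynomial.X_add_C_ne_zero (α j)]
    simp
  have hA_deg : (C c * X - C (q + η)).natDegree = 1 := by
    rw [sub_eq_add_neg, ← Polynomial.C_neg]
    exact Polynomial.natDegree_linear hc.ne'
  have hA_ne : (C c * X - C (q + η)) ≠ 0 := by
    intro h; rw [h, Polynomial.natDegree_zero] at hA_deg; omega
  have hAD_deg : ((C c * X - C (q + η)) * D).natDegree = n + 1 := by
    rw [Polynomial.natDegree_mul hA_ne hD_ne, hA_deg, hD_deg]; omega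
  have hAD_ne : (C c * X - C (q + η)) * D ≠ 0 := mul_ne_zero hA_ne hD_ne
  have hB_deg : (C η * ∑ i, C (w i * α i)
      * ∏ j ∈ Finset.univ.erase i, (X + C (α j))).natDegree ≤ n := by
    refine (Polynomial.natDegree_C_mul_le _ _).trans ?_
    refine Polynomial.natDegree_sum_le_of_forall_le _ _ fun i _ => ?_
    refine (Polynomial.natDegree_C_mul_le _ _).trans ?_
    refine (Polynomial.natDegree_prod_le _ _).trans ?_
    calc ∑ j ∈ Finset.univ.erase i, (X + C (α j)).natDegree
        = ∑ j ∈ Finset.univ.erase i, 1 := by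
          exact Finset.sum_congr rfl fun j _ => Polynomial.natDegree_X_add_C (α j)
      _ ≤ n := by
          rw [Finset.sum_const, smul_eq_mul, mul_one]
          exact (Finset.card_erase_of_mem (Finset.mem_univ i)).le.trans (by simp)
  have hdlt : (C η * ∑ i, C (w i * α i) * ∏ j ∈ Finset.univ.erase i, (X + C (α j))).degree
      < ((C c * X - C (q + η)) * D).degree := by
    refine lt_of_le_of_lt Polynomial.degree_le_natDegree ?_
    rw [Polynomial.degree_eq_natDegree hAD_ne, hAD_deg]
    exact_mod_cast Nat.lt_succ_of_le hB_deg
  have hP_deg : P.natDegree = n + 1 := by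
    rw [hP_def, Polynomial.natDegree_add_eq_left_of_degree_lt hdlt, hAD_deg]
  have hP_ne : P ≠ 0 := fun h => by rw [h, Polynomial.natDegree_zero] at hP_deg; omega
  -- sign at M
  obtain ⟨M, hM_pos, hcM⟩ : ∃ M : ℝ, 0 < M ∧ c * M = q + η + c :=
    ⟨(q + η) / c + 1, by positivity, by field_simp⟩
  have hψM : q < ψ M := by
    rw [hψ]
    have hS : 0 ≤ ∑ i, w i * α i / (M + α i) :=
      Finset.sum_nonneg fun i _ => by
        have h1 := hw_pos i; have h2 := hα_pos i; positivity
    have hηS : 0 ≤ η * ∑ i, w i * α i / (M + α i) := mul_nonneg hη.le hS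
    nlinarith [hηS, hcM, hc]
  have hPM : 0 < P.eval M := by
    rw [hkey M fun j => by have := hα_pos j; positivity]
    refine mul_pos (sub_pos.mpr hψM) ?_
    rw [hDeval]
    exact Finset.prod_pos fun j _ => by have := hα_pos j; positivity
  -- sign at 0
  have hP0val : P.eval 0 < 0 := by
    have h1 : ∑ i, w i * α i * ∏ j ∈ Finset.univ.erase i, α j = ∏ j, α j := by
      calc ∑ i, w i * α i * ∏ j ∈ Finset.univ.erase i, α j
          = ∑ i, w i * ∏ j, α j := Finset.sum_congr rfl fun i _ => by
            rw [mul_assoc, Finset.mul_prod_erase Finset.univ α (Finset.mem_univ i)]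
        _ = ∏ j, α j := by rw [← Finset.sum_mul, hw_sum, one_mul]
    have h2 : P.eval 0 = -q * ∏ j, α j := by
      rw [hPeval]
      simp only [mul_zero, zero_add, zero_sub]
      rw [h1]; ring
    rw [h2]
    exact mul_neg_of_neg_of_pos (by linarith) (Finset.prod_pos fun j _ => hα_pos j)
  -- sign at the poles
  have hPα : ∀ k : Fin n, P.eval (-α k)
      = η * (w k * α k * ∏ j ∈ Finset.univ.erase k, (α j - α k)) := by
    intro k
    rw [hPeval]
    have hz : (-α k + α k : ℝ) = 0 := by ring
    have h1 : ∏ j, (-α k + α j) = 0 := Finset.prod_eq_zero (Finset.mem_univ k) hz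
    have h2 : ∑ i, (w i * α i) * ∏ j ∈ Finset.univ.erase i, (-α k + α j)
        = (w k * α k) * ∏ j ∈ Finset.univ.erase k, (α j - α k) := by
      rw [Finset.sum_eq_single k]
      · congr 1; exact Finset.prod_congr rfl fun j _ => by ring
      · intro i _ hik
        have : ∏ j ∈ Finset.univ.erase i, (-α k + α j) = 0 :=
          Finset.prod_eq_zero (Finset.mem_erase.mpr ⟨(Ne.symm hik), Finset.mem_univ k⟩) hz
        rw [this, mul_zero]
      · intro h; exact absurd (Finset.mem_univ k) h
    rw [h1, h2]; ring
  have hsignα : ∀ k : Fin n, 0 < (-1:ℝ) ^ (k:ℕ) * P.eval (-α k) := by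
    intro k
    rw [hPα k]
    have haux := aux_prod_sign α hα_mono k
    have h3 : (-1:ℝ) ^ (k:ℕ) * (η * (w k * α k * ∏ j ∈ Finset.univ.erase k, (α j - α k)))
        = (η * (w k * α k)) * ((-1:ℝ) ^ (k:ℕ) * ∏ j ∈ Finset.univ.erase k, (α j - α k)) := by
      ring
    rw [h3]
    exact mul_pos (mul_pos hη (mul_pos (hw_pos k) (hα_pos k))) haux
  -- the endpoints function
  obtain ⟨e, he0, he1, he2⟩ : ∃ e : Fin (n+2) → ℝ, e 0 = M ∧ e 1 = 0 ∧
      ∀ k : Fin n, ∀ h : (k:ℕ) + 2 < n + 2, e ⟨(k:ℕ) + 2, h⟩ = -α k := by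
    refine ⟨fun m => if hm : (m:ℕ) = 0 then M else if hm1 : (m:ℕ) = 1 then 0
      else -α ⟨(m:ℕ) - 2, by have := m.isLt; omega⟩, by simp, by simp, ?_⟩
    intro k h
    simp only []
    rw [dif_neg (by omega), dif_neg (by omega)]
    congr 1
  have hcases : ∀ m : Fin (n+2), m = 0 ∨ m = 1
      ∨ ∃ k : Fin n, m = ⟨(k:ℕ) + 2, by omega⟩ := by
    intro m
    rcases (by omega : (m:ℕ) = 0 ∨ (m:ℕ) = 1 ∨ 2 ≤ (m:ℕ)) with h | h | h
    · left; exact Fin.ext (by simp [h])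
    · right; left; exact Fin.ext (by simp [h, Fin.val_one])
    · right; right
      exact ⟨⟨(m:ℕ) - 2, by have := m.isLt; omega⟩, Fin.ext (by simp; omega)⟩
  have he_anti : StrictAnti e := by
    intro a b hab
    have hab' : (a:ℕ) < (b:ℕ) := hab
    rcases hcases a with rfl | rfl | ⟨ka, rfl⟩
    · rcases hcases b with rfl | rfl | ⟨kb, rfl⟩
      · exact absurd hab (lt_irrefl _)
      · rw [he0, he1]; exact hM_pos
      · rw [he0, he2 kb _]
        have := hα_pos kb; linarith
    · rcases hcases b with rfl | rfl | ⟨kb, rfl⟩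
      · simp [Fin.lt_def, Fin.val_one] at hab'
      · exact absurd hab (lt_irrefl _)
      · rw [he1, he2 kb _]
        have := hα_pos kb; linarith
    · rcases hcases b with rfl | rfl | ⟨kb, rfl⟩
      · simp at hab'
      · simp [Fin.val_one] at hab'
      · rw [he2 ka _, he2 kb _]
        have hk : ka < kb := by
          simp only [Fin.lt_def]
          simp at hab'; omega
        have := hα_mono hk; linarith
  have hsign : ∀ m : Fin (n+2), 0 < (-1:ℝ) ^ (m:ℕ) * P.eval (e m) := by
    intro m
    rcases hcases m with rfl | rfl | ⟨k, rfl⟩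
    · rw [he0]; simpa using hPM
    · rw [he1]; simp only [Fin.val_one, pow_one]; nlinarith
    · rw [he2 k _]
      have : ((⟨(k:ℕ) + 2, by omega⟩ : Fin (n+2)) : ℕ) = (k:ℕ) + 2 := rfl
      rw [this]
      have hpow : (-1:ℝ) ^ ((k:ℕ) + 2) = (-1:ℝ) ^ (k:ℕ) := by ring
      rw [hpow]
      exact hsignα k
  -- roots via IVT
  have hroots : ∀ i : Fin (n+1), ∃ x ∈ Set.Ioo (e i.succ) (e i.castSucc),
      P.eval x = 0 := by
    intro i
    have hlt : e i.succ < e i.castSucc := he_anti Fin.castSucc_lt_succ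
    apply aux_ivt _ (Polynomial.continuous P) hlt
    have h1 := hsign i.succ
    have h2 := hsign i.castSucc
    rw [Fin.val_succ] at h1
    rw [Fin.coe_castSucc] at h2
    have hu : (-1:ℝ)^(i:ℕ) * (-1:ℝ)^(i:ℕ) = 1 := by
      rw [← pow_add]; exact Even.neg_one_pow ⟨(i:ℕ), rfl⟩
    have hpow : (-1:ℝ)^((i:ℕ)+1) = -((-1:ℝ)^(i:ℕ)) := by rw [pow_succ]; ring
    rw [hpow] at h1
    have h1' : (-1:ℝ)^(i:ℕ) * P.eval (e i.succ) < 0 := by linarith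
    have key : ((-1:ℝ)^(i:ℕ) * P.eval (e i.succ)) * ((-1:ℝ)^(i:ℕ) * P.eval (e i.castSucc))
        = P.eval (e i.succ) * P.eval (e i.castSucc) := by
      rw [mul_mul_mul_comm, hu, one_mul]
    calc P.eval (e i.succ) * P.eval (e i.castSucc)
        = ((-1:ℝ)^(i:ℕ) * P.eval (e i.succ)) * ((-1:ℝ)^(i:ℕ) * P.eval (e i.castSucc)) :=
          key.symm
      _ < 0 := mul_neg_of_neg_of_pos h1' h2
  choose θ hθmem hθroot using hroots
  -- basic properties of θ
  have hθ_anti : StrictAnti θ := by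
    intro i j hij
    have h1 : θ j < e j.castSucc := (hθmem j).2
    have h2 : e i.succ < θ i := (hθmem i).1
    have h3 : e j.castSucc ≤ e i.succ := by
      apply he_anti.antitone
      rw [Fin.le_def, Fin.val_succ, Fin.coe_castSucc]
      exact hij
    linarith
  have hθ_ne_e : ∀ (i : Fin (n+1)) (m : Fin (n+2)), θ i ≠ e m := by
    intro i m
    rcases le_or_gt (m:ℕ) (i:ℕ) with h | h
    · have : e i.castSucc ≤ e m := he_anti.antitone (by rw [Fin.le_def]; exact h)
      exact ne_of_lt (lt_of_lt_of_le (hθmem i).2 this)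
    · have : e m ≤ e i.succ := he_anti.antitone (by rw [Fin.le_def, Fin.val_succ]; exact h)
      exact ne_of_gt (lt_of_le_of_lt this (hθmem i).1)
  have hθ_ne_pole : ∀ (i : Fin (n+1)) (j : Fin n), θ i ≠ -α j := by
    intro i j
    have h := hθ_ne_e i ⟨(j:ℕ) + 2, by omega⟩
    rwa [he2 j (by omega)] at h
  have hfacθ : ∀ i : Fin (n+1), ∀ j : Fin n, θ i + α j ≠ 0 := by
    intro i j h
    exact hθ_ne_pole i j (by linarith)
  have hdθ_ne : ∀ i : Fin (n+1), D.eval (θ i) ≠ 0 := by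
    intro i
    rw [hDeval]
    exact Finset.prod_ne_zero_iff.mpr fun j _ => hfacθ i j
  have hψθ : ∀ i : Fin (n+1), ψ (θ i) = q := by
    intro i
    have h := hkey (θ i) (hfacθ i)
    rw [hθroot i] at h
    rcases mul_eq_zero.mp h.symm with h' | h'
    · linarith [sub_eq_zero.mp h']
    · exact absurd h' (hdθ_ne i)
  -- the multiset of roots
  have hθ_inj : Function.Injective θ := hθ_anti.injective
  have hnodup : (Finset.univ.val.map θ).Nodup :=
    Multiset.Nodup.map hθ_inj Finset.univ.nodup
  have hsubset : (Finset.univ.val.map θ) ⊆ P.roots := by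
    intro x hx
    obtain ⟨i, _, rfl⟩ := Multiset.mem_map.mp hx
    exact Polynomial.mem_roots'.mpr ⟨hP_ne, hθroot i⟩
  have hcard : Multiset.card (Finset.univ.val.map θ) = n + 1 := by
    rw [Multiset.card_map]
    simp
  have heq : (Finset.univ.val.map θ) = P.roots := by
    refine Multiset.eq_of_le_of_card_le ((Multiset.le_iff_subset hnodup).mpr hsubset) ?_
    rw [hcard]
    exact (Polynomial.card_roots' P).trans_eq hP_deg
  -- the solution set
  have hset : {l : ℝ | (∀ j, l ≠ -α j) ∧ ψ l = q} = Set.range θ := by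
    ext l
    constructor
    · rintro ⟨hpole, hval⟩
      have hfac : ∀ j, l + α j ≠ 0 := fun j h => hpole j (by linarith)
      have hroot : P.eval l = 0 := by
        rw [hkey l hfac, hval]; ring
      have hmem : l ∈ P.roots := Polynomial.mem_roots'.mpr ⟨hP_ne, hroot⟩
      rw [← heq] at hmem
      obtain ⟨i, _, hi⟩ := Multiset.mem_map.mp hmem
      exact ⟨i, hi⟩
    · rintro ⟨i, rfl⟩
      exact ⟨hθ_ne_pole i, hψθ i⟩
  -- simple roots
  have hmult : ∀ i : Fin (n+1), Polynomial.rootMultiplicity (θ i) P = 1 := by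
    intro i
    rw [← Polynomial.count_roots, ← heq]
    exact Multiset.count_eq_one_of_mem hnodup
      (Multiset.mem_map.mpr ⟨i, Finset.mem_univ i, rfl⟩)
  have hU_open : IsOpen {l : ℝ | D.eval l ≠ 0} :=
    isOpen_compl_singleton.preimage (Polynomial.continuous D)
  have hψ_eqF : ∀ l : ℝ, D.eval l ≠ 0 → ψ l = P.eval l / D.eval l + q := by
    intro l hl
    have hfac : ∀ j, l + α j ≠ 0 := by
      rw [hDeval] at hl
      exact fun j => Finset.prod_ne_zero_iff.mp hl j (Finset.mem_univ j)
    rw [hkey l hfac, mul_div_cancel_right₀ _ hl]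
    ring
  have hderiv : ∀ i : Fin (n+1), deriv ψ (θ i) ≠ 0 := by
    intro i
    obtain ⟨Q, hPQ, hndvd⟩ :=
      P.exists_eq_pow_rootMultiplicity_mul_and_not_dvd hP_ne (θ i)
    rw [hmult i, pow_one] at hPQ
    have hQ0 : Q.eval (θ i) ≠ 0 := fun h =>
      hndvd (Polynomial.dvd_iff_isRoot.mpr h)
    have hPd : P.derivative.eval (θ i) = Q.eval (θ i) := by
      rw [hPQ, Polynomial.derivative_mul]
      simp
    have hF : HasDerivAt (fun l => P.eval l / D.eval l + q)
        (Q.eval (θ i) / D.eval (θ i)) (θ i) := by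
      have h1 := (P.hasDerivAt (θ i)).div (D.hasDerivAt (θ i)) (hdθ_ne i)
      have h2 := h1.add_const q
      rw [hPd, hθroot i, zero_mul, sub_zero, sq, mul_div_mul_right _ _ (hdθ_ne i)] at h2
      exact h2
    have hEE : ψ =ᶠ[nhds (θ i)] fun l => P.eval l / D.eval l + q :=
      Filter.eventuallyEq_of_mem (hU_open.mem_nhds (hdθ_ne i)) fun l hl => hψ_eqF l hl
    rw [hEE.deriv_eq, hF.deriv]
    exact div_ne_zero hQ0 (hdθ_ne i)
  -- conclusion
  refine ⟨θ, hθ_anti, hset, hderiv, ?_, ?_, ?_, ?_⟩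
  · have h := (hθmem 0).1
    have h0 : (0 : Fin (n+1)).succ = (1 : Fin (n+2)) := by
      apply Fin.ext; simp [Fin.val_one]
    rwa [h0, he1] at h
  · have h := (hθmem 1).2
    have h1 : ((1 : Fin (n+1)).castSucc) = (1 : Fin (n+2)) := by
      apply Fin.ext; simp [Fin.val_one', Fin.val_one]; omega
    rwa [h1, he1] at h
  · intro i
    have h := (hθmem i.succ).1
    have hs : (i.succ).succ = (⟨(i:ℕ) + 2, by omega⟩ : Fin (n+2)) := by
      apply Fin.ext; simp
    rwa [hs, he2 i (by omega)] at h
  · intro i hi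
    have h := (hθmem ⟨(i:ℕ) + 2, by omega⟩).2
    have hs : ((⟨(i:ℕ) + 2, by omega⟩ : Fin (n+1)).castSucc)
        = (⟨(i:ℕ) + 2, by omega⟩ : Fin (n+2)) := by
      apply Fin.ext; simp
    rwa [hs, he2 i (by omega)] at h
end
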